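/- arXiv:1902.09512 — 13 statements merged into one kernel-verified Lean document; each statement's English description precedes it below -/
import Mathlib

section
/- Let N ≥ 1 and K ≥ 1 be integers, and let m = (m_1, …, m_N) and m' = (m'_1, …, m'_N) be storage vectors with 0 ≤ m_n ≤ 1 and 0 ≤ m'_n ≤ 1 for all n, such that ∑_{n=1}^N m_n = ∑_{n=1}^N m'_n ≥ 1. Then the placement linear programs P(m) and P(m') have the same minimum objective value: D*(m) = D*(m'). In particular, D*(m) = D*(m̄), where m̄ is the homogeneous storage vector with m̄_n = (1/N)·∑_{k=1}^N m_k for every n. -/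
open Finset

/-- Optimal normalized PIR download cost for `ℓ` replicated databases and `K` messages:
`D̃_ℓ = ∑_{i=0}^{K-1} (1/ℓ)^i`. -/
noncomputable def Dt (K ℓ : ℕ) : ℝ := ∑ i ∈ Finset.range K, (1 / (ℓ : ℝ)) ^ i

/-- Feasibility for the placement linear program `P(m)`: the variables `α_S` are indexed by
nonempty subsets `S ⊆ [N]`; they are nonnegative, sum to `1`, and respect the per-database
storage constraints. -/
def PFeasible {N : ℕ} (m : Fin N → ℝ) (α : Finset (Fin N) → ℝ) : Prop :=
  (∀ S : Finset (Fin N), S.Nonempty → 0 ≤ α S) ∧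
  (∑ S ∈ Finset.univ.filter (fun S : Finset (Fin N) => S.Nonempty), α S) = 1 ∧
  ∀ n : Fin N, (∑ S ∈ Finset.univ.filter (fun S : Finset (Fin N) => n ∈ S), α S) ≤ m n

/-- Objective value of the placement LP: `∑_S α_S · D̃_{|S|}`. -/
noncomputable def PObj (N K : ℕ) (α : Finset (Fin N) → ℝ) : ℝ :=
  ∑ S ∈ Finset.univ.filter (fun S : Finset (Fin N) => S.Nonempty), α S * Dt K S.card

/-- `D*(m)`: the minimum objective value of the placement LP `P(m)`. -/
noncomputable def Dstar (N K : ℕ) (m : Fin N → ℝ) : ℝ :=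
  sInf {d : ℝ | ∃ α : Finset (Fin N) → ℝ, PFeasible m α ∧ PObj N K α = d}

lemma dt_pow (K ℓ : ℕ) (hl : 1 ≤ ℓ) : Dt K ℓ = ∑ i ∈ Finset.range K, ((ℓ:ℝ)) ^ (-(i:ℤ)) := by
  unfold Dt
  refine Finset.sum_congr rfl fun i _ => ?_
  rw [zpow_neg, zpow_natCast, one_div, inv_pow]

lemma dt_anti (K ℓ : ℕ) (hl : 1 ≤ ℓ) : Dt K (ℓ+1) ≤ Dt K ℓ := by
  unfold Dt
  refine Finset.sum_le_sum fun i _ => ?_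
  have h1 : (0:ℝ) < (ℓ:ℝ) := by exact_mod_cast hl
  have : (1:ℝ) / ((ℓ:ℝ)+1) ≤ 1 / (ℓ:ℝ) := by
    apply one_div_le_one_div_of_le h1; linarith
  have h0 : (0:ℝ) ≤ 1 / ((ℓ:ℝ)+1) := by positivity
  calc (1 / ((ℓ:ℕ)+1 : ℕ) : ℝ) ^ i = (1 / ((ℓ:ℝ)+1)) ^ i := by push_cast; ring_nf
    _ ≤ (1 / (ℓ:ℝ)) ^ i := pow_le_pow_left₀ h0 this i
  
lemma dt_conv (K ℓ : ℕ) (hl : 1 ≤ ℓ) :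
    Dt K (ℓ+1) - Dt K ℓ ≤ Dt K (ℓ+2) - Dt K (ℓ+1) := by
  have key : 2 * Dt K (ℓ+1) ≤ Dt K ℓ + Dt K (ℓ+2) := by
    rw [dt_pow K ℓ hl, dt_pow K (ℓ+1) (by omega), dt_pow K (ℓ+2) (by omega),
      ← Finset.sum_add_distrib, Finset.mul_sum]
    refine Finset.sum_le_sum fun i _ => ?_
    have hc := convexOn_zpow (𝕜 := ℝ) (-(i:ℤ))
    have hℓ : ((ℓ:ℝ)) ∈ Set.Ioi (0:ℝ) := by
      simp only [Set.mem_Ioi]; exact_mod_cast hl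
    have hℓ2 : ((ℓ:ℝ)+2) ∈ Set.Ioi (0:ℝ) := by
      simp only [Set.mem_Ioi]; positivity
    have h := hc.2 hℓ hℓ2 (by norm_num : (0:ℝ) ≤ 1/2) (by norm_num : (0:ℝ) ≤ 1/2) (by norm_num)
    simp only [smul_eq_mul] at h
    have heq : (1/2 : ℝ) * (ℓ:ℝ) + (1/2) * ((ℓ:ℝ)+2) = ((ℓ:ℕ)+1 : ℕ) := by push_cast; ring
    rw [heq] at h
    push_cast
    push_cast at h
    linarith
  linarith

lemma dt_diff_mono (K : ℕ) : ∀ a b : ℕ, 1 ≤ a → a ≤ b →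
    Dt K (a+1) - Dt K a ≤ Dt K (b+1) - Dt K b := by
  intro a b ha hab
  induction b with
  | zero => omega
  | succ c ih =>
    rcases Nat.lt_or_ge a (c+1) with h | h
    · have hc : 1 ≤ c := by omega
      have := dt_conv K c hc
      have := ih (by omega)
      have hcc : c + 1 + 1 = c + 2 := by omega
      rw [hcc]
      linarith
    · have : a = c + 1 := by omega
      rw [this]

lemma dt_support (K t : ℕ) (ht : 1 ≤ t) : ∀ ℓ : ℕ, 1 ≤ ℓ →
    Dt K t + ((ℓ:ℝ) - t) * (Dt K (t+1) - Dt K t) ≤ Dt K ℓ := by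
  have up : ∀ j : ℕ, Dt K t + (((t+j:ℕ):ℝ) - t) * (Dt K (t+1) - Dt K t) ≤ Dt K (t+j) := by
    intro j
    induction j with
    | zero => simp
    | succ c ih =>
      have hd : Dt K (t+1) - Dt K t ≤ Dt K (t+c+1) - Dt K (t+c) :=
        dt_diff_mono K t (t+c) ht (by omega)
      have h1 : t + (c+1) = (t + c) + 1 := by omega
      rw [h1]
      push_cast
      push_cast at ih
      linarith
  have down : ∀ j : ℕ, ∀ ℓ : ℕ, ℓ + j = t → 1 ≤ ℓ →
      Dt K t + ((ℓ:ℝ) - t) * (Dt K (t+1) - Dt K t) ≤ Dt K ℓ := by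
    intro j
    induction j with
    | zero => intro ℓ h _; have : ℓ = t := by omega
              subst this; simp
    | succ c ih =>
      intro ℓ h hℓ
      have hIH := ih (ℓ+1) (by omega) (by omega)
      have hd : Dt K (ℓ+1) - Dt K ℓ ≤ Dt K (t+1) - Dt K t :=
        dt_diff_mono K ℓ t hℓ (by omega)
      push_cast at hIH ⊢
      linarith
  intro ℓ hℓ
  rcases Nat.lt_or_ge ℓ t with h | h
  · exact down (t - ℓ) ℓ (by omega) hℓ
  · have : ℓ = t + (ℓ - t) := by omega
    rw [this]; exact up (ℓ - t)

def PackOut (N t : ℕ) (m : Fin N → ℝ) (α : Finset (Fin N) → ℝ) : Prop :=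
  (∀ S, 0 ≤ α S) ∧
  (∀ S : Finset (Fin N), S.card ≠ t → S.card ≠ t+1 → α S = 0) ∧
  (∀ n, ∑ S ∈ Finset.univ.filter (fun S => n ∈ S), α S = m n) ∧
  (∑ S ∈ Finset.univ.filter (fun S : Finset (Fin N) => S.card = t), α S
      = (t:ℝ) + 1 - ∑ n, m n) ∧
  (∑ S ∈ Finset.univ.filter (fun S : Finset (Fin N) => S.card = t+1), α S
      = ∑ n, m n - (t:ℝ))

lemma pack_combine {N t : ℕ} {θ : ℝ} (h0 : 0 ≤ θ) (h1 : θ ≤ 1)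
    {mp mm m : Fin N → ℝ} {αp αm : Finset (Fin N) → ℝ}
    (hp : PackOut N t mp αp) (hq : PackOut N t mm αm)
    (hpt : ∀ n, m n = θ * mp n + (1-θ) * mm n) :
    PackOut N t m (fun S => θ * αp S + (1-θ) * αm S) := by
  obtain ⟨hp0, hp1, hp2, hp3, hp4⟩ := hp
  obtain ⟨hq0, hq1, hq2, hq3, hq4⟩ := hq
  have hsum : ∑ n, m n = θ * (∑ n, mp n) + (1-θ) * (∑ n, mm n) := by
    rw [Finset.mul_sum, Finset.mul_sum, ← Finset.sum_add_distrib]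
    exact Finset.sum_congr rfl fun n _ => hpt n
  refine ⟨fun S => ?_, fun S hS hS' => ?_, fun n => ?_, ?_, ?_⟩
  · have := hp0 S; have := hq0 S; dsimp only; nlinarith
  · dsimp only; rw [hp1 S hS hS', hq1 S hS hS']; ring
  · dsimp only; rw [Finset.sum_add_distrib, ← Finset.mul_sum, ← Finset.mul_sum, hp2 n, hq2 n,
      ← hpt n]
  · dsimp only; rw [Finset.sum_add_distrib, ← Finset.mul_sum, ← Finset.mul_sum, hp3, hq3, hsum]
    ring
  · dsimp only; rw [Finset.sum_add_distrib, ← Finset.mul_sum, ← Finset.mul_sum, hp4, hq4, hsum]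
    ring

lemma pack_base {N t : ℕ} (ht : 1 ≤ t) (m : Fin N → ℝ)
    (hbin : ∀ n, m n = 0 ∨ m n = 1)
    (hlo : (t:ℝ) ≤ ∑ n, m n) (hhi : ∑ n, m n ≤ (t:ℝ) + 1) :
    ∃ α, PackOut N t m α := by
  classical
  set S₀ : Finset (Fin N) := Finset.univ.filter (fun n => m n = 1) with hS₀
  have hMsum : ∑ n, m n = (S₀.card : ℝ) := by
    rw [← Finset.sum_filter_add_sum_filter_not Finset.univ (fun n => m n = 1) m]
    have h1 : ∑ n ∈ Finset.univ.filter (fun n => m n = 1), m n = (S₀.card : ℝ) := by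
      rw [Finset.sum_congr rfl (fun n hn => (Finset.mem_filter.mp hn).2)]
      simp [hS₀]
    have h2 : ∑ n ∈ Finset.univ.filter (fun n => ¬ m n = 1), m n = 0 := by
      refine Finset.sum_eq_zero fun n hn => ?_
      rcases hbin n with h | h
      · exact h
      · exact absurd h (Finset.mem_filter.mp hn).2
    rw [h1, h2, add_zero]
  have hcard : S₀.card = t ∨ S₀.card = t + 1 := by
    rw [hMsum] at hlo hhi
    have h1 : t ≤ S₀.card := by exact_mod_cast hlo
    have h2 : (S₀.card : ℝ) ≤ (t:ℝ) + 1 := hhi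
    have h2' : S₀.card ≤ t + 1 := by exact_mod_cast h2
    omega
  refine ⟨fun S => if S = S₀ then 1 else 0, fun S => ?_, fun S hS hS' => ?_,
    fun n => ?_, ?_, ?_⟩
  · positivity
  · simp only [ite_eq_right_iff]
    intro h; subst h; omega
  · rw [Finset.sum_ite_eq' (Finset.univ.filter (fun S => n ∈ S)) S₀ (fun _ => 1)]
    by_cases hn : n ∈ S₀
    · have : m n = 1 := (Finset.mem_filter.mp hn).2
      simp [hn, this]
    · have : m n = 0 := by
        rcases hbin n with h | h
        · exact h
        · exact absurd (Finset.mem_filter.mpr ⟨Finset.mem_univ n, h⟩) hn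
      simp [hn, this]
  · rw [Finset.sum_ite_eq' (Finset.univ.filter (fun S : Finset (Fin N) => S.card = t)) S₀
      (fun _ => 1), hMsum]
    rcases hcard with h | h
    · simp [h]
    · have : S₀ ∉ Finset.univ.filter (fun S : Finset (Fin N) => S.card = t) := by
        simp [h]
      rw [if_neg this, h]; push_cast; ring
  · rw [Finset.sum_ite_eq' (Finset.univ.filter (fun S : Finset (Fin N) => S.card = t+1)) S₀
      (fun _ => 1), hMsum]
    rcases hcard with h | h
    · have : S₀ ∉ Finset.univ.filter (fun S : Finset (Fin N) => S.card = t+1) := by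
        simp [h]
      rw [if_neg this, h]; push_cast; ring
    · simp [h]

lemma binsum {N : ℕ} (m : Fin N → ℝ) (s : Finset (Fin N))
    (h : ∀ n ∈ s, m n = 0 ∨ m n = 1) : ∃ k : ℕ, ∑ n ∈ s, m n = k := by
  classical
  induction s using Finset.induction_on with
  | empty => exact ⟨0, by simp⟩
  | @insert a s' hx ih =>
    obtain ⟨k, hk⟩ := ih (fun n hn => h n (Finset.mem_insert_of_mem hn))
    rcases h a (Finset.mem_insert_self a s') with h0 | h1
    · exact ⟨k, by rw [Finset.sum_insert hx, h0, hk, zero_add]⟩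
    · exact ⟨k+1, by rw [Finset.sum_insert hx, h1, hk]; push_cast; ring⟩

lemma pack (F : ℕ) : ∀ (N t : ℕ), 1 ≤ t → ∀ (Fr : Finset (Fin N)) (m : Fin N → ℝ),
    Fr.card ≤ F →
    (∀ n, 0 ≤ m n ∧ m n ≤ 1) →
    (∀ n, n ∉ Fr → m n = 0 ∨ m n = 1) →
    (t:ℝ) ≤ ∑ n, m n → ∑ n, m n ≤ (t:ℝ) + 1 →
    ∃ α, PackOut N t m α := by
  induction F with
  | zero =>
    intro N t ht Fr m hcard hm hbin hlo hhi
    have he : Fr = ∅ := Finset.card_eq_zero.mp (Nat.le_zero.mp hcard)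
    exact pack_base ht m (fun n => hbin n (by simp [he])) hlo hhi
  | succ F ih =>
    intro N t ht Fr m hcard hm hbin hlo hhi
    rcases Finset.eq_empty_or_nonempty Fr with he | ⟨n1, hn1⟩
    · exact pack_base ht m (fun n => hbin n (by simp [he])) hlo hhi
    by_cases hb1 : m n1 = 0 ∨ m n1 = 1
    · refine ih N t ht (Fr.erase n1) m ?_ hm ?_ hlo hhi
      · have := Finset.card_erase_of_mem hn1; omega
      · intro n hn
        by_cases h : n = n1
        · subst h; exact hb1
        · exact hbin n (fun hmem => hn (Finset.mem_erase.mpr ⟨h, hmem⟩))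
    push_neg at hb1
    have hθ0 : 0 < m n1 := lt_of_le_of_ne (hm n1).1 (Ne.symm hb1.1)
    have hθ1 : m n1 < 1 := lt_of_le_of_ne (hm n1).2 hb1.2
    by_cases h2 : ∃ n2 ∈ Fr.erase n1, ¬(m n2 = 0 ∨ m n2 = 1)
    · -- two fractional coordinates: transfer mass between them
      obtain ⟨n2, hn2e, hb2⟩ := h2
      have hne : n2 ≠ n1 := (Finset.mem_erase.mp hn2e).1
      have hn2 : n2 ∈ Fr := (Finset.mem_erase.mp hn2e).2
      push_neg at hb2
      have h20 : 0 < m n2 := lt_of_le_of_ne (hm n2).1 (Ne.symm hb2.1)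
      have h21 : m n2 < 1 := lt_of_le_of_ne (hm n2).2 hb2.2
      set ep : ℝ := min (1 - m n1) (m n2) with hep
      set em : ℝ := min (m n1) (1 - m n2) with hem
      have hep0 : 0 < ep := lt_min (by linarith) h20
      have hem0 : 0 < em := lt_min hθ0 (by linarith)
      have hep1 : ep ≤ 1 - m n1 := min_le_left _ _
      have hep2 : ep ≤ m n2 := min_le_right _ _
      have hem1 : em ≤ m n1 := min_le_left _ _
      have hem2 : em ≤ 1 - m n2 := min_le_right _ _
      set mp : Fin N → ℝ :=
        Function.update (Function.update m n1 (m n1 + ep)) n2 (m n2 - ep) with hmp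
      set mm : Fin N → ℝ :=
        Function.update (Function.update m n1 (m n1 - em)) n2 (m n2 + em) with hmm
      have hmpn1 : mp n1 = m n1 + ep := by
        simp [hmp, Function.update_of_ne (Ne.symm hne), Function.update_self]
      have hmpn2 : mp n2 = m n2 - ep := by simp [hmp]
      have hmmn1 : mm n1 = m n1 - em := by
        simp [hmm, Function.update_of_ne (Ne.symm hne), Function.update_self]
      have hmmn2 : mm n2 = m n2 + em := by simp [hmm]
      have hmpo : ∀ n, n ≠ n1 → n ≠ n2 → mp n = m n := by
        intro n h1 h2; simp [hmp, Function.update_of_ne h2, Function.update_of_ne h1]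
      have hmmo : ∀ n, n ≠ n1 → n ≠ n2 → mm n = m n := by
        intro n h1 h2; simp [hmm, Function.update_of_ne h2, Function.update_of_ne h1]
      have hn2mem : n2 ∈ Finset.univ.erase n1 :=
        Finset.mem_erase.mpr ⟨hne, Finset.mem_univ n2⟩
      have decomp : ∀ f : Fin N → ℝ,
          ∑ n, f n = f n1 + (f n2 + ∑ n ∈ (Finset.univ.erase n1).erase n2, f n) := by
        intro f
        rw [Finset.add_sum_erase _ f hn2mem, Finset.add_sum_erase _ f (Finset.mem_univ n1)]
      have hrest : ∀ (f : Fin N → ℝ), (∀ n, n ≠ n1 → n ≠ n2 → f n = m n) →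
          ∑ n ∈ (Finset.univ.erase n1).erase n2, f n
            = ∑ n ∈ (Finset.univ.erase n1).erase n2, m n := by
        intro f hf
        refine Finset.sum_congr rfl fun n hn => ?_
        have h1 := (Finset.mem_erase.mp (Finset.mem_erase.mp hn).2).1
        have h2 := (Finset.mem_erase.mp hn).1
        exact hf n h1 h2
      -- sums are preserved
      have hsump : ∑ n, mp n = ∑ n, m n := by
        rw [decomp mp, decomp m, hrest mp hmpo, hmpn1, hmpn2]; ring
      have hsumm : ∑ n, mm n = ∑ n, m n := by
        rw [decomp mm, decomp m, hrest mm hmmo, hmmn1, hmmn2]; ring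
      -- bounds
      have hmp01 : ∀ n, 0 ≤ mp n ∧ mp n ≤ 1 := by
        intro n
        by_cases e1 : n = n1
        · rw [e1, hmpn1]; constructor <;> linarith
        by_cases e2 : n = n2
        · rw [e2, hmpn2]; constructor <;> linarith
        · rw [hmpo n e1 e2]; exact hm n
      have hmm01 : ∀ n, 0 ≤ mm n ∧ mm n ≤ 1 := by
        intro n
        by_cases e1 : n = n1
        · rw [e1, hmmn1]; constructor <;> linarith
        by_cases e2 : n = n2
        · rw [e2, hmmn2]; constructor <;> linarith
        · rw [hmmo n e1 e2]; exact hm n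
      -- the coordinate that became integral
      have hpc : ∃ c ∈ Fr, mp c = 0 ∨ mp c = 1 := by
        rcases min_cases (1 - m n1) (m n2) with ⟨hmin, _⟩ | ⟨hmin, _⟩
        · have h' : ep = 1 - m n1 := hep.trans hmin
          exact ⟨n1, hn1, Or.inr (by rw [hmpn1, h']; ring)⟩
        · have h' : ep = m n2 := hep.trans hmin
          exact ⟨n2, hn2, Or.inl (by rw [hmpn2, h']; ring)⟩
      have hmc : ∃ c ∈ Fr, mm c = 0 ∨ mm c = 1 := by
        rcases min_cases (m n1) (1 - m n2) with ⟨hmin, _⟩ | ⟨hmin, _⟩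
        · have h' : em = m n1 := hem.trans hmin
          exact ⟨n1, hn1, Or.inl (by rw [hmmn1, h']; ring)⟩
        · have h' : em = 1 - m n2 := hem.trans hmin
          exact ⟨n2, hn2, Or.inr (by rw [hmmn2, h']; ring)⟩
      obtain ⟨cp, hcp, hcpbin⟩ := hpc
      obtain ⟨cm, hcm, hcmbin⟩ := hmc
      -- apply the induction hypothesis to mp and mm
      have hap : ∃ α, PackOut N t mp α := by
        refine ih N t ht (Fr.erase cp) mp ?_ hmp01 ?_ (by rw [hsump]; exact hlo)
          (by rw [hsump]; exact hhi)
        · have := Finset.card_erase_of_mem hcp; omega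
        · intro n hn
          by_cases h : n = cp
          · rw [h]; exact hcpbin
          · have hnFr : n ∉ Fr := fun hmem => hn (Finset.mem_erase.mpr ⟨h, hmem⟩)
            have e1 : n ≠ n1 := fun e => hnFr (e ▸ hn1)
            have e2 : n ≠ n2 := fun e => hnFr (e ▸ hn2)
            rw [hmpo n e1 e2]; exact hbin n hnFr
      have ham : ∃ α, PackOut N t mm α := by
        refine ih N t ht (Fr.erase cm) mm ?_ hmm01 ?_ (by rw [hsumm]; exact hlo)
          (by rw [hsumm]; exact hhi)
        · have := Finset.card_erase_of_mem hcm; omega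
        · intro n hn
          by_cases h : n = cm
          · rw [h]; exact hcmbin
          · have hnFr : n ∉ Fr := fun hmem => hn (Finset.mem_erase.mpr ⟨h, hmem⟩)
            have e1 : n ≠ n1 := fun e => hnFr (e ▸ hn1)
            have e2 : n ≠ n2 := fun e => hnFr (e ▸ hn2)
            rw [hmmo n e1 e2]; exact hbin n hnFr
      obtain ⟨αp, hαp⟩ := hap
      obtain ⟨αm, hαm⟩ := ham
      have hsum_pos : 0 < ep + em := by linarith
      have h0 : (0:ℝ) ≤ em / (ep + em) := by positivity
      have h1 : em / (ep + em) ≤ 1 := by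
        rw [div_le_one hsum_pos]; linarith
      refine ⟨_, pack_combine h0 h1 hαp hαm ?_⟩
      intro n
      by_cases e1 : n = n1
      · rw [e1, hmpn1, hmmn1]; field_simp; ring
      by_cases e2 : n = n2
      · rw [e2, hmpn2, hmmn2]; field_simp; ring
      · rw [hmpo n e1 e2, hmmo n e1 e2]; ring
    · -- exactly one fractional coordinate n1
      push_neg at h2
      have hbin' : ∀ n, n ≠ n1 → m n = 0 ∨ m n = 1 := by
        intro n hn
        by_cases h : n ∈ Fr
        · exact h2 n (Finset.mem_erase.mpr ⟨hn, h⟩)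
        · exact hbin n h
      obtain ⟨k, hk⟩ := binsum m (Finset.univ.erase n1)
        (fun n hn => hbin' n (Finset.mem_erase.mp hn).1)
      have hsplit : ∑ n, m n = m n1 + (k:ℝ) := by
        rw [← hk, Finset.add_sum_erase _ m (Finset.mem_univ n1)]
      have htk : t ≤ k := by
        have h' : (t:ℝ) < (k:ℝ) + 1 := by rw [hsplit] at hlo; linarith
        have h'' : t < k + 1 := by exact_mod_cast h'
        omega
      have hkt : k ≤ t := by
        have h' : (k:ℝ) < (t:ℝ) + 1 := by rw [hsplit] at hhi; linarith
        have h'' : k < t + 1 := by exact_mod_cast h'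
        omega
      have htkR : (t:ℝ) ≤ (k:ℝ) := by exact_mod_cast htk
      have hktR : (k:ℝ) ≤ (t:ℝ) := by exact_mod_cast hkt
      set mp : Fin N → ℝ := Function.update m n1 1 with hmp
      set mm : Fin N → ℝ := Function.update m n1 0 with hmm
      have hdeco : ∀ f : Fin N → ℝ,
          ∑ n, f n = f n1 + ∑ n ∈ Finset.univ.erase n1, f n :=
        fun f => (Finset.add_sum_erase _ f (Finset.mem_univ n1)).symm
      have herase : ∀ (f : Fin N → ℝ), (∀ n, n ≠ n1 → f n = m n) →
          ∑ n ∈ Finset.univ.erase n1, f n = (k:ℝ) := by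
        intro f hf
        rw [← hk]
        exact Finset.sum_congr rfl fun n hn => hf n (Finset.mem_erase.mp hn).1
      have hsump : ∑ n, mp n = (k:ℝ) + 1 := by
        rw [hdeco mp, herase mp (fun n hn => Function.update_of_ne hn _ _)]
        rw [hmp, Function.update_self]; ring
      have hsumm : ∑ n, mm n = (k:ℝ) := by
        rw [hdeco mm, herase mm (fun n hn => Function.update_of_ne hn _ _)]
        rw [hmm, Function.update_self]; ring
      have hbp : ∀ n, mp n = 0 ∨ mp n = 1 := by
        intro n
        by_cases h : n = n1
        · rw [h, hmp, Function.update_self]; right; rfl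
        · rw [hmp, Function.update_of_ne h]; exact hbin' n h
      have hbm : ∀ n, mm n = 0 ∨ mm n = 1 := by
        intro n
        by_cases h : n = n1
        · rw [h, hmm, Function.update_self]; left; rfl
        · rw [hmm, Function.update_of_ne h]; exact hbin' n h
      obtain ⟨αp, hαp⟩ := pack_base ht mp hbp
        (by rw [hsump]; linarith) (by rw [hsump]; linarith)
      obtain ⟨αm, hαm⟩ := pack_base ht mm hbm
        (by rw [hsumm]; linarith) (by rw [hsumm]; linarith)
      refine ⟨_, pack_combine (le_of_lt hθ0) (le_of_lt hθ1) hαp hαm ?_⟩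
      intro n
      by_cases h : n = n1
      · rw [h, hmp, hmm, Function.update_self, Function.update_self]; ring
      · rw [hmp, hmm, Function.update_of_ne h, Function.update_of_ne h]; ring

lemma dstar_eq (N K : ℕ) (m : Fin N → ℝ)
    (hm : ∀ n, 0 ≤ m n ∧ m n ≤ 1) (hge : 1 ≤ ∑ n, m n) :
    Dstar N K m = ((⌊∑ n, m n⌋₊ : ℝ) + 1 - ∑ n, m n) * Dt K ⌊∑ n, m n⌋₊
      + (∑ n, m n - (⌊∑ n, m n⌋₊ : ℝ)) * Dt K (⌊∑ n, m n⌋₊ + 1) := by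
  classical
  set M : ℝ := ∑ n, m n with hM
  set t : ℕ := ⌊M⌋₊ with htdef
  have hM0 : (0:ℝ) ≤ M := by linarith
  have ht1 : 1 ≤ t := Nat.le_floor (by exact_mod_cast hge)
  have hlo : (t:ℝ) ≤ M := Nat.floor_le hM0
  have hhi : M ≤ (t:ℝ) + 1 := (Nat.lt_floor_add_one M).le
  set g : ℝ := ((t:ℝ) + 1 - M) * Dt K t + (M - (t:ℝ)) * Dt K (t+1) with hg
  set P : Finset (Finset (Fin N)) :=
    Finset.univ.filter (fun S : Finset (Fin N) => S.Nonempty) with hP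
  set A : Finset (Finset (Fin N)) :=
    Finset.univ.filter (fun S : Finset (Fin N) => S.card = t) with hA
  set B : Finset (Finset (Fin N)) :=
    Finset.univ.filter (fun S : Finset (Fin N) => S.card = t+1) with hB
  have hAP : A ⊆ P := by
    intro S hS
    have := (Finset.mem_filter.mp hS).2
    exact Finset.mem_filter.mpr ⟨Finset.mem_univ S, Finset.card_pos.mp (by omega)⟩
  have hBP : B ⊆ P := by
    intro S hS
    have := (Finset.mem_filter.mp hS).2
    exact Finset.mem_filter.mpr ⟨Finset.mem_univ S, Finset.card_pos.mp (by omega)⟩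
  have hdisj : Disjoint A B := by
    rw [Finset.disjoint_left]
    intro S hSA hSB
    have h1 := (Finset.mem_filter.mp hSA).2
    have h2 := (Finset.mem_filter.mp hSB).2
    omega
  -- membership: the packing scheme achieves g
  have hmem : g ∈ {d : ℝ | ∃ α : Finset (Fin N) → ℝ, PFeasible m α ∧ PObj N K α = d} := by
    obtain ⟨α, h0, h1, h2, h3, h4⟩ :=
      pack (Finset.univ : Finset (Fin N)).card N t ht1 Finset.univ m le_rfl hm
        (fun n hn => absurd (Finset.mem_univ n) hn) hlo hhi
    have hzero : ∀ S ∈ P, S ∉ A ∪ B → α S = 0 := by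
      intro S _ hS
      rw [Finset.mem_union] at hS
      push_neg at hS
      refine h1 S ?_ ?_
      · intro h; exact hS.1 (Finset.mem_filter.mpr ⟨Finset.mem_univ S, h⟩)
      · intro h; exact hS.2 (Finset.mem_filter.mpr ⟨Finset.mem_univ S, h⟩)
    have hsub : A ∪ B ⊆ P := Finset.union_subset hAP hBP
    refine ⟨α, ⟨fun S _ => h0 S, ?_, fun n => (h2 n).le⟩, ?_⟩
    · rw [← Finset.sum_subset hsub hzero, Finset.sum_union hdisj, h3, h4]
      ring
    · unfold PObj
      rw [← hP]
      rw [← Finset.sum_subset hsub (fun S hS1 hS2 => by rw [hzero S hS1 hS2, zero_mul]),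
        Finset.sum_union hdisj]
      have e1 : ∑ S ∈ A, α S * Dt K S.card = (∑ S ∈ A, α S) * Dt K t := by
        rw [Finset.sum_mul]
        exact Finset.sum_congr rfl fun S hS => by
          rw [(Finset.mem_filter.mp hS).2]
      have e2 : ∑ S ∈ B, α S * Dt K S.card = (∑ S ∈ B, α S) * Dt K (t+1) := by
        rw [Finset.sum_mul]
        exact Finset.sum_congr rfl fun S hS => by
          rw [(Finset.mem_filter.mp hS).2]
      rw [e1, e2, h3, h4]
  -- lower bound
  have hlb : ∀ d ∈ {d : ℝ | ∃ α : Finset (Fin N) → ℝ, PFeasible m α ∧ PObj N K α = d},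
      g ≤ d := by
    rintro d ⟨α, ⟨hα0, hα1, hα2⟩, rfl⟩
    set dd : ℝ := Dt K (t+1) - Dt K t with hdd
    have hddle : dd ≤ 0 := by
      have := dt_anti K t ht1; rw [hdd]; linarith
    -- total size usage
    have husage : ∑ S ∈ P, α S * (S.card : ℝ) ≤ M := by
      have swap : ∑ n, ∑ S ∈ Finset.univ.filter (fun S : Finset (Fin N) => n ∈ S), α S
          = ∑ S ∈ (Finset.univ : Finset (Finset (Fin N))), α S * (S.card : ℝ) := by
        have e : ∀ n : Fin N,
            ∑ S ∈ Finset.univ.filter (fun S : Finset (Fin N) => n ∈ S), α S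
            = ∑ S ∈ (Finset.univ : Finset (Finset (Fin N))),
                (if n ∈ S then α S else 0) := by
          intro n; rw [Finset.sum_filter]
        rw [Finset.sum_congr rfl (fun n _ => e n), Finset.sum_comm]
        refine Finset.sum_congr rfl fun S _ => ?_
        rw [Finset.sum_ite_mem, Finset.univ_inter, Finset.sum_const, nsmul_eq_mul,
          mul_comm]
      have huniv : ∑ S ∈ (Finset.univ : Finset (Finset (Fin N))), α S * (S.card : ℝ)
          = ∑ S ∈ P, α S * (S.card : ℝ) := by
        refine (Finset.sum_subset (Finset.subset_univ P) ?_).symm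
        intro S _ hS
        have : S = ∅ := by
          by_contra h
          exact hS (Finset.mem_filter.mpr ⟨Finset.mem_univ S,
            Finset.nonempty_iff_ne_empty.mpr h⟩)
        rw [this]; simp
      rw [← huniv, ← swap, hM]
      exact Finset.sum_le_sum fun n _ => hα2 n
    have hterm : ∀ S ∈ P, α S * (Dt K t + ((S.card:ℝ) - t) * dd) ≤ α S * Dt K S.card := by
      intro S hS
      have hSne : S.Nonempty := (Finset.mem_filter.mp hS).2
      have hc1 : 1 ≤ S.card := Finset.card_pos.mpr hSne
      exact mul_le_mul_of_nonneg_left (dt_support K t ht1 S.card hc1) (hα0 S hSne)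
    have hexp : ∑ S ∈ P, α S * (Dt K t + ((S.card:ℝ) - t) * dd)
        = Dt K t + dd * ((∑ S ∈ P, α S * (S.card : ℝ)) - (t:ℝ)) := by
      have e : ∀ S ∈ P, α S * (Dt K t + ((S.card:ℝ) - t) * dd)
          = α S * Dt K t + (α S * (S.card:ℝ)) * dd - α S * ((t:ℝ) * dd) := by
        intro S _; ring
      rw [Finset.sum_congr rfl e, Finset.sum_sub_distrib, Finset.sum_add_distrib,
        ← Finset.sum_mul, ← Finset.sum_mul, ← Finset.sum_mul, hα1]
      ring
    calc g = Dt K t + dd * (M - t) := by rw [hg, hdd]; ring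
      _ ≤ Dt K t + dd * ((∑ S ∈ P, α S * (S.card : ℝ)) - (t:ℝ)) := by
          have := mul_le_mul_of_nonpos_left (by linarith : (∑ S ∈ P, α S * (S.card : ℝ)) - (t:ℝ) ≤ M - t) hddle
          linarith [mul_le_mul_of_nonpos_left husage hddle]
      _ = ∑ S ∈ P, α S * (Dt K t + ((S.card:ℝ) - t) * dd) := hexp.symm
      _ ≤ ∑ S ∈ P, α S * Dt K S.card := Finset.sum_le_sum hterm
      _ = PObj N K α := by rw [PObj, hP]
  exact le_antisymm (csInf_le ⟨g, hlb⟩ hmem) (le_csInf ⟨g, hmem⟩ hlb)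

theorem hetero_eq_homo (N K : ℕ) (hN : 1 ≤ N) (hK : 1 ≤ K)
    (m m' : Fin N → ℝ)
    (hm : ∀ n, 0 ≤ m n ∧ m n ≤ 1) (hm' : ∀ n, 0 ≤ m' n ∧ m' n ≤ 1)
    (hsum : ∑ n, m n = ∑ n, m' n) (hge : 1 ≤ ∑ n, m n) :
    Dstar N K m = Dstar N K m' ∧
    Dstar N K m = Dstar N K (fun _ => (∑ k, m k) / N) := by
  have hN0 : (0:ℝ) < N := by exact_mod_cast hN
  have hMN : ∑ n, m n ≤ (N:ℝ) := by
    calc ∑ n, m n ≤ ∑ _n : Fin N, (1:ℝ) := Finset.sum_le_sum fun n _ => (hm n).2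
      _ = (N:ℝ) := by simp
  set mb : Fin N → ℝ := fun _ => (∑ k, m k) / N with hmb
  have hmbsum : ∑ n, mb n = ∑ n, m n := by
    rw [hmb, Finset.sum_const, Finset.card_univ, Fintype.card_fin, nsmul_eq_mul]
    field_simp
  have hmb01 : ∀ n, 0 ≤ mb n ∧ mb n ≤ 1 := by
    intro n
    constructor
    · apply div_nonneg (by linarith) (by linarith)
    · rw [hmb, div_le_one hN0]; exact hMN
  have h1 := dstar_eq N K m hm hge
  have h2 := dstar_eq N K m' hm' (hsum ▸ hge)
  have h3 := dstar_eq N K mb hmb01 (by rw [hmbsum]; exact hge)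
  rw [hmbsum] at h3
  rw [← hsum] at h2
  exact ⟨h1.trans h2.symm, h1.trans h3.symm⟩
end

section
/- Let N ≥ 1 and K ≥ 1 be integers, let m = (m_1, …, m_N) satisfy 0 ≤ m_n ≤ 1 for all n, put m_s = ∑_{n=1}^N m_n, and let j be an integer with 2 ≤ j ≤ N and j − 1 ≤ m_s ≤ j. Then D*(m) = (j − m_s)·D̃_{j−1} + (m_s − j + 1)·D̃_j; that is, there exists a feasible α for P(m) whose objective value equals this quantity, and every feasible α for P(m) has objective value at least this quantity. -/
open Finset

set_option maxHeartbeats 1000000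

noncomputable def Ff (K : ℕ) : ℝ → ℝ := fun x => ∑ i ∈ Finset.range K, x ^ (-(i:ℤ))

lemma Ff_convex (K : ℕ) : ConvexOn ℝ (Set.Ioi 0) (Ff K) := by
  have : ∀ t : Finset ℕ, ConvexOn ℝ (Set.Ioi (0:ℝ)) (fun x : ℝ => ∑ i ∈ t, x ^ (-(i:ℤ))) := by
    intro t
    induction t using Finset.induction with
    | empty => simpa using convexOn_const 0 (convex_Ioi (0:ℝ))
    | insert a s h ih =>
      simp only [Finset.sum_insert h]
      exact (convexOn_zpow _).add ih
  exact this _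

lemma Dt_eq_Ff (K ℓ : ℕ) (hl : 1 ≤ ℓ) : Dt K ℓ = Ff K (ℓ : ℝ) := by
  unfold Dt Ff
  refine Finset.sum_congr rfl fun i _ => ?_
  rw [one_div, inv_pow, ← zpow_natCast ((ℓ:ℝ)) i, ← zpow_neg]

lemma chord (K j : ℕ) (hj2 : 2 ≤ j) (ℓ : ℕ) (hl : 1 ≤ ℓ) :
    Dt K (j-1) + ((ℓ:ℝ) - ((j:ℝ)-1)) * (Dt K j - Dt K (j-1)) ≤ Dt K ℓ := by
  have hF := Ff_convex K
  set F := Ff K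
  have hcast : ((j-1 : ℕ) : ℝ) = (j:ℝ) - 1 := by
    have : (1:ℕ) ≤ j := by omega
    push_cast [Nat.cast_sub this]; ring
  have ha0 : (0:ℝ) < (j:ℝ) - 1 := by
    have : (2:ℝ) ≤ (j:ℝ) := by exact_mod_cast hj2
    linarith
  have hb0 : (0:ℝ) < (j:ℝ) := by linarith
  have hx0 : (0:ℝ) < (ℓ:ℝ) := by exact_mod_cast hl
  have haM : ((j:ℝ)-1) ∈ Set.Ioi (0:ℝ) := ha0
  have hbM : ((j:ℝ)) ∈ Set.Ioi (0:ℝ) := hb0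
  have hxM : ((ℓ:ℝ)) ∈ Set.Ioi (0:ℝ) := hx0
  have hDa : Dt K (j-1) = F ((j:ℝ)-1) := by rw [Dt_eq_Ff K (j-1) (by omega), hcast]
  have hDb : Dt K j = F (j:ℝ) := Dt_eq_Ff K j (by omega)
  have hDx : Dt K ℓ = F (ℓ:ℝ) := Dt_eq_Ff K ℓ hl
  rw [hDa, hDb, hDx]
  rcases le_or_gt ℓ (j-1) with hc | hc
  · -- x ≤ a < b, base b
    have hxa : (ℓ:ℝ) ≤ (j:ℝ) - 1 := by rw [← hcast]; exact_mod_cast hc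
    rcases eq_or_lt_of_le hxa with heq | hlt
    · rw [heq]; ring_nf; rfl
    · have h1 : (F (ℓ:ℝ) - F (j:ℝ)) / ((ℓ:ℝ) - (j:ℝ)) ≤ (F ((j:ℝ)-1) - F (j:ℝ)) / (((j:ℝ)-1) - (j:ℝ)) :=
        hF.secant_mono hbM hxM haM (by linarith) (by linarith) hxa
      have h2 : (((j:ℝ)-1) - (j:ℝ)) = -1 := by ring
      rw [h2] at h1
      have h3 : (ℓ:ℝ) - (j:ℝ) < 0 := by linarith
      rw [div_le_iff_of_neg h3] at h1
      -- h1 : (F (↑j - 1) - F ↑j) / (-1) * (↑ℓ - ↑j) ≤ F ↑ℓ - F ↑j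
      nlinarith [h1]
  · -- x ≥ b > a, base a
    have hxb : (j:ℝ) ≤ (ℓ:ℝ) := by exact_mod_cast (by omega : j ≤ ℓ)
    have h1 : (F (j:ℝ) - F ((j:ℝ)-1)) / ((j:ℝ) - ((j:ℝ)-1)) ≤ (F (ℓ:ℝ) - F ((j:ℝ)-1)) / ((ℓ:ℝ) - ((j:ℝ)-1)) :=
      hF.secant_mono haM hbM hxM (by linarith) (by linarith) hxb
    have h2 : ((j:ℝ) - ((j:ℝ)-1)) = 1 := by ring
    rw [h2, div_one] at h1
    have h3 : (0:ℝ) < (ℓ:ℝ) - ((j:ℝ)-1) := by linarith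
    rw [le_div_iff₀ h3] at h1
    nlinarith [h1]

noncomputable def ind {N : ℕ} (S : Finset (Fin N)) : Fin N → ℝ := fun n => if n ∈ S then 1 else 0

lemma hull_mem (N j : ℕ) (hj2 : 2 ≤ j) (m : Fin N → ℝ)
    (hm : ∀ n, 0 ≤ m n ∧ m n ≤ 1)
    (hlo : (j : ℝ) - 1 ≤ ∑ n, m n) (hhi : ∑ n, m n ≤ (j : ℝ)) :
    m ∈ convexHull ℝ {x : Fin N → ℝ |
      ∃ S : Finset (Fin N), (S.card = j - 1 ∨ S.card = j) ∧ x = ind S} := by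
  classical
  set I : Set (Fin N → ℝ) := {x | ∃ S : Finset (Fin N), (S.card = j - 1 ∨ S.card = j) ∧ x = ind S}
    with hI
  set Q : Set (Fin N → ℝ) :=
    {x | (∀ n, 0 ≤ x n ∧ x n ≤ 1) ∧ ((j:ℝ)-1 ≤ ∑ n, x n ∧ ∑ n, x n ≤ (j:ℝ))} with hQ
  have hQconv : Convex ℝ Q := by
    rintro x ⟨hx1, hx2, hx3⟩ y ⟨hy1, hy2, hy3⟩ a b ha hb hab
    refine ⟨fun n => ?_, ?_, ?_⟩
    · have h1 := hx1 n; have h2 := hy1 n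
      simp only [Pi.add_apply, Pi.smul_apply, smul_eq_mul]
      constructor
      · nlinarith [h1.1, h2.1]
      · nlinarith [h1.2, h2.2]
    all_goals {
      simp only [Pi.add_apply, Pi.smul_apply, smul_eq_mul]
      rw [Finset.sum_add_distrib, ← Finset.mul_sum, ← Finset.mul_sum]
      nlinarith [hx2, hx3, hy2, hy3] }
  have hcont : Continuous fun x : Fin N → ℝ => ∑ n, x n :=
    continuous_finset_sum _ fun n _ => continuous_apply n
  have hQclosed : IsClosed Q := by
    have : Q = (⋂ n : Fin N, ({x : Fin N → ℝ | 0 ≤ x n} ∩ {x | x n ≤ 1})) ∩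
        ({x : Fin N → ℝ | (j:ℝ)-1 ≤ ∑ n, x n} ∩ {x | ∑ n, x n ≤ (j:ℝ)}) := by
      ext x
      simp only [hQ, Set.mem_setOf_eq, Set.mem_inter_iff, Set.mem_iInter, forall_and]
    rw [this]
    exact IsClosed.inter
      (isClosed_iInter fun n =>
        (isClosed_le continuous_const (continuous_apply n)).inter
          (isClosed_le (continuous_apply n) continuous_const))
      ((isClosed_le continuous_const hcont).inter (isClosed_le hcont continuous_const))
  have hQcomp : IsCompact Q := by
    refine IsCompact.of_isClosed_subset (isCompact_Icc (a := (0 : Fin N → ℝ)) (b := 1))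
      hQclosed ?_
    rintro x ⟨h1, -⟩
    exact ⟨fun n => (h1 n).1, fun n => (h1 n).2⟩
  have hmQ : m ∈ Q := ⟨hm, hlo, hhi⟩
  -- extreme points are indicators
  have hext : Q.extremePoints ℝ ⊆ I := by
    rintro x ⟨hxQ, hxe⟩
    have key : ∀ p, x p = 0 ∨ x p = 1 := by
      intro p
      by_contra hp
      push_neg at hp
      have hp0 : 0 < x p := lt_of_le_of_ne (hxQ.1 p).1 (Ne.symm hp.1)
      have hp1 : x p < 1 := lt_of_le_of_ne (hxQ.1 p).2 hp.2
      by_cases hq : ∃ q, q ≠ p ∧ x q ≠ 0 ∧ x q ≠ 1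
      · obtain ⟨q, hqp, hq0', hq1'⟩ := hq
        have hq0 : 0 < x q := lt_of_le_of_ne (hxQ.1 q).1 (Ne.symm hq0')
        have hq1 : x q < 1 := lt_of_le_of_ne (hxQ.1 q).2 hq1'
        set ε := min (min (x p) (1 - x p)) (min (x q) (1 - x q)) with hε
        have hε0 : 0 < ε :=
          lt_min (lt_min hp0 (by linarith)) (lt_min hq0 (by linarith))
        have hε1 : ε ≤ x p := le_trans (min_le_left _ _) (min_le_left _ _)
        have hε2 : ε ≤ 1 - x p := le_trans (min_le_left _ _) (min_le_right _ _)
        have hε3 : ε ≤ x q := le_trans (min_le_right _ _) (min_le_left _ _)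
        have hε4 : ε ≤ 1 - x q := le_trans (min_le_right _ _) (min_le_right _ _)
        set y : Fin N → ℝ :=
          fun n => x n + (if n = p then ε else 0) - (if n = q then ε else 0) with hy
        set z : Fin N → ℝ :=
          fun n => x n - (if n = p then ε else 0) + (if n = q then ε else 0) with hz
        have hpq : p ≠ q := fun h => hqp h.symm
        have hyp : y p = x p + ε := by simp [hy, hpq]
        have hyq : y q = x q - ε := by simp [hy, hqp]
        have hyn : ∀ n, n ≠ p → n ≠ q → y n = x n := fun n h1 h2 => by simp [hy, h1, h2]
        have hzp : z p = x p - ε := by simp [hz, hpq]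
        have hzq : z q = x q + ε := by simp [hz, hqp]
        have hzn : ∀ n, n ≠ p → n ≠ q → z n = x n := fun n h1 h2 => by simp [hz, h1, h2]
        have hsy : ∑ n, y n = ∑ n, x n := by
          simp only [hy]
          rw [Finset.sum_sub_distrib, Finset.sum_add_distrib]
          rw [Finset.sum_ite_eq' Finset.univ p fun _ => ε,
            Finset.sum_ite_eq' Finset.univ q fun _ => ε]
          simp
        have hsz : ∑ n, z n = ∑ n, x n := by
          simp only [hz]
          rw [Finset.sum_add_distrib, Finset.sum_sub_distrib]
          rw [Finset.sum_ite_eq' Finset.univ p fun _ => ε,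
            Finset.sum_ite_eq' Finset.univ q fun _ => ε]
          simp
        have hyQ : y ∈ Q := by
          refine ⟨fun n => ?_, by rw [hsy]; exact hxQ.2.1, by rw [hsy]; exact hxQ.2.2⟩
          by_cases h1 : n = p
          · rw [h1, hyp]; constructor <;> linarith
          · by_cases h2 : n = q
            · rw [h2, hyq]; constructor <;> linarith
            · rw [hyn n h1 h2]; exact hxQ.1 n
        have hzQ : z ∈ Q := by
          refine ⟨fun n => ?_, by rw [hsz]; exact hxQ.2.1, by rw [hsz]; exact hxQ.2.2⟩
          by_cases h1 : n = p
          · rw [h1, hzp]; constructor <;> linarith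
          · by_cases h2 : n = q
            · rw [h2, hzq]; constructor <;> linarith
            · rw [hzn n h1 h2]; exact hxQ.1 n
        have hseg : x ∈ openSegment ℝ y z := by
          refine ⟨1/2, 1/2, by norm_num, by norm_num, by norm_num, ?_⟩
          funext n
          simp only [hy, hz, Pi.add_apply, Pi.smul_apply, smul_eq_mul]
          ring
        have hcontra := hxe hyQ hzQ hseg
        have : y p = x p := by rw [hcontra]
        rw [hyp] at this
        linarith
      · push_neg at hq
        have h01 : ∀ q, q ≠ p → x q = 0 ∨ x q = 1 := by
          intro q hq'
          by_cases h : x q = 0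
          · exact Or.inl h
          · exact Or.inr (hq q hq' h)
        set c := ((Finset.univ.erase p).filter (fun q => x q = 1)).card with hc
        have hsum_erase : ∑ q ∈ Finset.univ.erase p, x q = (c : ℝ) := by
          rw [← Finset.sum_filter_add_sum_filter_not (Finset.univ.erase p) (fun q => x q = 1)]
          have h1 : ∑ q ∈ (Finset.univ.erase p).filter (fun q => x q = 1), x q = (c : ℝ) := by
            rw [Finset.sum_congr rfl (fun q hq' => (Finset.mem_filter.1 hq').2)]
            simp [hc]
          have h2 : ∑ q ∈ (Finset.univ.erase p).filter (fun q => ¬ x q = 1), x q = 0 := by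
            refine Finset.sum_eq_zero fun q hq' => ?_
            have h3 := Finset.mem_filter.1 hq'
            rcases h01 q (Finset.ne_of_mem_erase h3.1) with h | h
            · exact h
            · exact absurd h h3.2
          rw [h1, h2]; ring
        have hsplit : ∑ n, x n = x p + (c : ℝ) := by
          rw [← Finset.add_sum_erase _ _ (Finset.mem_univ p), hsum_erase]
        have hq2 := hxQ.2
        have hcn : c < j := by
          have : (c:ℝ) < (j:ℝ) := by linarith [hq2.2]
          exact_mod_cast this
        have hc_le : (c:ℝ) ≤ (j:ℝ) - 1 := by
          have : (c:ℝ) + 1 ≤ (j:ℝ) := by exact_mod_cast hcn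
          linarith
        have hjc : j < c + 2 := by
          have : (j:ℝ) < (c:ℝ) + 2 := by linarith [hq2.1]
          exact_mod_cast this
        have hjc' : (j:ℝ) - 1 ≤ (c:ℝ) := by
          have : (j:ℝ) ≤ (c:ℝ) + 1 := by exact_mod_cast Nat.lt_succ_iff.1 hjc
          linarith
        have hs_lo : (j:ℝ) - 1 < ∑ n, x n := by rw [hsplit]; linarith
        have hs_hi : ∑ n, x n < (j:ℝ) := by rw [hsplit]; linarith
        set ε := min (min (x p) (1 - x p))
          (min ((∑ n, x n) - ((j:ℝ)-1)) ((j:ℝ) - ∑ n, x n)) with hε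
        have hε0 : 0 < ε :=
          lt_min (lt_min hp0 (by linarith)) (lt_min (by linarith) (by linarith))
        have hε1 : ε ≤ x p := le_trans (min_le_left _ _) (min_le_left _ _)
        have hε2 : ε ≤ 1 - x p := le_trans (min_le_left _ _) (min_le_right _ _)
        have hε3 : ε ≤ (∑ n, x n) - ((j:ℝ)-1) := le_trans (min_le_right _ _) (min_le_left _ _)
        have hε4 : ε ≤ (j:ℝ) - ∑ n, x n := le_trans (min_le_right _ _) (min_le_right _ _)
        set y : Fin N → ℝ := fun n => x n + (if n = p then ε else 0) with hy
        set z : Fin N → ℝ := fun n => x n - (if n = p then ε else 0) with hz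
        have hyp : y p = x p + ε := by simp [hy]
        have hyn : ∀ n, n ≠ p → y n = x n := fun n h1 => by simp [hy, h1]
        have hzp : z p = x p - ε := by simp [hz]
        have hzn : ∀ n, n ≠ p → z n = x n := fun n h1 => by simp [hz, h1]
        have hsy : ∑ n, y n = (∑ n, x n) + ε := by
          simp only [hy]
          rw [Finset.sum_add_distrib, Finset.sum_ite_eq' Finset.univ p fun _ => ε]
          simp
        have hsz : ∑ n, z n = (∑ n, x n) - ε := by
          simp only [hz]
          rw [Finset.sum_sub_distrib, Finset.sum_ite_eq' Finset.univ p fun _ => ε]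
          simp
        have hyQ : y ∈ Q := by
          refine ⟨fun n => ?_, by rw [hsy]; linarith, by rw [hsy]; linarith⟩
          by_cases h1 : n = p
          · rw [h1, hyp]; constructor <;> linarith
          · rw [hyn n h1]; exact hxQ.1 n
        have hzQ : z ∈ Q := by
          refine ⟨fun n => ?_, by rw [hsz]; linarith, by rw [hsz]; linarith⟩
          by_cases h1 : n = p
          · rw [h1, hzp]; constructor <;> linarith
          · rw [hzn n h1]; exact hxQ.1 n
        have hseg : x ∈ openSegment ℝ y z := by
          refine ⟨1/2, 1/2, by norm_num, by norm_num, by norm_num, ?_⟩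
          funext n
          simp only [hy, hz, Pi.add_apply, Pi.smul_apply, smul_eq_mul]
          ring
        have hcontra := hxe hyQ hzQ hseg
        have : y p = x p := by rw [hcontra]
        rw [hyp] at this
        linarith
    set S := Finset.univ.filter (fun n => x n = 1) with hS
    have hxS : x = ind S := by
      funext n
      by_cases h : x n = 1
      · simp [ind, hS, h]
      · rcases key n with h0 | h1
        · simp [ind, hS, h, h0]
        · exact absurd h1 h
    have hcard : (S.card : ℝ) = ∑ n, x n := by
      rw [hS, Finset.card_filter]
      push_cast
      refine Finset.sum_congr rfl fun n _ => ?_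
      rcases key n with h | h <;> simp [h]
    have hub : S.card ≤ j := by
      have : (S.card : ℝ) ≤ (j:ℝ) := by rw [hcard]; exact hxQ.2.2
      exact_mod_cast this
    have hlb : j ≤ S.card + 1 := by
      have : (j:ℝ) ≤ (S.card : ℝ) + 1 := by linarith [hxQ.2.1, hcard]
      exact_mod_cast this
    exact ⟨S, by omega, hxS⟩
  have hKM := closure_convexHull_extremePoints hQcomp hQconv
  have hIfin : I.Finite := by
    apply (Set.finite_range (ind (N := N))).subset
    rintro x ⟨S, -, rfl⟩
    exact ⟨S, rfl⟩
  have hIclosed : IsClosed (convexHull ℝ I) := (hIfin.isCompact_convexHull ℝ).isClosed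
  rw [← hKM] at hmQ
  exact closure_minimal (convexHull_mono hext) hIclosed hmQ

lemma exists_alpha (N K j : ℕ) (hj2 : 2 ≤ j) (m : Fin N → ℝ)
    (hm : ∀ n, 0 ≤ m n ∧ m n ≤ 1)
    (hlo : (j : ℝ) - 1 ≤ ∑ n, m n) (hhi : ∑ n, m n ≤ (j : ℝ)) :
    ∃ α : Finset (Fin N) → ℝ, PFeasible m α ∧
      PObj N K α = ((j : ℝ) - ∑ n, m n) * Dt K (j - 1)
        + ((∑ n, m n) - (j : ℝ) + 1) * Dt K j := by
  classical
  have hmem := hull_mem N j hj2 m hm hlo hhi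
  rw [_root_.convexHull_eq] at hmem
  obtain ⟨ι, t, w, z, hw0, hw1, hz, hcm⟩ := hmem
  have hcm' : ∑ i ∈ t, w i • z i = m := by
    rw [Finset.centerMass, hw1] at hcm
    simpa using hcm
  set g : ι → Finset (Fin N) := fun i => Finset.univ.filter (fun n => z i n = 1) with hgdef
  have hg : ∀ i ∈ t, z i = ind (g i) ∧ ((g i).card = j - 1 ∨ (g i).card = j) := by
    intro i hi
    obtain ⟨S, hSc, hSz⟩ := hz i hi
    have hgS : g i = S := by
      ext n
      simp only [hgdef, Finset.mem_filter, Finset.mem_univ, true_and, hSz, ind]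
      by_cases h : n ∈ S <;> simp [h]
    rw [hgS]; exact ⟨hSz, hSc⟩
  have hzval : ∀ i ∈ t, ∀ n, z i n = if n ∈ g i then 1 else 0 := by
    intro i hi n; rw [(hg i hi).1]; rfl
  set α : Finset (Fin N) → ℝ := fun S => ∑ i ∈ t.filter (fun i => g i = S), w i with hαdef
  have hα0 : ∀ S, 0 ≤ α S := by
    intro S
    exact Finset.sum_nonneg fun i hi => hw0 i (Finset.mem_filter.1 hi).1
  have hmaps : ∀ i ∈ t, g i ∈ Finset.univ.filter (fun S : Finset (Fin N) => S.Nonempty) := by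
    intro i hi
    simp only [Finset.mem_filter, Finset.mem_univ, true_and]
    refine Finset.card_pos.1 ?_
    rcases (hg i hi).2 with h | h <;> omega
  have hsum : ∑ S ∈ Finset.univ.filter (fun S : Finset (Fin N) => S.Nonempty), α S = 1 := by
    rw [hαdef]
    rw [Finset.sum_fiberwise_of_maps_to hmaps w]
    exact hw1
  have hmarg : ∀ n : Fin N,
      ∑ S ∈ Finset.univ.filter (fun S : Finset (Fin N) => n ∈ S), α S = m n := by
    intro n
    rw [hαdef]
    rw [Finset.sum_fiberwise_eq_sum_filter t
      (Finset.univ.filter (fun S : Finset (Fin N) => n ∈ S)) g w]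
    have e1 : t.filter (fun i => g i ∈ Finset.univ.filter (fun S : Finset (Fin N) => n ∈ S))
        = t.filter (fun i => n ∈ g i) := by
      refine Finset.filter_congr fun i _ => ?_
      simp
    rw [e1, Finset.sum_filter]
    have e2 : ∑ i ∈ t, (if n ∈ g i then w i else 0) = ∑ i ∈ t, w i * z i n := by
      refine Finset.sum_congr rfl fun i hi => ?_
      rw [hzval i hi n]
      by_cases h : n ∈ g i <;> simp [h]
    rw [e2]
    have := congrFun hcm' n
    simpa [Finset.sum_apply, smul_eq_mul] using this
  have hfeas : PFeasible m α := ⟨fun S _ => hα0 S, hsum, fun n => le_of_eq (hmarg n)⟩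
  refine ⟨α, hfeas, ?_⟩
  have hobj : PObj N K α = ∑ i ∈ t, w i * Dt K ((g i).card) := by
    unfold PObj
    calc ∑ S ∈ Finset.univ.filter (fun S : Finset (Fin N) => S.Nonempty), α S * Dt K S.card
        = ∑ S ∈ Finset.univ.filter (fun S : Finset (Fin N) => S.Nonempty),
            ∑ i ∈ t.filter (fun i => g i = S), w i * Dt K ((g i).card) := by
          refine Finset.sum_congr rfl fun S hS => ?_
          rw [hαdef, Finset.sum_mul]
          refine Finset.sum_congr rfl fun i hi => ?_
          rw [(Finset.mem_filter.1 hi).2]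
      _ = ∑ i ∈ t, w i * Dt K ((g i).card) := Finset.sum_fiberwise_of_maps_to hmaps _
  set A := ∑ i ∈ t.filter (fun i => (g i).card = j - 1), w i with hA
  set B := ∑ i ∈ t.filter (fun i => ¬ (g i).card = j - 1), w i with hB
  have hAB : A + B = 1 := by
    rw [hA, hB, Finset.sum_filter_add_sum_filter_not]; exact hw1
  have hobj2 : PObj N K α = A * Dt K (j - 1) + B * Dt K j := by
    rw [hobj, ← Finset.sum_filter_add_sum_filter_not t (fun i => (g i).card = j - 1)]
    congr 1
    · rw [hA, Finset.sum_mul]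
      refine Finset.sum_congr rfl fun i hi => ?_
      rw [(Finset.mem_filter.1 hi).2]
    · rw [hB, Finset.sum_mul]
      refine Finset.sum_congr rfl fun i hi => ?_
      have h1 := Finset.mem_filter.1 hi
      rcases (hg i h1.1).2 with h | h
      · exact absurd h h1.2
      · rw [h]
  have hcast : ((j - 1 : ℕ) : ℝ) = (j : ℝ) - 1 := by
    have h1 : (1:ℕ) ≤ j := by omega
    push_cast [Nat.cast_sub h1]; ring
  have cardsum : ∀ S : Finset (Fin N), ∑ n, (if n ∈ S then (1:ℝ) else 0) = S.card := by
    intro S; rw [Finset.sum_boole]; simp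
  have hms : ∑ n, m n = A * ((j:ℝ) - 1) + B * (j:ℝ) := by
    have e1 : ∑ n, m n = ∑ i ∈ t, w i * ((g i).card : ℝ) := by
      calc ∑ n, m n = ∑ n : Fin N, ∑ i ∈ t, w i * z i n := by
            refine Finset.sum_congr rfl fun n _ => ?_
            have := congrFun hcm' n
            simp only [Finset.sum_apply, Pi.smul_apply, smul_eq_mul] at this
            exact this.symm
        _ = ∑ i ∈ t, ∑ n : Fin N, w i * z i n := Finset.sum_comm
        _ = ∑ i ∈ t, w i * ((g i).card : ℝ) := by
            refine Finset.sum_congr rfl fun i hi => ?_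
            rw [← Finset.mul_sum]
            congr 1
            calc ∑ n, z i n = ∑ n, (if n ∈ g i then (1:ℝ) else 0) :=
                  Finset.sum_congr rfl fun n _ => hzval i hi n
              _ = ((g i).card : ℝ) := cardsum _
    rw [e1, ← Finset.sum_filter_add_sum_filter_not t (fun i => (g i).card = j - 1)]
    congr 1
    · rw [hA, Finset.sum_mul]
      refine Finset.sum_congr rfl fun i hi => ?_
      rw [(Finset.mem_filter.1 hi).2, hcast]
    · rw [hB, Finset.sum_mul]
      refine Finset.sum_congr rfl fun i hi => ?_
      have h1 := Finset.mem_filter.1 hi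
      rcases (hg i h1.1).2 with h | h
      · exact absurd h h1.2
      · rw [h]
  have hAval : A = (j:ℝ) - ∑ n, m n := by linear_combination hms + (j:ℝ) * hAB
  have hBval : B = (∑ n, m n) - (j:ℝ) + 1 := by
    linear_combination -hms + (1 - (j:ℝ)) * hAB
  rw [hobj2, hAval, hBval]

lemma Dt_anti (K j : ℕ) (hj2 : 2 ≤ j) : Dt K j ≤ Dt K (j-1) := by
  unfold Dt
  refine Finset.sum_le_sum fun i _ => ?_
  have h1 : (0:ℝ) < ((j-1 : ℕ):ℝ) := by
    have : (1:ℕ) ≤ j - 1 := by omega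
    exact_mod_cast Nat.lt_of_lt_of_le Nat.zero_lt_one this
  have h2 : ((j-1:ℕ):ℝ) ≤ (j:ℝ) := by exact_mod_cast Nat.sub_le j 1
  have : (1:ℝ) / (j:ℝ) ≤ 1 / ((j-1:ℕ):ℝ) := one_div_le_one_div_of_le h1 h2
  exact pow_le_pow_left₀ (by positivity) this i

lemma lower_bound (N K : ℕ) (j : ℕ) (hj2 : 2 ≤ j) (m : Fin N → ℝ)
    (α : Finset (Fin N) → ℝ) (hfeas : PFeasible m α) :
    ((j : ℝ) - ∑ n, m n) * Dt K (j - 1)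
      + ((∑ n, m n) - (j : ℝ) + 1) * Dt K j ≤ PObj N K α := by
  obtain ⟨hpos, hsum1, hcon⟩ := hfeas
  classical
  set 𝒯 := Finset.univ.filter (fun S : Finset (Fin N) => S.Nonempty) with h𝒯
  set C := Dt K (j-1) with hC
  set d := Dt K j - Dt K (j-1) with hd
  set ms := ∑ n, m n with hms
  -- expected cardinality bound
  have hcard : ∑ S ∈ 𝒯, α S * S.card ≤ ms := by
    have step1 : ∑ S ∈ 𝒯, α S * S.card
        = ∑ n : Fin N, ∑ S ∈ 𝒯, (if n ∈ S then α S else 0) := by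
      rw [Finset.sum_comm]
      refine Finset.sum_congr rfl fun S _ => ?_
      have : (S.card : ℝ) = ∑ n : Fin N, (if n ∈ S then (1:ℝ) else 0) := by
        rw [Finset.sum_boole]
        simp
      rw [this, Finset.mul_sum]
      refine Finset.sum_congr rfl fun n _ => ?_
      by_cases h : n ∈ S <;> simp [h]
    rw [step1]
    refine Finset.sum_le_sum fun n _ => ?_
    rw [← Finset.sum_filter]
    have hfe : 𝒯.filter (fun S => n ∈ S)
        = Finset.univ.filter (fun S : Finset (Fin N) => n ∈ S) := by
      rw [h𝒯, Finset.filter_filter]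
      refine Finset.filter_congr fun S _ => ?_
      constructor
      · exact fun h => h.2
      · exact fun h => ⟨⟨n, h⟩, h⟩
    rw [hfe]
    exact hcon n
  have H1 : ∑ S ∈ 𝒯, α S * (C + ((S.card:ℝ) - ((j:ℝ)-1)) * d) ≤ PObj N K α := by
    refine Finset.sum_le_sum fun S hS => ?_
    have hSne : S.Nonempty := (Finset.mem_filter.1 hS).2
    have h1 : 1 ≤ S.card := Finset.card_pos.2 hSne
    exact mul_le_mul_of_nonneg_left (chord K j hj2 S.card h1) (hpos S hSne)
  have expand : ∑ S ∈ 𝒯, α S * (C + ((S.card:ℝ) - ((j:ℝ)-1)) * d)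
      = C + d * (∑ S ∈ 𝒯, α S * S.card) - ((j:ℝ)-1) * d := by
    have e : ∀ S ∈ 𝒯, α S * (C + ((S.card:ℝ) - ((j:ℝ)-1)) * d)
        = α S * C + d * (α S * S.card) - ((j:ℝ)-1) * d * α S := fun S _ => by ring
    rw [Finset.sum_congr rfl e, Finset.sum_sub_distrib, Finset.sum_add_distrib,
      ← Finset.sum_mul, ← Finset.mul_sum, ← Finset.mul_sum, hsum1]
    ring
  have hdle : d ≤ 0 := by
    rw [hd]; linarith [Dt_anti K j hj2]
  have hdm : d * ms ≤ d * (∑ S ∈ 𝒯, α S * S.card) := mul_le_mul_of_nonpos_left hcard hdle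
  have hgoal : ((j : ℝ) - ms) * C + (ms - (j : ℝ) + 1) * Dt K j
      = C + d * ms - ((j:ℝ)-1) * d := by
    rw [hd, hC]; ring
  linarith [H1, expand, hdm]

theorem Dstar_value (N K : ℕ) (hN : 1 ≤ N) (hK : 1 ≤ K)
    (m : Fin N → ℝ) (hm : ∀ n, 0 ≤ m n ∧ m n ≤ 1)
    (j : ℕ) (hj2 : 2 ≤ j) (hjN : j ≤ N)
    (hlo : (j : ℝ) - 1 ≤ ∑ n, m n) (hhi : ∑ n, m n ≤ (j : ℝ)) :
    (∃ α : Finset (Fin N) → ℝ, PFeasible m α ∧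
      PObj N K α = ((j : ℝ) - ∑ n, m n) * Dt K (j - 1)
        + ((∑ n, m n) - (j : ℝ) + 1) * Dt K j) ∧
    (∀ α : Finset (Fin N) → ℝ, PFeasible m α →
      ((j : ℝ) - ∑ n, m n) * Dt K (j - 1)
        + ((∑ n, m n) - (j : ℝ) + 1) * Dt K j ≤ PObj N K α) := by
  exact ⟨exists_alpha N K j hj2 m hm hlo hhi,
    fun α hα => lower_bound N K j hj2 m α hα⟩
end

section
/- Let N ≥ 1, K ≥ 2, and let m_s be a real number with m_s ≥ 1. If β is an optimal solution of the relaxed linear program R(m_s), then there does not exist a set 𝒩 ⊆ {1, …, N} with |𝒩| ≥ 3 and β_n > 0 for all n ∈ 𝒩; that is, the set {n : β_n > 0} has at most two elements. -/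
open Finset

/-- Feasibility for the relaxed linear program `R(m_s)`: `β = (β_1,…,β_N)` (here `β n`
stands for `β_{n+1}`) is nonnegative, sums to `1`, and satisfies `∑ n·β_n ≤ m_s`. -/
def RFeasible (N : ℕ) (ms : ℝ) (β : Fin N → ℝ) : Prop :=
  (∀ n, 0 ≤ β n) ∧ (∑ n, β n) = 1 ∧
  (∑ n : Fin N, ((n : ℕ) + 1 : ℝ) * β n) ≤ ms

/-- Objective value of the relaxed LP: `∑_{n=1}^N β_n · D̃_n`. -/
noncomputable def RObj (N K : ℕ) (β : Fin N → ℝ) : ℝ :=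
  ∑ n : Fin N, β n * Dt K ((n : ℕ) + 1)

lemma pow_inv_convex (i : ℕ) {a b c : ℝ} (ha : 0 < a) (hab : a < b) (hbc : b < c) :
    (c - a) * (1/b)^i ≤ (c - b) * (1/a)^i + (b - a) * (1/c)^i := by
  have hb : (0:ℝ) < b := ha.trans hab
  have hc : (0:ℝ) < c := hb.trans hbc
  have hca : (0:ℝ) < c - a := by linarith
  have h := (convexOn_zpow (𝕜 := ℝ) (-(i:ℤ))).2 (Set.mem_Ioi.2 ha) (Set.mem_Ioi.2 hc)
      (show (0:ℝ) ≤ (c-b)/(c-a) from div_nonneg (by linarith) hca.le)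
      (show (0:ℝ) ≤ (b-a)/(c-a) from div_nonneg (by linarith) hca.le)
      (by field_simp; ring)
  have hcomb : (c-b)/(c-a) * a + (b-a)/(c-a) * c = b := by field_simp; ring
  simp only [smul_eq_mul, hcomb] at h
  have key : ∀ x : ℝ, 0 < x → x ^ (-(i:ℤ)) = (1/x)^i := by
    intro x hx
    rw [zpow_neg, zpow_natCast, ← inv_pow, one_div]
  rw [key a ha, key b hb, key c hc] at h
  have := mul_le_mul_of_nonneg_left h hca.le
  calc (c - a) * (1/b)^i ≤ (c-a) * ((c-b)/(c-a) * (1/a)^i + (b-a)/(c-a) * (1/c)^i) := this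
    _ = (c - b) * (1/a)^i + (b - a) * (1/c)^i := by field_simp

lemma one_div_strict {a b c : ℝ} (ha : 0 < a) (hab : a < b) (hbc : b < c) :
    (c - a) * (1/b) < (c - b) * (1/a) + (b - a) * (1/c) := by
  have hb : (0:ℝ) < b := ha.trans hab
  have hc : (0:ℝ) < c := hb.trans hbc
  have key : (c-b)*(1/a) + (b-a)*(1/c) - (c-a)*(1/b) = (b-a)*(c-b)*(c-a)/(a*b*c) := by
    field_simp; ring
  nlinarith [div_pos (mul_pos (mul_pos (sub_pos.2 hab) (sub_pos.2 hbc))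
    (sub_pos.2 (hab.trans hbc))) (by positivity : (0:ℝ) < a*b*c)]

lemma key_conv (K : ℕ) (hK : 2 ≤ K) {a b c : ℝ} (ha : 0 < a) (hab : a < b) (hbc : b < c)
    (na nb nc : ℕ) (hna : (na:ℝ) = a) (hnb : (nb:ℝ) = b) (hnc : (nc:ℝ) = c) :
    (c - a) * Dt K nb < (c - b) * Dt K na + (b - a) * Dt K nc := by
  unfold Dt
  rw [hna, hnb, hnc, Finset.mul_sum, Finset.mul_sum, Finset.mul_sum, ← Finset.sum_add_distrib]
  apply Finset.sum_lt_sum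
  · intro i _
    exact pow_inv_convex i ha hab hbc
  · exact ⟨1, Finset.mem_range.2 (by omega), by
      simpa using one_div_strict ha hab hbc⟩

lemma exists_chain {α : Type*} [LinearOrder α] {P : α → Prop} {x y z : α}
    (hxy : x ≠ y) (hxz : x ≠ z) (hyz : y ≠ z) (px : P x) (py : P y) (pz : P z) :
    ∃ a b c, a < b ∧ b < c ∧ P a ∧ P b ∧ P c := by
  rcases hxy.lt_or_gt with h1 | h1 <;> rcases hxz.lt_or_gt with h2 | h2 <;>
    rcases hyz.lt_or_gt with h3 | h3 <;>
    first
    | exact ⟨x, y, z, h1, h3, px, py, pz⟩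
    | exact ⟨x, z, y, h2, h3, px, pz, py⟩
    | exact ⟨y, x, z, h1, h2, py, px, pz⟩
    | exact ⟨y, z, x, h3, h2, py, pz, px⟩
    | exact ⟨z, x, y, h2, h1, pz, px, py⟩
    | exact ⟨z, y, x, h3, h1, pz, py, px⟩
    | exact absurd (h1.trans h3) (not_lt.2 h2.le)
    | exact absurd (h2.trans h3) (not_lt.2 h1.le)
    | exact absurd (h3.trans h2) (not_lt.2 h1.le)
    | exact absurd (h3.trans h1) (not_lt.2 h2.le)

lemma perturb (N K : ℕ) (hK : 2 ≤ K) (β β' : Fin N → ℝ)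
    (A B C : Fin N) (hABn : A ≠ B) (hACn : A ≠ C) (hBCn : B ≠ C)
    (a b c ε : ℝ) (ha : 0 < a) (hab : a < b) (hbc : b < c)
    (haA : ((A:ℕ):ℝ) + 1 = a) (hbB : ((B:ℕ):ℝ) + 1 = b) (hcC : ((C:ℕ):ℝ) + 1 = c)
    (hεpos : 0 < ε) (hεA : ε * (c - b) ≤ β A) (hεC : ε * (b - a) ≤ β C)
    (hnn : ∀ n, 0 ≤ β n)
    (hβ' : ∀ n, β' n = β n + ε * ((if n = A then b - c else 0) +
      (if n = C then a - b else 0) + (if n = B then c - a else 0))) :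
    (∀ n, 0 ≤ β' n) ∧ (∑ n, β' n) = (∑ n, β n) ∧
    (∑ n : Fin N, ((n:ℕ) + 1 : ℝ) * β' n) = (∑ n : Fin N, ((n:ℕ) + 1 : ℝ) * β n) ∧
    RObj N K β' < RObj N K β := by
  have hfe : β' = fun n => β n + ε * ((if n = A then b - c else 0) +
      (if n = C then a - b else 0) + (if n = B then c - a else 0)) := funext hβ'
  refine ⟨?_, ?_, ?_, ?_⟩
  · intro n
    rw [hβ' n]
    by_cases h1 : n = A
    · subst h1
      rw [if_pos rfl, if_neg hACn, if_neg hABn]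
      nlinarith [hεA]
    · by_cases h2 : n = B
      · subst h2
        rw [if_neg (Ne.symm hABn), if_neg hBCn, if_pos rfl]
        nlinarith [hnn n, mul_pos hεpos (show (0:ℝ) < c - a by linarith)]
      · by_cases h3 : n = C
        · subst h3
          rw [if_neg (Ne.symm hACn), if_pos rfl, if_neg (Ne.symm hBCn)]
          nlinarith [hεC]
        · rw [if_neg h1, if_neg h3, if_neg h2]
          simpa using hnn n
  · rw [hfe, Finset.sum_add_distrib]
    have h0 : ∑ n : Fin N, ε * ((if n = A then b - c else 0) +
        (if n = C then a - b else 0) + (if n = B then c - a else 0)) = 0 := by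
      simp only [mul_add, mul_ite, mul_zero, Finset.sum_add_distrib,
        Finset.sum_ite_eq' Finset.univ, Finset.mem_univ, if_true]
      ring
    rw [h0, add_zero]
  · rw [hfe]
    simp only [mul_add, mul_ite, mul_zero, Finset.sum_add_distrib,
      Finset.sum_ite_eq' Finset.univ, Finset.mem_univ, if_true, haA, hbB, hcC]
    ring
  · unfold RObj
    rw [hfe]
    simp only [add_mul, mul_add, mul_ite, ite_mul, zero_mul, mul_zero,
      Finset.sum_add_distrib, Finset.sum_ite_eq' Finset.univ, Finset.mem_univ, if_true]
    have hkey := key_conv K hK ha hab hbc ((A:ℕ)+1) ((B:ℕ)+1) ((C:ℕ)+1)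
      (by exact_mod_cast haA) (by exact_mod_cast hbB) (by exact_mod_cast hcC)
    nlinarith [hkey, hεpos]

theorem at_most_two_positive (N K : ℕ) (hN : 1 ≤ N) (hK : 2 ≤ K)
    (ms : ℝ) (hms : 1 ≤ ms)
    (β : Fin N → ℝ) (hfeas : RFeasible N ms β)
    (hopt : ∀ β' : Fin N → ℝ, RFeasible N ms β' → RObj N K β ≤ RObj N K β') :
    (¬ ∃ 𝒩 : Finset (Fin N), 3 ≤ 𝒩.card ∧ ∀ n ∈ 𝒩, 0 < β n) ∧
    (Finset.univ.filter (fun n : Fin N => 0 < β n)).card ≤ 2 := by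
  obtain ⟨hnn, hsum, hws⟩ := hfeas
  have core : (Finset.univ.filter (fun n : Fin N => 0 < β n)).card ≤ 2 := by
    by_contra hcard
    push_neg at hcard
    obtain ⟨t, hts, ht3⟩ := Finset.exists_subset_card_eq hcard
    obtain ⟨x, y, z, hxy, hxz, hyz, rfl⟩ := Finset.card_eq_three.1 ht3
    have hx := (Finset.mem_filter.1 (hts (show x ∈ ({x,y,z}:Finset (Fin N)) by simp))).2
    have hy := (Finset.mem_filter.1 (hts (show y ∈ ({x,y,z}:Finset (Fin N)) by simp))).2
    have hz := (Finset.mem_filter.1 (hts (show z ∈ ({x,y,z}:Finset (Fin N)) by simp))).2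
    obtain ⟨A, B, C, hAB, hBC, pA, pB, pC⟩ :=
      exists_chain (P := fun n => 0 < β n) hxy hxz hyz hx hy hz
    have hABv : (A:ℕ) < (B:ℕ) := hAB
    have hBCv : (B:ℕ) < (C:ℕ) := hBC
    have hab : (((A:ℕ):ℝ) + 1) < (((B:ℕ):ℝ) + 1) := by
      exact_mod_cast Nat.add_lt_add_right hABv 1
    have hbc : (((B:ℕ):ℝ) + 1) < (((C:ℕ):ℝ) + 1) := by
      exact_mod_cast Nat.add_lt_add_right hBCv 1
    have ha : (0:ℝ) < ((A:ℕ):ℝ) + 1 := by positivity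
    obtain ⟨ε, hεpos, hεA, hεC⟩ : ∃ ε : ℝ, 0 < ε ∧
        ε * ((((C:ℕ):ℝ) + 1) - (((B:ℕ):ℝ) + 1)) ≤ β A ∧
        ε * ((((B:ℕ):ℝ) + 1) - (((A:ℕ):ℝ) + 1)) ≤ β C := by
      refine ⟨min (β A / ((((C:ℕ):ℝ) + 1) - (((B:ℕ):ℝ) + 1)))
          (β C / ((((B:ℕ):ℝ) + 1) - (((A:ℕ):ℝ) + 1))),
        lt_min (div_pos pA (by linarith)) (div_pos pC (by linarith)), ?_, ?_⟩
      · calc min _ _ * ((((C:ℕ):ℝ) + 1) - (((B:ℕ):ℝ) + 1))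
            ≤ (β A / ((((C:ℕ):ℝ) + 1) - (((B:ℕ):ℝ) + 1))) *
              ((((C:ℕ):ℝ) + 1) - (((B:ℕ):ℝ) + 1)) :=
              mul_le_mul_of_nonneg_right (min_le_left _ _) (by linarith)
          _ = β A := div_mul_cancel₀ _ (by linarith)
      · calc min _ _ * ((((B:ℕ):ℝ) + 1) - (((A:ℕ):ℝ) + 1))
            ≤ (β C / ((((B:ℕ):ℝ) + 1) - (((A:ℕ):ℝ) + 1))) *
              ((((B:ℕ):ℝ) + 1) - (((A:ℕ):ℝ) + 1)) :=
              mul_le_mul_of_nonneg_right (min_le_right _ _) (by linarith)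
          _ = β C := div_mul_cancel₀ _ (by linarith)
    obtain ⟨hnn', hsum', hws', hobj⟩ := perturb N K hK β
      (fun n => β n + ε * ((if n = A then (((B:ℕ):ℝ) + 1) - (((C:ℕ):ℝ) + 1) else 0) +
        (if n = C then (((A:ℕ):ℝ) + 1) - (((B:ℕ):ℝ) + 1) else 0) +
        (if n = B then (((C:ℕ):ℝ) + 1) - (((A:ℕ):ℝ) + 1) else 0)))
      A B C (ne_of_lt hAB) (ne_of_lt (hAB.trans hBC)) (ne_of_lt hBC)
      (((A:ℕ):ℝ) + 1) (((B:ℕ):ℝ) + 1) (((C:ℕ):ℝ) + 1) ε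
      ha hab hbc rfl rfl rfl hεpos hεA hεC hnn (fun n => rfl)
    have hfeas' : RFeasible N ms _ := ⟨hnn', hsum'.trans hsum, by rw [hws']; exact hws⟩
    exact absurd (hopt _ hfeas') (not_le.2 hobj)
  refine ⟨?_, core⟩
  rintro ⟨𝒩, h3, hp⟩
  have : 𝒩 ⊆ Finset.univ.filter (fun n : Fin N => 0 < β n) := fun n hn =>
    Finset.mem_filter.2 ⟨Finset.mem_univ n, hp n hn⟩
  exact absurd (h3.trans (Finset.card_le_card this)) (by omega)
end

section
/- Let N ≥ 1, K ≥ 2, and let m_s be a real number with m_s ≥ 1. If β is an optimal solution of the relaxed linear program R(m_s) and n_1 < n_2 are indices in {1, …, N} with β_{n_1} > 0 and β_{n_2} > 0, then n_2 = n_1 + 1. -/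
open Finset

lemma term_nonneg (a : ℝ) (ha : 1 ≤ a) (i : ℕ) :
    2 * (1/(a+1))^i ≤ (1/a)^i + (1/(a+2))^i := by
  have ha0 : 0 < a := by linarith
  have h1 : 0 < a + 1 := by linarith
  have h2 : 0 < a + 2 := by linarith
  set u := (1/a)^i with hu
  set v := (1/(a+2))^i with hv
  set w := (1/(a+1))^i with hw
  have hun : 0 ≤ u := by positivity
  have hvn : 0 ≤ v := by positivity
  have hwn : 0 ≤ w := by positivity
  have huv : w^2 ≤ u * v := by
    have e1 : w^2 = (1/(a+1)^2)^i := by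
      rw [hw, ← pow_mul, Nat.mul_comm, pow_mul]
      congr 1
      rw [div_pow]
      norm_num
    have e2 : u * v = (1/(a*(a+2)))^i := by
      rw [hu, hv, ← mul_pow]
      congr 1
      rw [div_mul_div_comm]
      norm_num
    rw [e1, e2]
    apply pow_le_pow_left₀ (by positivity)
    rw [div_le_div_iff₀ (by positivity) (by positivity)]
    nlinarith
  have hs1 : Real.sqrt (w^2) ≤ Real.sqrt (u*v) := Real.sqrt_le_sqrt huv
  rw [Real.sqrt_sq hwn] at hs1
  have hs2 : 2 * Real.sqrt (u*v) ≤ u + v := by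
    have h3 := Real.sq_sqrt hun
    have h4 := Real.sq_sqrt hvn
    have h5 := Real.sqrt_mul hun v
    nlinarith [sq_nonneg (Real.sqrt u - Real.sqrt v), Real.sqrt_nonneg u, Real.sqrt_nonneg v]
  linarith

lemma d_succ_lt (K : ℕ) (hK : 2 ≤ K) (n : ℕ) :
    Dt K (n+2) - Dt K (n+3) < Dt K (n+1) - Dt K (n+2) := by
  have key : 0 < ∑ i ∈ Finset.range K,
      ((1/((n:ℝ)+1))^i + (1/((n:ℝ)+3))^i - 2 * (1/((n:ℝ)+2))^i) := by
    apply Finset.sum_pos'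
    · intro i _
      have := term_nonneg ((n:ℝ)+1) (by simp) i
      have e : (n:ℝ)+1+1 = (n:ℝ)+2 := by ring
      have e2 : (n:ℝ)+1+2 = (n:ℝ)+3 := by ring
      rw [e, e2] at this
      linarith
    · refine ⟨1, Finset.mem_range.mpr (by omega), ?_⟩
      have h1 : (0:ℝ) < (n:ℝ)+1 := by positivity
      have h2 : (0:ℝ) < (n:ℝ)+2 := by positivity
      have h3 : (0:ℝ) < (n:ℝ)+3 := by positivity
      simp only [pow_one]
      rw [sub_pos, div_add_div _ _ h1.ne' h3.ne']
      rw [show (2:ℝ) * (1/((n:ℝ)+2)) = 2/((n:ℝ)+2) by ring]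
      rw [div_lt_div_iff₀ h2 (by positivity)]
      nlinarith
  have expand : Dt K (n+1) - Dt K (n+2) - (Dt K (n+2) - Dt K (n+3))
      = ∑ i ∈ Finset.range K,
      ((1/((n:ℝ)+1))^i + (1/((n:ℝ)+3))^i - 2 * (1/((n:ℝ)+2))^i) := by
    simp only [Dt, ← Finset.sum_sub_distrib, ← Finset.sum_add_distrib]
    apply Finset.sum_congr rfl
    intro i _
    push_cast
    ring
  linarith

lemma d_strictAnti (K : ℕ) (hK : 2 ≤ K) :
    StrictAnti (fun n : ℕ => Dt K (n+1) - Dt K (n+2)) := by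
  apply strictAnti_nat_of_succ_lt
  intro n
  have h := d_succ_lt K hK n
  have e1 : n + 1 + 1 = n + 2 := by omega
  have e2 : n + 1 + 2 = n + 3 := by omega
  rw [e1, e2]
  exact h


theorem positives_consecutive (N K : ℕ) (hN : 1 ≤ N) (hK : 2 ≤ K)
    (ms : ℝ) (hms : 1 ≤ ms)
    (β : Fin N → ℝ) (hfeas : RFeasible N ms β)
    (hopt : ∀ β' : Fin N → ℝ, RFeasible N ms β' → RObj N K β ≤ RObj N K β')
    (n₁ n₂ : Fin N) (hlt : n₁ < n₂) (h₁ : 0 < β n₁) (h₂ : 0 < β n₂) :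
    (n₂ : ℕ) = (n₁ : ℕ) + 1 := by
  by_contra hne
  have hv : (n₁ : ℕ) < (n₂ : ℕ) := hlt
  have hAB : (n₁ : ℕ) + 1 < (n₂ : ℕ) := by omega
  have hBN : (n₂ : ℕ) < N := n₂.isLt
  set i₁ : Fin N := ⟨(n₁ : ℕ) + 1, by omega⟩ with hi₁
  set i₂ : Fin N := ⟨(n₂ : ℕ) - 1, by omega⟩ with hi₂
  have hv1 : (i₁ : ℕ) = (n₁ : ℕ) + 1 := rfl
  have hv2 : (i₂ : ℕ) = (n₂ : ℕ) - 1 := rfl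
  have ne1a : i₁ ≠ n₁ := by rw [Fin.ne_iff_vne, hv1]; omega
  have ne1b : i₁ ≠ n₂ := by rw [Fin.ne_iff_vne, hv1]; omega
  have ne2a : i₂ ≠ n₁ := by rw [Fin.ne_iff_vne, hv2]; omega
  have ne2b : i₂ ≠ n₂ := by rw [Fin.ne_iff_vne, hv2]; omega
  have neab : n₁ ≠ n₂ := by rw [Fin.ne_iff_vne]; omega
  set ε := min (β n₁) (β n₂) with hε
  have hεpos : 0 < ε := lt_min h₁ h₂
  set c : Fin N → ℝ := fun n =>
    (if n = i₁ then (1:ℝ) else 0) + (if n = i₂ then 1 else 0)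
      - (if n = n₁ then 1 else 0) - (if n = n₂ then 1 else 0) with hc
  set β' : Fin N → ℝ := fun n => β n + ε * c n with hβ'
  have key : ∀ g : Fin N → ℝ,
      (∑ n, c n * g n) = g i₁ + g i₂ - g n₁ - g n₂ := by
    intro g
    simp only [hc, sub_mul, add_mul, ite_mul, one_mul, zero_mul,
      Finset.sum_sub_distrib, Finset.sum_add_distrib,
      Finset.sum_ite_eq', Finset.mem_univ, if_true]
  -- feasibility
  have hnonneg : ∀ n, 0 ≤ β' n := by
    intro n
    by_cases e1 : n = n₁
    · subst e1
      have q1 : n ≠ i₁ := ne1a.symm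
      have q2 : n ≠ i₂ := ne2a.symm
      have hc1 : c n = -1 := by
        simp [hc, q1, q2, neab]
      have hle : ε ≤ β n := min_le_left _ _
      simp only [hβ', hc1]; linarith
    · by_cases e2 : n = n₂
      · subst e2
        have q1 : n ≠ i₁ := ne1b.symm
        have q2 : n ≠ i₂ := ne2b.symm
        have q3 : n ≠ n₁ := neab.symm
        have hc1 : c n = -1 := by
          simp [hc, q1, q2, q3]
        have hle : ε ≤ β n := min_le_right _ _
        simp only [hβ', hc1]; linarith
      · have hc1 : 0 ≤ c n := by
          simp only [hc, e1, e2, if_false]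
          split_ifs <;> norm_num
        exact add_nonneg (hfeas.1 n) (mul_nonneg hεpos.le hc1)
  have hsum : (∑ n, β' n) = 1 := by
    have hc0 : (∑ n, c n) = 0 := by
      have h := key (fun _ => 1)
      simpa using h
    simp only [hβ', Finset.sum_add_distrib, ← Finset.mul_sum, hc0, mul_zero,
      add_zero, hfeas.2.1]
  have hmom : (∑ n : Fin N, ((n : ℕ) + 1 : ℝ) * β' n) ≤ ms := by
    have hcm : (∑ n : Fin N, c n * (((n : ℕ) : ℝ) + 1)) = 0 := by
      rw [key (fun n => ((n : ℕ) : ℝ) + 1)]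
      simp only [hv1, hv2]
      have hB1 : 1 ≤ (n₂ : ℕ) := by omega
      push_cast [Nat.cast_sub hB1]
      ring
    have step : (∑ n : Fin N, ((n : ℕ) + 1 : ℝ) * β' n)
        = (∑ n : Fin N, ((n : ℕ) + 1 : ℝ) * β n) + ε * (∑ n : Fin N, c n * (((n : ℕ) : ℝ) + 1)) := by
      rw [Finset.mul_sum, ← Finset.sum_add_distrib]
      apply Finset.sum_congr rfl
      intro n _
      simp only [hβ']; ring
    rw [step, hcm, mul_zero, add_zero]
    exact hfeas.2.2
  have hfe' : RFeasible N ms β' := ⟨hnonneg, hsum, hmom⟩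
  -- objective strictly decreases
  have hobj : RObj N K β' = RObj N K β
      + ε * (Dt K ((n₁ : ℕ) + 2) + Dt K (n₂ : ℕ) - Dt K ((n₁ : ℕ) + 1) - Dt K ((n₂ : ℕ) + 1)) := by
    have hcD : (∑ n : Fin N, c n * Dt K ((n : ℕ) + 1))
        = Dt K ((n₁ : ℕ) + 2) + Dt K (n₂ : ℕ) - Dt K ((n₁ : ℕ) + 1) - Dt K ((n₂ : ℕ) + 1) := by
      rw [key (fun n => Dt K ((n : ℕ) + 1))]
      simp only [hv1, hv2]
      have e1 : (n₁ : ℕ) + 1 + 1 = (n₁ : ℕ) + 2 := by omega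
      have e2 : (n₂ : ℕ) - 1 + 1 = (n₂ : ℕ) := by omega
      rw [e1, e2]
    rw [← hcD, RObj, RObj, Finset.mul_sum, ← Finset.sum_add_distrib]
    apply Finset.sum_congr rfl
    intro n _
    simp only [hβ']; ring
  have hdelta : Dt K ((n₁ : ℕ) + 2) + Dt K (n₂ : ℕ) - Dt K ((n₁ : ℕ) + 1) - Dt K ((n₂ : ℕ) + 1) < 0 := by
    have hanti := d_strictAnti K hK
    have hlt' : (n₁ : ℕ) < (n₂ : ℕ) - 1 := by omega
    have := hanti hlt'
    simp only at this
    have e1 : (n₂ : ℕ) - 1 + 1 = (n₂ : ℕ) := by omega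
    have e2 : (n₂ : ℕ) - 1 + 2 = (n₂ : ℕ) + 1 := by omega
    rw [e1, e2] at this
    linarith
  have := hopt β' hfe'
  nlinarith [mul_pos hεpos (neg_pos.mpr hdelta)]
end

section
/- Let K ≥ 2, let N ≥ 2, let j be an integer with 1 ≤ j < N, and let m_s be a real number. The unit vector e_j (the vector with β_j = 1 and β_n = 0 for all n ≠ j) is an optimal solution of the relaxed linear program R(m_s) if and only if m_s = j. -/
open Finset

/-- The unit vector with `β_j = 1` and `β_n = 0` for `n ≠ j`. -/
def unitVec (N j : ℕ) : Fin N → ℝ := fun n => if (n : ℕ) + 1 = j then 1 else 0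

noncomputable def gg (K : ℕ) : ℝ → ℝ := fun x => ∑ i ∈ Finset.range K, (1 / x) ^ i

lemma gg_term (i : ℕ) : (fun x : ℝ => (1 / x) ^ i) = fun x : ℝ => x ^ (-(i:ℤ)) := by
  funext x
  simp [one_div, zpow_neg, zpow_natCast, inv_pow]

lemma gg_convex (K : ℕ) : ConvexOn ℝ (Set.Ioi (0:ℝ)) (gg K) := by
  induction K with
  | zero =>
    exact convexOn_const (0:ℝ) (convex_Ioi (0:ℝ))
  | succ k ih =>
      have h : ConvexOn ℝ (Set.Ioi (0:ℝ)) (fun x : ℝ => (1 / x) ^ k) := by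
        rw [gg_term k]; exact convexOn_zpow _
      have := ih.add h
      have e : gg (k+1) = gg k + fun x : ℝ => (1 / x) ^ k := by
        funext x
        simp [gg, Finset.sum_range_succ]
      rw [e]; exact this

lemma gg_anti (K : ℕ) {x y : ℝ} (hx : 0 < x) (hxy : x ≤ y) : gg K y ≤ gg K x := by
  have hy : 0 < y := lt_of_lt_of_le hx hxy
  apply Finset.sum_le_sum
  intro i _
  apply pow_le_pow_left₀ (by positivity)
  exact one_div_le_one_div_of_le hx hxy

lemma gg_eq_Dt (K n : ℕ) : gg K ((n : ℝ)) = Dt K n := by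
  simp [gg, Dt]

lemma unit_sum (N j : ℕ) (hj1 : 1 ≤ j) (hjN : j ≤ N) (f : Fin N → ℝ) :
    ∑ n : Fin N, unitVec N j n * f n = f ⟨j - 1, by omega⟩ := by
  rw [Finset.sum_eq_single (⟨j - 1, by omega⟩ : Fin N)]
  · have : (j - 1) + 1 = j := by omega
    simp [unitVec, this]
  · intro b _ hb
    have : (b : ℕ) + 1 ≠ j := by
      intro h
      apply hb
      apply Fin.ext
      simp only []
      omega
    simp [unitVec, this]
  · simp

lemma Dt_strict (K j : ℕ) (hK : 2 ≤ K) (hj : 1 ≤ j) : Dt K (j+1) < Dt K j := by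
  have hj0 : (0:ℝ) < (j:ℝ) := by exact_mod_cast hj
  unfold Dt
  apply Finset.sum_lt_sum
  · intro i _
    apply pow_le_pow_left₀ (by positivity)
    apply one_div_le_one_div_of_le hj0
    push_cast; linarith
  · refine ⟨1, Finset.mem_range.2 (by omega), ?_⟩
    simp only [pow_one]
    apply one_div_lt_one_div_of_lt hj0
    push_cast; linarith

theorem unit_optimal_iff (N K : ℕ) (hN : 2 ≤ N) (hK : 2 ≤ K)
    (j : ℕ) (hj1 : 1 ≤ j) (hjN : j < N) (ms : ℝ) :
    (RFeasible N ms (unitVec N j) ∧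
      ∀ β : Fin N → ℝ, RFeasible N ms β → RObj N K (unitVec N j) ≤ RObj N K β)
    ↔ ms = (j : ℝ) := by
  have hj1' : (1:ℝ) ≤ (j:ℝ) := by exact_mod_cast hj1
  have hjcast : ((j - 1 : ℕ) : ℝ) + 1 = (j : ℝ) := by
    have : (j - 1) + 1 = j := by omega
    exact_mod_cast congrArg (Nat.cast : ℕ → ℝ) this
  -- basic sums for unitVec j
  have hu_sum : (∑ n, unitVec N j n) = 1 := by
    have := unit_sum N j hj1 (le_of_lt hjN) (fun _ => (1:ℝ))
    simpa using this
  have hu_wt : (∑ n : Fin N, ((n : ℕ) + 1 : ℝ) * unitVec N j n) = (j : ℝ) := by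
    have := unit_sum N j hj1 (le_of_lt hjN) (fun n => ((n : ℕ) + 1 : ℝ))
    calc (∑ n : Fin N, ((n : ℕ) + 1 : ℝ) * unitVec N j n)
        = ∑ n : Fin N, unitVec N j n * ((n : ℕ) + 1 : ℝ) := by
          simp [mul_comm]
      _ = (j : ℝ) := by rw [this]; exact hjcast
  have hu_obj : RObj N K (unitVec N j) = Dt K j := by
    unfold RObj
    have := unit_sum N j hj1 (le_of_lt hjN) (fun n => Dt K ((n : ℕ) + 1))
    calc (∑ n : Fin N, unitVec N j n * Dt K ((n : ℕ) + 1))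
          = Dt K ((j - 1) + 1) := this
      _ = Dt K j := by congr 1; omega
  constructor
  · rintro ⟨⟨_, _, hle⟩, hopt⟩
    rw [hu_wt] at hle
    by_contra hne
    have hlt : (j : ℝ) < ms := lt_of_le_of_ne hle (fun h => hne h.symm)
    set t : ℝ := min (ms - (j:ℝ)) 1 with ht_def
    have ht0 : 0 < t := lt_min (by linarith) one_pos
    have ht1 : t ≤ 1 := min_le_right _ _
    have htms : (j : ℝ) + t ≤ ms := by
      have := min_le_left (ms - (j:ℝ)) 1
      linarith
    -- mixed vector
    set β' : Fin N → ℝ := fun n => (1 - t) * unitVec N j n + t * unitVec N (j+1) n with hβ'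
    have mix : ∀ f : Fin N → ℝ, ∑ n : Fin N, β' n * f n
        = (1 - t) * f ⟨j - 1, by omega⟩ + t * f ⟨j, hjN⟩ := by
      intro f
      have h1 := unit_sum N j hj1 (le_of_lt hjN) f
      have h2 := unit_sum N (j+1) (by omega) hjN f
      have hidx : (⟨(j+1) - 1, by omega⟩ : Fin N) = ⟨j, hjN⟩ := rfl
      calc ∑ n : Fin N, β' n * f n
          = (1 - t) * (∑ n, unitVec N j n * f n)
            + t * (∑ n, unitVec N (j+1) n * f n) := by
            simp only [hβ', add_mul, mul_assoc, Finset.sum_add_distrib, ← Finset.mul_sum]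
        _ = (1 - t) * f ⟨j - 1, by omega⟩ + t * f ⟨j, hjN⟩ := by
            rw [h1, h2, hidx]
    have hfeas' : RFeasible N ms β' := by
      refine ⟨?_, ?_, ?_⟩
      · intro n
        have h1 : (0:ℝ) ≤ unitVec N j n := by unfold unitVec; positivity
        have h2 : (0:ℝ) ≤ unitVec N (j+1) n := by unfold unitVec; positivity
        have := ht0.le
        simp only [hβ']
        nlinarith
      · have := mix (fun _ => (1:ℝ))
        simp only [mul_one] at this
        calc (∑ n, β' n) = ∑ n, β' n * 1 := by simp
          _ = 1 := by rw [mix]; ring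
      · have hw : (∑ n : Fin N, ((n : ℕ) + 1 : ℝ) * β' n)
            = (1 - t) * (((j - 1 : ℕ):ℝ) + 1) + t * ((j:ℝ) + 1) := by
          calc (∑ n : Fin N, ((n : ℕ) + 1 : ℝ) * β' n)
              = ∑ n : Fin N, β' n * (((n : ℕ) : ℝ) + 1) := by simp [mul_comm]
            _ = _ := mix (fun n => ((n : ℕ) : ℝ) + 1)
        rw [hw, hjcast]
        nlinarith
    have hobj' : RObj N K β' = (1 - t) * Dt K j + t * Dt K (j+1) := by
      unfold RObj
      rw [mix (fun n => Dt K ((n : ℕ) + 1))]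
      have e1 : (j - 1) + 1 = j := by omega
      show (1 - t) * Dt K ((j - 1) + 1) + t * Dt K (j + 1) = _
      rw [e1]
    have hlt2 : RObj N K β' < Dt K j := by
      rw [hobj']
      have := Dt_strict K j hK hj1
      nlinarith
    have := hopt β' hfeas'
    rw [hu_obj] at this
    linarith
  · intro hms
    subst hms
    refine ⟨⟨?_, hu_sum, le_of_eq hu_wt⟩, ?_⟩
    · intro n; unfold unitVec; positivity
    · rintro β ⟨hpos, hsum1, hle⟩
      rw [hu_obj]
      set m : ℝ := ∑ n : Fin N, ((n : ℕ) + 1 : ℝ) * β n with hm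
      have hm1 : (1:ℝ) ≤ m := by
        rw [hm, ← hsum1]
        apply Finset.sum_le_sum
        intro n _
        have hn0 : (0:ℝ) ≤ ((n:ℕ):ℝ) := Nat.cast_nonneg _
        have : (1:ℝ) ≤ ((n:ℕ):ℝ) + 1 := by linarith
        nlinarith [hpos n]
      have hjensen : gg K m ≤ ∑ n : Fin N, β n • gg K (((n : ℕ) : ℝ) + 1) := by
        have := (gg_convex K).map_sum_le (t := Finset.univ) (w := β)
          (p := fun n : Fin N => ((n : ℕ) : ℝ) + 1)
          (fun i _ => hpos i) (by simpa using hsum1)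
          (fun i _ => by simp only [Set.mem_Ioi]; positivity)
        have hms : (∑ i : Fin N, β i • (((i : ℕ) : ℝ) + 1)) = m := by
          rw [hm]; simp [smul_eq_mul, mul_comm]
        rwa [hms] at this
      have hgd : ∀ n : Fin N, gg K (((n : ℕ) : ℝ) + 1) = Dt K ((n:ℕ) + 1) := by
        intro n
        have := gg_eq_Dt K ((n:ℕ) + 1)
        rw [← this]
        push_cast
        ring_nf
      have h1 : gg K m ≤ RObj N K β := by
        refine le_trans hjensen ?_
        unfold RObj
        apply le_of_eq
        apply Finset.sum_congr rfl
        intro n _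
        rw [smul_eq_mul, hgd n]
      have h2 : Dt K j ≤ gg K m := by
        rw [← gg_eq_Dt K j]
        exact gg_anti K (by linarith) hle
      linarith
end

section
/- Let K ≥ 2, let j be an integer with 2 ≤ j ≤ N, and let m_s be a real number with j − 1 < m_s < j. Then the vector β* defined by β*_{j−1} = j − m_s, β*_j = m_s − (j − 1), and β*_n = 0 for all other n, is the unique optimal solution of the relaxed linear program R(m_s): β* is feasible, every feasible β has objective value at least that of β*, and any feasible β achieving the same objective value equals β*. -/
open Finset

-- strict midpoint convexity
lemma Dt_midpoint (K m : ℕ) (hK : 2 ≤ K) (hm : 1 ≤ m) :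
    2 * Dt K (m+1) < Dt K m + Dt K (m+2) := by
  unfold Dt
  rw [Finset.mul_sum, ← Finset.sum_add_distrib]
  apply Finset.sum_lt_sum
  · intro i _
    have hm0 : (0:ℝ) < (m:ℝ) := by exact_mod_cast hm
    have h1 : (0:ℝ) < (m:ℝ) + 1 := by linarith
    have h2 : (0:ℝ) < (m:ℝ) + 2 := by linarith
    push_cast
    set a : ℝ := 1 / (m:ℝ) with ha
    set b : ℝ := 1 / ((m:ℝ) + 2) with hb
    set c : ℝ := 1 / ((m:ℝ) + 1) with hc
    have hapos : 0 ≤ a := by positivity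
    have hbpos : 0 ≤ b := by positivity
    have hcpos : 0 ≤ c := by positivity
    have hab : c ≤ (a + b) / 2 := by
      rw [ha, hb, hc, div_add_div _ _ (ne_of_gt hm0) (ne_of_gt h2), div_div,
        div_le_div_iff₀ h1 (by positivity)]
      nlinarith
    have key : ((a + b) / 2) ^ i ≤ (a ^ i + b ^ i) / 2 := by
      have := (convexOn_pow (𝕜 := ℝ) i).2 (Set.mem_Ici.2 hapos) (Set.mem_Ici.2 hbpos)
        (by norm_num : (0:ℝ) ≤ 1/2) (by norm_num : (0:ℝ) ≤ 1/2) (by norm_num)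
      simp only [smul_eq_mul] at this
      calc ((a + b) / 2) ^ i = (1/2 * a + 1/2 * b) ^ i := by ring_nf
        _ ≤ 1/2 * a ^ i + 1/2 * b ^ i := this
        _ = (a ^ i + b ^ i) / 2 := by ring
    have : c ^ i ≤ ((a + b) / 2) ^ i := pow_le_pow_left₀ hcpos hab i
    linarith
  · refine ⟨1, Finset.mem_range.2 (by omega), ?_⟩
    have hm0 : (0:ℝ) < (m:ℝ) := by exact_mod_cast hm
    push_cast
    rw [pow_one, pow_one, pow_one, div_add_div _ _ (ne_of_gt hm0)
      (by positivity : ((m:ℝ)+2) ≠ 0), mul_one_div,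
      div_lt_div_iff₀ (by positivity) (by positivity)]
    nlinarith

/-- first difference -/
noncomputable def dd (K m : ℕ) : ℝ := Dt K (m+1) - Dt K m

lemma dd_lt_dd (K : ℕ) (hK : 2 ≤ K) : ∀ q p, 1 ≤ p → p < q → dd K p < dd K q := by
  intro q
  induction q with
  | zero => intro p _ h; omega
  | succ q ih =>
    intro p hp hpq
    rcases eq_or_lt_of_le (Nat.lt_succ_iff.mp hpq) with h | h
    · subst h
      have h2 := Dt_midpoint K p hK hp
      unfold dd
      have hpp : p + 1 + 1 = p + 2 := by omega
      rw [hpp]; linarith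
    · have h1 := ih p hp h
      have h2 : dd K q < dd K (q+1) := by
        have hq1 : 1 ≤ q := by omega
        have h3 := Dt_midpoint K q hK hq1
        unfold dd
        have : q + 1 + 1 = q + 2 := by omega
        rw [this]; linarith
      linarith

lemma dd_neg (K J : ℕ) (hK : 2 ≤ K) (hJ : 1 ≤ J) : dd K J < 0 := by
  unfold dd Dt
  rw [sub_neg]
  apply Finset.sum_lt_sum
  · intro i _
    apply pow_le_pow_left₀ (by positivity)
    apply div_le_div_of_nonneg_left (by norm_num) (by exact_mod_cast hJ)
    push_cast; linarith
  · refine ⟨1, Finset.mem_range.2 (by omega), ?_⟩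
    rw [pow_one, pow_one]
    apply div_lt_div_of_pos_left (by norm_num) (by exact_mod_cast hJ)
    push_cast; linarith

/-- above-secant, right side: n = J+1+t -/
lemma secant_up (K J : ℕ) (hK : 2 ≤ K) (hJ : 1 ≤ J) :
    ∀ t : ℕ, Dt K (J+1) + dd K J * t ≤ Dt K (J+1+t) ∧ (1 ≤ t → Dt K (J+1) + dd K J * t < Dt K (J+1+t)) := by
  intro t
  induction t with
  | zero => simp
  | succ t ih =>
    have hd : dd K J < dd K (J+1+t) := dd_lt_dd K hK (J+1+t) J hJ (by omega)
    have heq : Dt K (J+1+(t+1)) = Dt K (J+1+t) + dd K (J+1+t) := by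
      unfold dd; ring_nf
    constructor
    · push_cast; rw [heq]; push_cast at ih; nlinarith [ih.1]
    · intro _; push_cast; rw [heq]; push_cast at ih; nlinarith [ih.1]

/-- above-secant, left side: n = J - t -/
lemma secant_down (K J : ℕ) (hK : 2 ≤ K) (hJ : 1 ≤ J) :
    ∀ t : ℕ, t ≤ J - 1 → Dt K J - dd K J * t ≤ Dt K (J-t) ∧ (1 ≤ t → Dt K J - dd K J * t < Dt K (J-t)) := by
  intro t
  induction t with
  | zero => simp
  | succ t ih =>
    intro ht
    have ht' : t ≤ J - 1 := by omega
    obtain ⟨ih1, _⟩ := ih ht'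
    have h1 : 1 ≤ J - (t+1) := by omega
    have hd : dd K (J-(t+1)) < dd K J := dd_lt_dd K hK J (J-(t+1)) h1 (by omega)
    have heq : Dt K (J-t) = Dt K (J-(t+1)) + dd K (J-(t+1)) := by
      unfold dd
      have : J - (t+1) + 1 = J - t := by omega
      rw [this]; ring
    have key : Dt K J - dd K J * ((t:ℝ)+1) < Dt K (J-(t+1)) := by
      have : Dt K (J-(t+1)) = Dt K (J-t) - dd K (J-(t+1)) := by rw [heq]; ring
      rw [this]; nlinarith
    have key' : Dt K J - dd K J * ((t+1:ℕ):ℝ) < Dt K (J-(t+1)) := by push_cast; exact key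
    exact ⟨le_of_lt key', fun _ => key'⟩

lemma secant_ge (K J : ℕ) (hK : 2 ≤ K) (hJ : 1 ≤ J) (n : ℕ) (hn : 1 ≤ n) :
    Dt K J + dd K J * ((n:ℝ) - J) ≤ Dt K n ∧
    (n ≠ J → n ≠ J + 1 → Dt K J + dd K J * ((n:ℝ) - J) < Dt K n) := by
  rcases le_or_gt n J with h | h
  · -- n ≤ J, use secant_down with t = J - n
    set t := J - n with ht
    have htJ : t ≤ J - 1 := by omega
    have hJn : J - t = n := by omega
    have hcast : ((n:ℝ) - J) = -(t:ℝ) := by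
      have : (J:ℝ) = (n:ℝ) + t := by push_cast; rw [ht]; push_cast [Nat.cast_sub h]; ring
      rw [this]; ring
    obtain ⟨h1, h2⟩ := secant_down K J hK hJ t htJ
    rw [hJn] at h1 h2
    constructor
    · rw [hcast]; linarith
    · intro hne _
      have hne' : 1 ≤ t := by omega
      rw [hcast]
      have := h2 hne'
      linarith
  · -- n ≥ J+1, use secant_up with t = n - (J+1)
    set t := n - (J+1) with ht
    have hJn : J + 1 + t = n := by omega
    have hcast : ((n:ℝ) - J) = 1 + (t:ℝ) := by
      have : (n:ℝ) = (J:ℝ) + 1 + t := by rw [← hJn]; push_cast; ring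
      rw [this]; ring
    have hdd : Dt K J + dd K J * (1 + (t:ℝ)) = Dt K (J+1) + dd K J * t := by
      unfold dd; ring
    obtain ⟨h1, h2⟩ := secant_up K J hK hJ t
    rw [hJn] at h1 h2
    constructor
    · rw [hcast, hdd]; exact h1
    · intro _ hne
      have hne' : 1 ≤ t := by omega
      rw [hcast, hdd]; exact h2 hne'

/-- The vector `β*` with `β*_{j-1} = j - m_s`, `β*_j = m_s - (j-1)`, and all other
entries zero (recall `β n` stands for `β_{n+1}`). -/
noncomputable def betaStar (N j : ℕ) (ms : ℝ) : Fin N → ℝ := fun n =>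
  if (n : ℕ) + 2 = j then (j : ℝ) - ms
  else if (n : ℕ) + 1 = j then ms - ((j : ℝ) - 1)
  else 0


lemma dd_def (K m : ℕ) : dd K m = Dt K (m+1) - Dt K m := rfl

theorem relaxed_unique_optimum (N K : ℕ) (hK : 2 ≤ K)
    (j : ℕ) (hj2 : 2 ≤ j) (hjN : j ≤ N)
    (ms : ℝ) (hlo : (j : ℝ) - 1 < ms) (hhi : ms < (j : ℝ)) :
    RFeasible N ms (betaStar N j ms) ∧
    (∀ β : Fin N → ℝ, RFeasible N ms β → RObj N K (betaStar N j ms) ≤ RObj N K β) ∧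
    (∀ β : Fin N → ℝ, RFeasible N ms β →
      RObj N K β = RObj N K (betaStar N j ms) → β = betaStar N j ms) := by
  set J := j - 1 with hJdef
  have hJ : 1 ≤ J := by omega
  have hjJ : j = J + 1 := by omega
  have hJR : (J:ℝ) = (j:ℝ) - 1 := by
    rw [hJdef]; push_cast [Nat.cast_sub (by omega : 1 ≤ j)]; ring
  set i₁ : Fin N := ⟨j - 2, by omega⟩ with hi₁
  set i₂ : Fin N := ⟨j - 1, by omega⟩ with hi₂
  have hne12 : i₁ ≠ i₂ := by
    simp only [hi₁, hi₂, ne_eq, Fin.mk.injEq]; omega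
  have hbeq : betaStar N j ms = fun n =>
      (if n = i₁ then (j:ℝ) - ms else 0) + (if n = i₂ then ms - ((j:ℝ) - 1) else 0) := by
    funext n
    simp only [betaStar, hi₁, hi₂, Fin.ext_iff]
    by_cases h1 : (n:ℕ) + 2 = j
    · rw [if_pos h1, if_pos (by omega), if_neg (by omega)]; ring
    · rw [if_neg h1]
      by_cases h2 : (n:ℕ) + 1 = j
      · rw [if_pos h2, if_neg (by omega), if_pos (by omega)]; ring
      · rw [if_neg h2, if_neg (by omega), if_neg (by omega)]; ring
  have hc1 : ((i₁:ℕ):ℝ) = (j:ℝ) - 2 := by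
    simp only [hi₁]; push_cast [Nat.cast_sub hj2]; ring
  have hc2 : ((i₂:ℕ):ℝ) = (j:ℝ) - 1 := by
    simp only [hi₂]; push_cast [Nat.cast_sub (by omega : 1 ≤ j)]; ring
  -- sums of betaStar
  have hsum : (∑ n, betaStar N j ms n) = 1 := by
    rw [hbeq, Finset.sum_add_distrib, Finset.sum_ite_eq' univ i₁ (fun _ => (j:ℝ) - ms),
      Finset.sum_ite_eq' univ i₂ (fun _ => ms - ((j:ℝ) - 1))]
    simp only [Finset.mem_univ, if_pos]
    ring
  have hwsum : (∑ n : Fin N, ((n : ℕ) + 1 : ℝ) * betaStar N j ms n) = ms := by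
    rw [hbeq]
    simp only [mul_add, mul_ite, mul_zero]
    rw [Finset.sum_add_distrib,
      Finset.sum_ite_eq' univ i₁ (fun n => (((n:ℕ):ℝ) + 1) * ((j:ℝ) - ms)),
      Finset.sum_ite_eq' univ i₂ (fun n => (((n:ℕ):ℝ) + 1) * (ms - ((j:ℝ) - 1)))]
    simp only [Finset.mem_univ, if_pos]
    rw [hc1, hc2]; ring
  have hfeasStar : RFeasible N ms (betaStar N j ms) := by
    refine ⟨?_, hsum, by rw [hwsum]⟩
    intro n
    rw [hbeq]; dsimp only
    split_ifs <;> linarith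
  have e1 : (↑i₁ + 1 : ℕ) = J := by show j - 2 + 1 = J; omega
  have e2 : (↑i₂ + 1 : ℕ) = J + 1 := by show j - 1 + 1 = J + 1; omega
  have hobjStar : RObj N K (betaStar N j ms) = Dt K J + dd K J * (ms - J) := by
    unfold RObj
    rw [hbeq]
    simp only [add_mul, ite_mul, zero_mul]
    rw [Finset.sum_add_distrib,
      Finset.sum_ite_eq' univ i₁ (fun n => ((j:ℝ) - ms) * Dt K ((n:ℕ)+1)),
      Finset.sum_ite_eq' univ i₂ (fun n => (ms - ((j:ℝ) - 1)) * Dt K ((n:ℕ)+1))]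
    simp only [Finset.mem_univ, if_pos]
    rw [e1, e2, dd_def, hJR]; ring
  have hdd : dd K J < 0 := dd_neg K J hK hJ
  -- key decomposition for any β
  have expand : ∀ β : Fin N → ℝ,
      (∑ n : Fin N, β n * (Dt K J + dd K J * ((((n:ℕ):ℝ) + 1) - J)))
      = (Dt K J - dd K J * (J:ℝ)) * (∑ n, β n)
        + dd K J * (∑ n : Fin N, (((n:ℕ):ℝ) + 1) * β n) := by
    intro β
    rw [Finset.mul_sum, Finset.mul_sum, ← Finset.sum_add_distrib]
    exact Finset.sum_congr rfl fun n _ => by ring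
  have hterm : ∀ β : Fin N → ℝ, (∀ n, 0 ≤ β n) → ∀ n : Fin N,
      β n * (Dt K J + dd K J * ((((n:ℕ):ℝ) + 1) - J)) ≤ β n * Dt K ((n:ℕ)+1) := by
    intro β hpos n
    apply mul_le_mul_of_nonneg_left _ (hpos n)
    have := (secant_ge K J hK hJ ((n:ℕ)+1) (by omega)).1
    push_cast at this
    convert this using 3 <;> push_cast <;> ring
  have htermStrict : ∀ n : Fin N, n ≠ i₁ → n ≠ i₂ →
      Dt K J + dd K J * ((((n:ℕ):ℝ) + 1) - J) < Dt K ((n:ℕ)+1) := by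
    intro n h1 h2
    have hn1 : (n:ℕ) + 1 ≠ J := by
      intro h; apply h1; simp only [hi₁, Fin.ext_iff]; show (n:ℕ) = j - 2; omega
    have hn2 : (n:ℕ) + 1 ≠ J + 1 := by
      intro h; apply h2; simp only [hi₂, Fin.ext_iff]; show (n:ℕ) = j - 1; omega
    have := (secant_ge K J hK hJ ((n:ℕ)+1) (by omega)).2 hn1 hn2
    push_cast at this
    convert this using 3 <;> push_cast <;> ring
  refine ⟨hfeasStar, ?_, ?_⟩
  · -- optimality
    intro β ⟨hpos, hsum1, hws⟩
    have h1 : (∑ n : Fin N, β n * (Dt K J + dd K J * ((((n:ℕ):ℝ) + 1) - J))) ≤ RObj N K β :=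
      Finset.sum_le_sum fun n _ => hterm β hpos n
    rw [expand β, hsum1, mul_one] at h1
    have h2 : dd K J * ms ≤ dd K J * (∑ n : Fin N, (((n:ℕ):ℝ) + 1) * β n) := by
      apply mul_le_mul_of_nonpos_left hws (le_of_lt hdd)
    rw [hobjStar]
    calc Dt K J + dd K J * (ms - J) = (Dt K J - dd K J * J) + dd K J * ms := by ring
      _ ≤ (Dt K J - dd K J * J) + dd K J * (∑ n : Fin N, (((n:ℕ):ℝ) + 1) * β n) := by linarith
      _ ≤ RObj N K β := h1
  · -- uniqueness
    intro β ⟨hpos, hsum1, hws⟩ hEq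
    set S := (∑ n : Fin N, (((n:ℕ):ℝ) + 1) * β n) with hS
    have h1 : (∑ n : Fin N, β n * (Dt K J + dd K J * ((((n:ℕ):ℝ) + 1) - J))) ≤ RObj N K β :=
      Finset.sum_le_sum fun n _ => hterm β hpos n
    rw [expand β, hsum1, mul_one] at h1
    have h2 : dd K J * ms ≤ dd K J * S := mul_le_mul_of_nonpos_left hws (le_of_lt hdd)
    rw [hobjStar] at hEq
    rw [hEq] at h1
    -- both inequalities are tight
    have hSms : S = ms := by
      have hle : dd K J * S ≤ dd K J * ms := by nlinarith
      have : dd K J * S = dd K J * ms := le_antisymm hle h2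
      exact mul_left_cancel₀ (ne_of_lt hdd) this
    have hTight : (∑ n : Fin N, (β n * Dt K ((n:ℕ)+1)
        - β n * (Dt K J + dd K J * ((((n:ℕ):ℝ) + 1) - J)))) = 0 := by
      rw [Finset.sum_sub_distrib, expand β, hsum1, mul_one, ← hS, hSms]
      have hro : RObj N K β = (∑ n : Fin N, β n * Dt K ((n:ℕ)+1)) := rfl
      rw [← hro, hEq]; ring
    have hzero : ∀ n : Fin N, n ≠ i₁ → n ≠ i₂ → β n = 0 := by
      intro n hn1 hn2
      have hall := (Finset.sum_eq_zero_iff_of_nonneg (fun n _ => by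
        have := hterm β hpos n; linarith)).mp hTight n (Finset.mem_univ n)
      have hpos' := htermStrict n hn1 hn2
      rcases (hpos n).lt_or_eq with h | h
      · exfalso
        have : β n * (Dt K J + dd K J * ((((n:ℕ):ℝ) + 1) - J)) < β n * Dt K ((n:ℕ)+1) :=
          mul_lt_mul_of_pos_left hpos' h
        linarith
      · exact h.symm
    -- compute the two coordinates
    have hsum2 : β i₁ + β i₂ = 1 := by
      rw [← hsum1, ← Finset.sum_pair hne12]
      apply Finset.sum_subset (Finset.subset_univ _)
      intro x _ hx
      simp only [Finset.mem_insert, Finset.mem_singleton, not_or] at hx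
      exact hzero x hx.1 hx.2
    have hwsum2 : ((j:ℝ) - 1) * β i₁ + (j:ℝ) * β i₂ = ms := by
      rw [← hSms, hS]
      symm
      have : ∀ x : Fin N, x ∉ ({i₁, i₂} : Finset (Fin N)) → (((x:ℕ):ℝ) + 1) * β x = 0 := by
        intro x hx
        simp only [Finset.mem_insert, Finset.mem_singleton, not_or] at hx
        rw [hzero x hx.1 hx.2, mul_zero]
      rw [← Finset.sum_subset (Finset.subset_univ ({i₁, i₂} : Finset (Fin N)))
        (fun x _ hx => this x hx), Finset.sum_pair hne12, hc1, hc2]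
      ring
    have hb1 : β i₁ = (j:ℝ) - ms := by linear_combination (j:ℝ) * hsum2 - hwsum2
    have hb2 : β i₂ = ms - ((j:ℝ) - 1) := by linear_combination hwsum2 - ((j:ℝ) - 1) * hsum2
    funext n
    rw [hbeq]; dsimp only
    by_cases h1 : n = i₁
    · rw [if_pos h1, if_neg (by rw [h1]; exact hne12), h1, hb1]; ring
    · rw [if_neg h1]
      by_cases h2 : n = i₂
      · rw [if_pos h2, h2, hb2]; ring
      · rw [if_neg h2, hzero n h1 h2]; ring
end

section
/- Let N ≥ 2 and let i be an integer with 1 ≤ i ≤ N − 1. Let m = (m_1, …, m_N) satisfy 0 ≤ m_n ≤ 1 for all n and i < m_s < i + 1, where m_s = ∑_{n=1}^N m_n. Then there exist nonnegative real numbers α_S, indexed by the subsets S ⊆ {1, …, N} with |S| = i or |S| = i + 1, such that: (a) ∑_{S : n ∈ S} α_S = m_n for every n ∈ {1, …, N}; (b) ∑_{S : |S| = i} α_S = i + 1 − m_s; and (c) ∑_{S : |S| = i+1} α_S = m_s − i. -/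
open Finset

private lemma aux_placement (N i : ℕ) :
    ∀ k : ℕ, ∀ m : Fin N → ℝ,
      (Finset.univ.filter fun n => m n ≠ 0 ∧ m n ≠ 1).card ≤ k →
      (∀ n, 0 ≤ m n ∧ m n ≤ 1) →
      (i : ℝ) < ∑ n, m n → ∑ n, m n < (i : ℝ) + 1 →
      ∃ α : Finset (Fin N) → ℝ,
        (∀ S : Finset (Fin N), 0 ≤ α S) ∧
        (∀ S : Finset (Fin N), S.card ≠ i ∧ S.card ≠ i + 1 → α S = 0) ∧
        (∀ n : Fin N,
          (∑ S ∈ Finset.univ.filter (fun S : Finset (Fin N) => n ∈ S), α S) = m n) ∧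
        (∑ S ∈ Finset.univ.filter (fun S : Finset (Fin N) => S.card = i), α S)
          = (i : ℝ) + 1 - ∑ n, m n ∧
        (∑ S ∈ Finset.univ.filter (fun S : Finset (Fin N) => S.card = i + 1), α S)
          = (∑ n, m n) - (i : ℝ) := by
  intro k
  induction k with
  | zero =>
    intro m hcard hm hlo hhi
    exfalso
    have hF : (Finset.univ.filter fun n => m n ≠ 0 ∧ m n ≠ 1) = ∅ :=
      Finset.card_eq_zero.mp (Nat.le_zero.mp hcard)
    have h01 : ∀ n, m n = 0 ∨ m n = 1 := by
      intro n
      by_contra h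
      push_neg at h
      have : n ∈ (Finset.univ.filter fun n => m n ≠ 0 ∧ m n ≠ 1) := by
        simp [h.1, h.2]
      simp [hF] at this
    have hsum : ∑ n, m n = ((Finset.univ.filter fun n => m n = 1).card : ℝ) := by
      rw [← Finset.sum_boole]
      exact Finset.sum_congr rfl fun n _ => by rcases h01 n with h | h <;> simp [h]
    rw [hsum] at hlo hhi
    have h1 : i < (Finset.univ.filter fun n => m n = 1).card := by exact_mod_cast hlo
    have h2 : (Finset.univ.filter fun n => m n = 1).card < i + 1 := by exact_mod_cast hhi
    omega
  | succ k ih =>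
    intro m hcard hm hlo hhi
    by_cases hk : (Finset.univ.filter fun n => m n ≠ 0 ∧ m n ≠ 1).card ≤ k
    · exact ih m hk hm hlo hhi
    push_neg at hk
    by_cases h2 : 2 ≤ (Finset.univ.filter fun n => m n ≠ 0 ∧ m n ≠ 1).card
    · -- at least two fractional coordinates: split into two vectors with fewer
      obtain ⟨j, hjmem, l, hlmem, hjl⟩ := Finset.one_lt_card.mp h2
      simp only [Finset.mem_filter, Finset.mem_univ, true_and] at hjmem hlmem
      have hj0 : 0 < m j := lt_of_le_of_ne (hm j).1 (Ne.symm hjmem.1)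
      have hj1 : m j < 1 := lt_of_le_of_ne (hm j).2 hjmem.2
      have hl0 : 0 < m l := lt_of_le_of_ne (hm l).1 (Ne.symm hlmem.1)
      have hl1 : m l < 1 := lt_of_le_of_ne (hm l).2 hlmem.2
      set ε₁ := min (1 - m j) (m l) with hε₁def
      set ε₂ := min (m j) (1 - m l) with hε₂def
      have hε₁pos : 0 < ε₁ := lt_min (by linarith) hl0
      have hε₂pos : 0 < ε₂ := lt_min hj0 (by linarith)
      have hε₁a : ε₁ ≤ 1 - m j := min_le_left _ _
      have hε₁b : ε₁ ≤ m l := min_le_right _ _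
      have hε₂a : ε₂ ≤ m j := min_le_left _ _
      have hε₂b : ε₂ ≤ 1 - m l := min_le_right _ _
      set m₁ : Fin N → ℝ :=
        fun n => m n + ((if n = j then ε₁ else 0) + (if n = l then -ε₁ else 0)) with hm₁def
      set m₂ : Fin N → ℝ :=
        fun n => m n + ((if n = j then -ε₂ else 0) + (if n = l then ε₂ else 0)) with hm₂def
      have hm₁j : m₁ j = m j + ε₁ := by
        simp [hm₁def, hjl]
      have hm₁l : m₁ l = m l - ε₁ := by
        simp [hm₁def, (Ne.symm hjl : l ≠ j), sub_eq_add_neg]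
      have hm₁o : ∀ n, n ≠ j → n ≠ l → m₁ n = m n := by
        intro n nj nl; simp [hm₁def, nj, nl]
      have hm₂j : m₂ j = m j - ε₂ := by
        simp [hm₂def, hjl, sub_eq_add_neg]
      have hm₂l : m₂ l = m l + ε₂ := by
        simp [hm₂def, (Ne.symm hjl : l ≠ j)]
      have hm₂o : ∀ n, n ≠ j → n ≠ l → m₂ n = m n := by
        intro n nj nl; simp [hm₂def, nj, nl]
      have hs₁ : ∑ n, m₁ n = ∑ n, m n := by
        simp [hm₁def, Finset.sum_add_distrib, Finset.sum_ite_eq']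
      have hs₂ : ∑ n, m₂ n = ∑ n, m n := by
        simp [hm₂def, Finset.sum_add_distrib, Finset.sum_ite_eq']
      have hb₁ : ∀ n, 0 ≤ m₁ n ∧ m₁ n ≤ 1 := by
        intro n
        rcases eq_or_ne n j with h | nj
        · rw [h, hm₁j]; constructor <;> linarith
        rcases eq_or_ne n l with h | nl
        · rw [h, hm₁l]; constructor <;> linarith
        · rw [hm₁o n nj nl]; exact hm n
      have hb₂ : ∀ n, 0 ≤ m₂ n ∧ m₂ n ≤ 1 := by
        intro n
        rcases eq_or_ne n j with h | nj
        · rw [h, hm₂j]; constructor <;> linarith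
        rcases eq_or_ne n l with h | nl
        · rw [h, hm₂l]; constructor <;> linarith
        · rw [hm₂o n nj nl]; exact hm n
      have hsub : ∀ f : Fin N → ℝ, (∀ n, n ≠ j → n ≠ l → f n = m n) →
          (Finset.univ.filter fun n => f n ≠ 0 ∧ f n ≠ 1) ⊆
            (Finset.univ.filter fun n => m n ≠ 0 ∧ m n ≠ 1) := by
        intro f hf n hn
        simp only [Finset.mem_filter, Finset.mem_univ, true_and] at hn ⊢
        rcases eq_or_ne n j with h | nj
        · rw [h]; exact hjmem
        rcases eq_or_ne n l with h | nl
        · rw [h]; exact hlmem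
        rwa [hf n nj nl] at hn
      have hcard₁ : (Finset.univ.filter fun n => m₁ n ≠ 0 ∧ m₁ n ≠ 1).card ≤ k := by
        have hss : (Finset.univ.filter fun n => m₁ n ≠ 0 ∧ m₁ n ≠ 1) ⊂
            (Finset.univ.filter fun n => m n ≠ 0 ∧ m n ≠ 1) := by
          refine (Finset.ssubset_iff_of_subset (hsub m₁ hm₁o)).mpr ?_
          rcases le_total (1 - m j) (m l) with hc | hc
          · have h1 : m₁ j = 1 := by rw [hm₁j, hε₁def, min_eq_left hc]; ring
            exact ⟨j, by simp [hjmem.1, hjmem.2], by simp [h1]⟩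
          · have h1 : m₁ l = 0 := by rw [hm₁l, hε₁def, min_eq_right hc]; ring
            exact ⟨l, by simp [hlmem.1, hlmem.2], by simp [h1]⟩
        have := Finset.card_lt_card hss
        omega
      have hcard₂ : (Finset.univ.filter fun n => m₂ n ≠ 0 ∧ m₂ n ≠ 1).card ≤ k := by
        have hss : (Finset.univ.filter fun n => m₂ n ≠ 0 ∧ m₂ n ≠ 1) ⊂
            (Finset.univ.filter fun n => m n ≠ 0 ∧ m n ≠ 1) := by
          refine (Finset.ssubset_iff_of_subset (hsub m₂ hm₂o)).mpr ?_
          rcases le_total (m j) (1 - m l) with hc | hc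
          · have h1 : m₂ j = 0 := by rw [hm₂j, hε₂def, min_eq_left hc]; ring
            exact ⟨j, by simp [hjmem.1, hjmem.2], by simp [h1]⟩
          · have h1 : m₂ l = 1 := by rw [hm₂l, hε₂def, min_eq_right hc]; ring
            exact ⟨l, by simp [hlmem.1, hlmem.2], by simp [h1]⟩
        have := Finset.card_lt_card hss
        omega
      obtain ⟨α₁, hα₁0, hα₁z, hα₁n, hα₁i, hα₁i1⟩ :=
        ih m₁ hcard₁ hb₁ (by rw [hs₁]; exact hlo) (by rw [hs₁]; exact hhi)
      obtain ⟨α₂, hα₂0, hα₂z, hα₂n, hα₂i, hα₂i1⟩ :=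
        ih m₂ hcard₂ hb₂ (by rw [hs₂]; exact hlo) (by rw [hs₂]; exact hhi)
      have hdenpos : 0 < ε₁ + ε₂ := by linarith
      set c₁ := ε₂ / (ε₁ + ε₂) with hc₁def
      set c₂ := ε₁ / (ε₁ + ε₂) with hc₂def
      have hc₁0 : 0 ≤ c₁ := div_nonneg hε₂pos.le hdenpos.le
      have hc₂0 : 0 ≤ c₂ := div_nonneg hε₁pos.le hdenpos.le
      have hc12 : c₁ + c₂ = 1 := by
        rw [hc₁def, hc₂def, ← add_div, div_eq_one_iff_eq hdenpos.ne']
        ring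
      have hkey : c₁ * ε₁ = c₂ * ε₂ := by
        rw [hc₁def, hc₂def]
        field_simp
      have hmix : ∀ n, c₁ * m₁ n + c₂ * m₂ n = m n := by
        intro n
        rcases eq_or_ne n j with h | nj
        · rw [h, hm₁j, hm₂j]
          linear_combination m j * hc12 + hkey
        rcases eq_or_ne n l with h | nl
        · rw [h, hm₁l, hm₂l]
          linear_combination m l * hc12 - hkey
        · rw [hm₁o n nj nl, hm₂o n nj nl]
          linear_combination m n * hc12
      refine ⟨fun S => c₁ * α₁ S + c₂ * α₂ S, ?_, ?_, ?_, ?_, ?_⟩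
      · intro S
        exact add_nonneg (mul_nonneg hc₁0 (hα₁0 S)) (mul_nonneg hc₂0 (hα₂0 S))
      · intro S hS
        show c₁ * α₁ S + c₂ * α₂ S = 0
        rw [hα₁z S hS, hα₂z S hS]
        ring
      · intro n
        show (∑ S ∈ Finset.univ.filter (fun S : Finset (Fin N) => n ∈ S),
          (c₁ * α₁ S + c₂ * α₂ S)) = m n
        rw [Finset.sum_add_distrib, ← Finset.mul_sum, ← Finset.mul_sum,
          hα₁n n, hα₂n n, hmix n]
      · show (∑ S ∈ Finset.univ.filter (fun S : Finset (Fin N) => S.card = i),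
          (c₁ * α₁ S + c₂ * α₂ S)) = (i : ℝ) + 1 - ∑ n, m n
        rw [Finset.sum_add_distrib, ← Finset.mul_sum, ← Finset.mul_sum,
          hα₁i, hα₂i, hs₁, hs₂]
        linear_combination ((i : ℝ) + 1 - ∑ n, m n) * hc12
      · show (∑ S ∈ Finset.univ.filter (fun S : Finset (Fin N) => S.card = i + 1),
          (c₁ * α₁ S + c₂ * α₂ S)) = (∑ n, m n) - (i : ℝ)
        rw [Finset.sum_add_distrib, ← Finset.mul_sum, ← Finset.mul_sum,
          hα₁i1, hα₂i1, hs₁, hs₂]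
        linear_combination ((∑ n, m n) - (i : ℝ)) * hc12
    · -- exactly one fractional coordinate
      push_neg at h2
      have hc1 : (Finset.univ.filter fun n => m n ≠ 0 ∧ m n ≠ 1).card = 1 := by omega
      obtain ⟨j, hjF⟩ := Finset.card_eq_one.mp hc1
      have hj : m j ≠ 0 ∧ m j ≠ 1 := by
        have : j ∈ (Finset.univ.filter fun n => m n ≠ 0 ∧ m n ≠ 1) := by
          rw [hjF]; exact Finset.mem_singleton_self j
        simpa using this
      have hj0 : 0 < m j := lt_of_le_of_ne (hm j).1 (Ne.symm hj.1)
      have hj1 : m j < 1 := lt_of_le_of_ne (hm j).2 hj.2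
      have h01 : ∀ n, n ≠ j → m n = 0 ∨ m n = 1 := by
        intro n hn
        by_contra h
        push_neg at h
        have : n ∈ (Finset.univ.filter fun n => m n ≠ 0 ∧ m n ≠ 1) := by
          simp [h.1, h.2]
        rw [hjF, Finset.mem_singleton] at this
        exact hn this
      set T := Finset.univ.filter fun n => m n = 1 with hTdef
      have hjT : j ∉ T := by simp [hTdef, hj.2]
      have hsum : ∑ n, m n = (T.card : ℝ) + m j := by
        rw [← Finset.sum_erase_add Finset.univ m (Finset.mem_univ j)]
        congr 1
        have h1 : ∑ n ∈ Finset.univ.erase j, m n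
            = ∑ n ∈ Finset.univ.erase j, (if m n = 1 then (1 : ℝ) else 0) := by
          refine Finset.sum_congr rfl fun n hn => ?_
          rcases h01 n (Finset.mem_erase.mp hn).1 with h | h <;> simp [h]
        rw [h1, Finset.sum_boole, Finset.filter_erase,
          Finset.erase_eq_of_notMem (by simpa [hTdef] using hjT)]
      have hTi : T.card = i := by
        have h3 : (i : ℝ) < (T.card : ℝ) + 1 := by linarith
        have h4 : (T.card : ℝ) < (i : ℝ) + 1 := by linarith
        have h5 : i < T.card + 1 := by exact_mod_cast h3
        have h6 : T.card < i + 1 := by exact_mod_cast h4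
        omega
      have hsum' : ∑ n, m n = (i : ℝ) + m j := by rw [hsum, hTi]
      have hci1 : (insert j T).card = i + 1 := by
        rw [Finset.card_insert_of_notMem hjT, hTi]
      refine ⟨fun S => (if S = T then ((i : ℝ) + 1 - ∑ n, m n) else 0)
        + (if S = insert j T then ((∑ n, m n) - (i : ℝ)) else 0), ?_, ?_, ?_, ?_, ?_⟩
      · intro S
        show 0 ≤ (if S = T then ((i : ℝ) + 1 - ∑ n, m n) else 0)
          + (if S = insert j T then ((∑ n, m n) - (i : ℝ)) else 0)
        have ha : 0 ≤ (if S = T then ((i : ℝ) + 1 - ∑ n, m n) else 0) := by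
          split_ifs <;> linarith
        have hb : 0 ≤ (if S = insert j T then ((∑ n, m n) - (i : ℝ)) else 0) := by
          split_ifs <;> linarith
        linarith
      · intro S hS
        show (if S = T then ((i : ℝ) + 1 - ∑ n, m n) else 0)
          + (if S = insert j T then ((∑ n, m n) - (i : ℝ)) else 0) = 0
        rw [if_neg (fun h => hS.1 (by rw [h, hTi])),
          if_neg (fun h => hS.2 (by rw [h, hci1]))]
        ring
      · intro n
        show (∑ S ∈ Finset.univ.filter (fun S : Finset (Fin N) => n ∈ S),
          ((if S = T then ((i : ℝ) + 1 - ∑ n, m n) else 0)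
          + (if S = insert j T then ((∑ n, m n) - (i : ℝ)) else 0))) = m n
        rw [Finset.sum_add_distrib, Finset.sum_ite_eq' _ T, Finset.sum_ite_eq' _ (insert j T)]
        simp only [Finset.mem_filter, Finset.mem_univ, true_and]
        rcases eq_or_ne n j with h | hnj
        · rw [h, if_neg hjT, if_pos (Finset.mem_insert_self j T)]
          linarith
        by_cases hnT : n ∈ T
        · rw [if_pos hnT, if_pos (Finset.mem_insert_of_mem hnT)]
          have : m n = 1 := by simpa [hTdef] using hnT
          linarith
        · rw [if_neg hnT, if_neg (by simp [Finset.mem_insert, hnj, hnT])]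
          have : m n = 0 := by
            rcases h01 n hnj with h | h
            · exact h
            · exact absurd (by simp [hTdef, h]) hnT
          linarith
      · show (∑ S ∈ Finset.univ.filter (fun S : Finset (Fin N) => S.card = i),
          ((if S = T then ((i : ℝ) + 1 - ∑ n, m n) else 0)
          + (if S = insert j T then ((∑ n, m n) - (i : ℝ)) else 0)))
          = (i : ℝ) + 1 - ∑ n, m n
        rw [Finset.sum_add_distrib, Finset.sum_ite_eq' _ T, Finset.sum_ite_eq' _ (insert j T)]
        rw [if_pos (by simp [hTi]), if_neg (by simp [hci1])]
        ring
      · show (∑ S ∈ Finset.univ.filter (fun S : Finset (Fin N) => S.card = i + 1),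
          ((if S = T then ((i : ℝ) + 1 - ∑ n, m n) else 0)
          + (if S = insert j T then ((∑ n, m n) - (i : ℝ)) else 0)))
          = (∑ n, m n) - (i : ℝ)
        rw [Finset.sum_add_distrib, Finset.sum_ite_eq' _ T, Finset.sum_ite_eq' _ (insert j T)]
        rw [if_neg (by simp [hTi]), if_pos (by simp [hci1])]
        ring

theorem exists_feasible_placement (N i : ℕ) (hN : 2 ≤ N) (hi1 : 1 ≤ i) (hiN : i ≤ N - 1)
    (m : Fin N → ℝ) (hm : ∀ n, 0 ≤ m n ∧ m n ≤ 1)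
    (hlo : (i : ℝ) < ∑ n, m n) (hhi : ∑ n, m n < (i : ℝ) + 1) :
    ∃ α : Finset (Fin N) → ℝ,
      (∀ S : Finset (Fin N), 0 ≤ α S) ∧
      (∀ S : Finset (Fin N), S.card ≠ i ∧ S.card ≠ i + 1 → α S = 0) ∧
      (∀ n : Fin N,
        (∑ S ∈ Finset.univ.filter (fun S : Finset (Fin N) => n ∈ S), α S) = m n) ∧
      (∑ S ∈ Finset.univ.filter (fun S : Finset (Fin N) => S.card = i), α S)
        = (i : ℝ) + 1 - ∑ n, m n ∧
      (∑ S ∈ Finset.univ.filter (fun S : Finset (Fin N) => S.card = i + 1), α S)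
        = (∑ n, m n) - (i : ℝ) := by
  exact aux_placement N i _ m le_rfl hm hlo hhi
end

section
/- Let N ≥ 2, let i be an integer with 1 ≤ i ≤ N − 1, and let m = (m_1, …, m_N) satisfy 0 ≤ m_n ≤ 1 for all n and i < m_s < i + 1, where m_s = ∑_{n=1}^N m_n. Let v_1, …, v_N, w_1, w_2 be real numbers such that ∑_{j=1}^N m_j·v_j + (i + 1 − m_s)·w_1 + (m_s − i)·w_2 > 0. Then there exists a subset S ⊆ {1, …, N} such that either |S| = i and ∑_{j ∈ S} v_j + w_1 > 0, or |S| = i + 1 and ∑_{j ∈ S} v_j + w_2 > 0. -/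
open Finset

theorem exists_positive_subset_sum (N i : ℕ) (hN : 2 ≤ N) (hi1 : 1 ≤ i) (hiN : i ≤ N - 1)
    (m : Fin N → ℝ) (hm : ∀ n, 0 ≤ m n ∧ m n ≤ 1)
    (hlo : (i : ℝ) < ∑ n, m n) (hhi : ∑ n, m n < (i : ℝ) + 1)
    (v : Fin N → ℝ) (w₁ w₂ : ℝ)
    (hpos : 0 < (∑ j, m j * v j) + ((i : ℝ) + 1 - ∑ n, m n) * w₁
      + ((∑ n, m n) - (i : ℝ)) * w₂) :
    ∃ S : Finset (Fin N),
      (S.card = i ∧ 0 < (∑ j ∈ S, v j) + w₁) ∨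
      (S.card = i + 1 ∧ 0 < (∑ j ∈ S, v j) + w₂) := by
  have hiN' : i < N := by omega
  set σ := Tuple.sort (fun j => -v j) with hσ
  have hmono : Monotone ((fun j => -v j) ∘ σ) := Tuple.monotone_sort _
  set u : Fin N → ℝ := fun j => v (σ j) with hu
  have hanti : ∀ {a b : Fin N}, a ≤ b → u b ≤ u a := by
    intro a b hab
    have := hmono hab
    simp only [Function.comp_apply, neg_le_neg_iff] at this
    simpa [hu] using this
  set m' : Fin N → ℝ := fun j => m (σ j) with hm'
  have hm'01 : ∀ j, 0 ≤ m' j ∧ m' j ≤ 1 := fun j => hm (σ j)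
  set k : Fin N := ⟨i, hiN'⟩ with hk
  have hcardIio : (Finset.Iio k).card = i := by simp [hk]
  have hcardIic : (Finset.Iic k).card = i + 1 := by simp [hk]
  have hsum_m : ∑ j, m' j = ∑ n, m n := Equiv.sum_comp σ m
  have hsum_mv : ∑ j, m' j * u j = ∑ j, m j * v j :=
    Equiv.sum_comp σ (fun j => m j * v j)
  -- split sums at k
  have hsplit : ∀ f : Fin N → ℝ,
      ∑ j, f j = ∑ j ∈ Finset.Iio k, f j + ∑ j ∈ Finset.Ici k, f j := by
    intro f
    rw [← Finset.sum_union (by simp [Finset.disjoint_left])]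
    congr 1
    ext x; simp [lt_or_ge]
  set s : ℝ := ∑ n, m n with hs
  set T : ℝ := ∑ j ∈ Finset.Iio k, u j with hT
  -- key inequality : ∑ m v ≤ T + (s - i) * u k
  have hkey : ∑ j, m j * v j ≤ T + (s - i) * u k := by
    rw [← hsum_mv, hsplit (fun j => m' j * u j)]
    have hA : ∑ j ∈ Finset.Iio k, m' j * u j
        ≤ T - ((i : ℝ) - ∑ j ∈ Finset.Iio k, m' j) * u k := by
      have : ∀ j ∈ Finset.Iio k, m' j * u j ≤ u j - (1 - m' j) * u k := by
        intro j hj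
        have hjk : u k ≤ u j := hanti (le_of_lt (Finset.mem_Iio.mp hj))
        nlinarith [(hm'01 j).1, (hm'01 j).2]
      calc ∑ j ∈ Finset.Iio k, m' j * u j
          ≤ ∑ j ∈ Finset.Iio k, (u j - (1 - m' j) * u k) := Finset.sum_le_sum this
        _ = T - ((i : ℝ) - ∑ j ∈ Finset.Iio k, m' j) * u k := by
            rw [Finset.sum_sub_distrib, ← Finset.sum_mul, Finset.sum_sub_distrib,
              Finset.sum_const, hcardIio]
            push_cast
            ring
    have hB : ∑ j ∈ Finset.Ici k, m' j * u j
        ≤ (∑ j ∈ Finset.Ici k, m' j) * u k := by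
      rw [Finset.sum_mul]
      refine Finset.sum_le_sum fun j hj => ?_
      have hjk : u j ≤ u k := hanti (Finset.mem_Ici.mp hj)
      nlinarith [(hm'01 j).1]
    have hmsplit : ∑ j ∈ Finset.Iio k, m' j + ∑ j ∈ Finset.Ici k, m' j = s := by
      rw [← hsplit m', hsum_m]
    have hrw : (s - (i : ℝ)) * u k
        = -(((i : ℝ) - ∑ j ∈ Finset.Iio k, m' j) * u k)
          + (∑ j ∈ Finset.Ici k, m' j) * u k := by
      rw [← hmsplit]; ring
    linarith [hA, hB]
  -- conclude
  have hlam : (0:ℝ) < (i : ℝ) + 1 - s := by linarith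
  have hmu : (0:ℝ) < s - (i : ℝ) := by linarith
  by_contra hcon
  push_neg at hcon
  have h1 : T + w₁ ≤ 0 := by
    have h := (hcon ((Finset.Iio k).image σ)).1
      (by rw [Finset.card_image_of_injective _ σ.injective, hcardIio])
    rwa [Finset.sum_image (fun a _ b _ hab => σ.injective hab)] at h
  have h2 : T + u k + w₂ ≤ 0 := by
    have h := (hcon ((Finset.Iic k).image σ)).2
      (by rw [Finset.card_image_of_injective _ σ.injective, hcardIic])
    rw [Finset.sum_image (fun a _ b _ hab => σ.injective hab)] at h
    have hIic : ∑ j ∈ Finset.Iic k, u j = u k + T := by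
      rw [hT, ← Finset.Iio_insert, Finset.sum_insert (by simp)]
    rw [hIic] at h
    linarith
  nlinarith [hkey, h1, h2, hlam, hmu]
end

section
/- Let N ≥ 1 and K ≥ 1 be integers, let m = (m_1, …, m_N) satisfy 0 ≤ m_n ≤ 1 for all n, and put m_s = ∑_{n=1}^N m_n. If α is feasible for the placement linear program P(m), then the vector β defined by β_ℓ = ∑_{S : |S| = ℓ} α_S for ℓ = 1, …, N is feasible for the relaxed linear program R(m_s), and its objective value satisfies ∑_{ℓ=1}^N β_ℓ·D̃_ℓ = ∑_S α_S·D̃_{|S|}. Consequently, the minimum objective value of R(m_s) is at most D*(m). -/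
open Finset

lemma Dt_nonneg (K ℓ : ℕ) : 0 ≤ Dt K ℓ := by
  apply Finset.sum_nonneg
  intro i _
  positivity

/-- fiberwise decomposition of a sum over nonempty subsets by cardinality -/
lemma key_fiber (N : ℕ) (hN : 1 ≤ N) (f : Finset (Fin N) → ℝ) :
    ∑ ℓ : Fin N, ∑ S ∈ Finset.univ.filter
        (fun S : Finset (Fin N) => S.card = (ℓ : ℕ) + 1), f S
      = ∑ S ∈ Finset.univ.filter (fun S : Finset (Fin N) => S.Nonempty), f S := by
  have hmap : ∀ S ∈ Finset.univ.filter (fun S : Finset (Fin N) => S.Nonempty),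
      (⟨S.card - 1, by
        have h := Finset.card_le_univ S
        simp only [Finset.card_univ, Fintype.card_fin] at h
        omega⟩ : Fin N) ∈ (Finset.univ : Finset (Fin N)) := fun _ _ => Finset.mem_univ _
  rw [← Finset.sum_fiberwise_of_maps_to hmap f]
  apply Finset.sum_congr rfl
  intro ℓ _
  apply Finset.sum_congr _ (fun _ _ => rfl)
  ext S
  simp only [Finset.mem_filter, Finset.mem_univ, true_and, Fin.ext_iff,
    ← Finset.card_pos]
  omega

lemma main_aux (N K : ℕ) (hN : 1 ≤ N)
    (m : Fin N → ℝ) (α : Finset (Fin N) → ℝ) (hα : PFeasible m α) :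
    RFeasible N (∑ n, m n)
      (fun ℓ : Fin N =>
        ∑ S ∈ Finset.univ.filter (fun S : Finset (Fin N) => S.card = (ℓ : ℕ) + 1), α S) ∧
    RObj N K (fun ℓ : Fin N =>
        ∑ S ∈ Finset.univ.filter (fun S : Finset (Fin N) => S.card = (ℓ : ℕ) + 1), α S)
      = PObj N K α := by
  obtain ⟨hpos, hsum, hcon⟩ := hα
  have hposcard : ∀ ℓ : Fin N, ∀ S ∈ Finset.univ.filter
      (fun S : Finset (Fin N) => S.card = (ℓ : ℕ) + 1), 0 ≤ α S := by
    intro ℓ S hS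
    simp only [Finset.mem_filter] at hS
    exact hpos S (Finset.card_pos.mp (by omega))
  refine ⟨⟨fun ℓ => Finset.sum_nonneg (hposcard ℓ), ?_, ?_⟩, ?_⟩
  · rw [key_fiber N hN α]; exact hsum
  · -- constraint
    have h1 : ∑ ℓ : Fin N, ((ℓ : ℕ) + 1 : ℝ) *
        (∑ S ∈ Finset.univ.filter (fun S : Finset (Fin N) => S.card = (ℓ : ℕ) + 1), α S)
        = ∑ S ∈ Finset.univ.filter (fun S : Finset (Fin N) => S.Nonempty),
            (S.card : ℝ) * α S := by
      rw [← key_fiber N hN (fun S => (S.card : ℝ) * α S)]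
      apply Finset.sum_congr rfl
      intro ℓ _
      rw [Finset.mul_sum]
      apply Finset.sum_congr rfl
      intro S hS
      simp only [Finset.mem_filter] at hS
      rw [hS.2]
      push_cast
      ring
    rw [h1]
    have h2 : ∑ S ∈ Finset.univ.filter (fun S : Finset (Fin N) => S.Nonempty),
        (S.card : ℝ) * α S
        = ∑ n : Fin N, ∑ S ∈ Finset.univ.filter (fun S : Finset (Fin N) => n ∈ S), α S := by
      have : ∀ S : Finset (Fin N), (S.card : ℝ) * α S
          = ∑ n : Fin N, if n ∈ S then α S else 0 := by
        intro S
        rw [Finset.sum_ite_mem, Finset.univ_inter, Finset.sum_const, nsmul_eq_mul]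
      simp_rw [this]
      rw [Finset.sum_comm]
      apply Finset.sum_congr rfl
      intro n _
      rw [← Finset.sum_filter]
      apply Finset.sum_congr _ (fun _ _ => rfl)
      rw [Finset.filter_filter]
      apply Finset.filter_congr
      intro S _
      simp only [and_iff_right_iff_imp]
      exact fun h => ⟨n, h⟩
    rw [h2]
    exact Finset.sum_le_sum (fun n _ => hcon n)
  · -- objective
    unfold RObj PObj
    rw [← key_fiber N hN (fun S => α S * Dt K S.card)]
    apply Finset.sum_congr rfl
    intro ℓ _
    rw [Finset.sum_mul]
    apply Finset.sum_congr rfl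
    intro S hS
    simp only [Finset.mem_filter] at hS
    rw [hS.2]

theorem placement_to_relaxed (N K : ℕ) (hN : 1 ≤ N) (hK : 1 ≤ K)
    (m : Fin N → ℝ) (hm : ∀ n, 0 ≤ m n ∧ m n ≤ 1)
    (α : Finset (Fin N) → ℝ) (hα : PFeasible m α) :
    RFeasible N (∑ n, m n)
      (fun ℓ : Fin N =>
        ∑ S ∈ Finset.univ.filter (fun S : Finset (Fin N) => S.card = (ℓ : ℕ) + 1), α S) ∧
    RObj N K (fun ℓ : Fin N =>
        ∑ S ∈ Finset.univ.filter (fun S : Finset (Fin N) => S.card = (ℓ : ℕ) + 1), α S)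
      = PObj N K α ∧
    sInf {d : ℝ | ∃ β : Fin N → ℝ, RFeasible N (∑ n, m n) β ∧ RObj N K β = d}
      ≤ sInf {d : ℝ | ∃ α' : Finset (Fin N) → ℝ, PFeasible m α' ∧ PObj N K α' = d} := by
  obtain ⟨h1, h2⟩ := main_aux N K hN m α hα
  refine ⟨h1, h2, ?_⟩
  apply csInf_le_csInf
  · refine ⟨0, ?_⟩
    rintro d ⟨β, ⟨hβpos, -, -⟩, rfl⟩
    exact Finset.sum_nonneg fun n _ => mul_nonneg (hβpos n) (Dt_nonneg _ _)
  · exact ⟨PObj N K α, α, hα, rfl⟩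
  · rintro d ⟨α', hα', rfl⟩
    obtain ⟨hr, ho⟩ := main_aux N K hN m α' hα'
    exact ⟨_, hr, ho⟩
end

section
/- Let N ≥ 1 and K ≥ 1 be integers, and let m = (m_1, …, m_N) satisfy 0 ≤ m_n ≤ 1 for all n with ∑_{n=1}^N m_n ≥ 1. Then the minimum objective value of the placement linear program P(m) equals the minimum objective value of the relaxed linear program R(m_s), where m_s = ∑_{n=1}^N m_n. -/
open Finset

lemma one_div_cast_pow (j i : ℕ) : (1 / (j : ℝ)) ^ i = (j : ℝ) ^ (-(i : ℤ)) := by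
  rw [zpow_neg, zpow_natCast, one_div, inv_pow]

lemma Dt_midpoint_s10 (K j : ℕ) (hj : 1 ≤ j) :
    2 * Dt K (j + 1) ≤ Dt K j + Dt K (j + 2) := by
  unfold Dt
  rw [Finset.mul_sum, ← Finset.sum_add_distrib]
  apply Finset.sum_le_sum
  intro i _
  rw [one_div_cast_pow, one_div_cast_pow, one_div_cast_pow]
  have hc := convexOn_zpow (𝕜 := ℝ) (-(i:ℤ))
  have hx : ((j:ℝ)) ∈ Set.Ioi (0:ℝ) := by
    simp only [Set.mem_Ioi]; exact_mod_cast Nat.lt_of_lt_of_le Nat.zero_lt_one hj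
  have hy : ((j:ℝ) + 2) ∈ Set.Ioi (0:ℝ) := by
    simp only [Set.mem_Ioi]; positivity
  have h := hc.2 hx hy (by norm_num : (0:ℝ) ≤ 1/2) (by norm_num : (0:ℝ) ≤ 1/2) (by norm_num)
  have e1 : (1/2 : ℝ) • (j:ℝ) + (1/2 : ℝ) • ((j:ℝ) + 2) = ((j:ℝ) + 1) := by
    simp only [smul_eq_mul]; ring
  rw [e1] at h
  have : ((j:ℝ) + 1) ^ (-(i:ℤ)) ≤ (1/2) * (j:ℝ) ^ (-(i:ℤ)) + (1/2) * ((j:ℝ)+2) ^ (-(i:ℤ)) := h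
  push_cast
  linarith [this]

lemma Dt_antitone (K : ℕ) {j k : ℕ} (hj : 1 ≤ j) (hjk : j ≤ k) : Dt K k ≤ Dt K j := by
  unfold Dt
  apply Finset.sum_le_sum
  intro i _
  apply pow_le_pow_left₀ (by positivity)
  apply one_div_le_one_div_of_le
  · exact_mod_cast Nat.lt_of_lt_of_le Nat.zero_lt_one hj
  · exact_mod_cast hjk

lemma Dt_dstep (K : ℕ) : ∀ j, 1 ≤ j → ∀ k, j ≤ k →
    Dt K k - Dt K (k+1) ≤ Dt K j - Dt K (j+1) := by
  intro j hj k hk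
  induction k with
  | zero => omega
  | succ n ih =>
    rcases Nat.lt_or_ge j (n+1) with h | h
    · have hn : j ≤ n := by omega
      have h1 := ih hn
      have h2 := Dt_midpoint_s10 K n (by omega)
      have : Dt K (n+1) - Dt K (n+2) ≤ Dt K n - Dt K (n+1) := by linarith
      linarith
    · have : j = n + 1 := by omega
      subst this; linarith

lemma Dt_line (K s : ℕ) (hs : 1 ≤ s) (v : ℕ) (hv : 1 ≤ v) :
    Dt K s + ((v:ℝ) - s) * (Dt K (s+1) - Dt K s) ≤ Dt K v := by
  set d : ℝ := Dt K s - Dt K (s+1) with hd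
  have upper : ∀ i : ℕ, Dt K s - i * d ≤ Dt K (s + i) := by
    intro i
    induction i with
    | zero => simp
    | succ n ih =>
      have h1 := Dt_dstep K s hs (s+n) (by omega)
      have : Dt K (s+n) - Dt K (s+n+1) ≤ d := by rw [hd]; linarith
      have e : s + (n+1) = (s+n) + 1 := by omega
      rw [e]
      push_cast
      nlinarith [this, ih]
  have lower : ∀ i : ℕ, i + 1 ≤ s → Dt K s + i * d ≤ Dt K (s - i) := by
    intro i
    induction i with
    | zero => intro _; simp
    | succ n ih =>
      intro hns
      have h1 : 1 ≤ s - (n+1) := by omega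
      have h2 := Dt_dstep K (s - (n+1)) h1 s (by omega)
      have e : s - (n+1) + 1 = s - n := by omega
      rw [e] at h2
      have h3 := ih (by omega)
      push_cast
      nlinarith [h2, h3]
  rcases le_or_gt s v with h | h
  · obtain ⟨i, rfl⟩ := Nat.exists_eq_add_of_le h
    have := upper i
    push_cast
    nlinarith [this]
  · have hi : (s - v) + 1 ≤ s := by omega
    have := lower (s - v) hi
    have e : s - (s - v) = v := by omega
    rw [e] at this
    have ec : ((s - v : ℕ) : ℝ) = (s:ℝ) - v := by
      have : v ≤ s := by omega
      push_cast [this]; ring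
    rw [ec] at this
    nlinarith [this]

noncomputable def PP {N : ℕ} (x : Fin N → ℝ) (k : ℕ) : ℝ :=
  ∑ i ∈ Finset.range k, (if h : i < N then x ⟨i, h⟩ else 0)

noncomputable def cc {N : ℕ} (x : Fin N → ℝ) (u : ℝ) (k : ℕ) : ℤ := ⌈PP x k - u⌉

noncomputable def SS {N : ℕ} (x : Fin N → ℝ) (u : ℝ) : Finset (Fin N) :=
  Finset.univ.filter (fun n : Fin N => cc x u (n.1+1) = cc x u n.1 + 1)

open Classical in
noncomputable def UU {N : ℕ} (x : Fin N → ℝ) : Finset ℝ :=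
  insert 0 ((Finset.range (N+1)).image (fun k => Int.fract (PP x k)))

open Classical in
noncomputable def nxt {N : ℕ} (x : Fin N → ℝ) (u : ℝ) : ℝ :=
  if h : (((UU x).filter (fun v => u < v)).Nonempty) then ((UU x).filter (fun v => u < v)).min' h
  else 1

open Classical in
noncomputable def AA {N : ℕ} (x : Fin N → ℝ) (T : Finset (Fin N)) : ℝ :=
  ∑ u ∈ (UU x).filter (fun u => SS x u = T), (nxt x u - u)

section Lemmas
open Classical
variable {N : ℕ} (x : Fin N → ℝ)

lemma UU_bounds : ∀ u ∈ UU x, 0 ≤ u ∧ u < 1 := by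
  intro u hu
  rw [UU, Finset.mem_insert] at hu
  rcases hu with rfl | hu
  · norm_num
  · simp only [Finset.mem_image] at hu
    obtain ⟨k, _, rfl⟩ := hu
    exact ⟨Int.fract_nonneg _, Int.fract_lt_one _⟩

lemma zero_mem_UU : (0:ℝ) ∈ UU x := Finset.mem_insert_self _ _

lemma le_nxt (u : ℝ) (hu : u < 1) : u ≤ nxt x u := by
  rw [nxt]
  split
  · rename_i h
    have := Finset.min'_mem _ h
    rw [Finset.mem_filter] at this
    exact le_of_lt this.2
  · exact le_of_lt hu

lemma nxt_eq (u₀ v : ℝ) (hu₀U : u₀ ∈ UU x) (hu₀v : u₀ < v) (hv : v ∈ UU x ∨ v = 1)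
    (hmax : ∀ w ∈ UU x, w < v → w ≤ u₀) : nxt x u₀ = v := by
  rw [nxt]
  split
  · rename_i h
    obtain ⟨hwU, hu₀w⟩ := Finset.mem_filter.mp (Finset.min'_mem _ h)
    have hwnotlt : ¬ ((UU x).filter (fun v' => u₀ < v')).min' h < v := by
      intro hwv
      exact absurd hu₀w (not_lt.mpr (hmax _ hwU hwv))
    rcases hv with hv | rfl
    · exact le_antisymm
        (Finset.min'_le _ _ (Finset.mem_filter.mpr ⟨hv, hu₀v⟩)) (not_lt.mp hwnotlt)
    · exact absurd (UU_bounds x _ hwU).2 hwnotlt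
  · rename_i h
    rcases hv with hv | rfl
    · exact absurd ⟨v, Finset.mem_filter.mpr ⟨hv, hu₀v⟩⟩ h
    · rfl

lemma sum_len_aux : ∀ (M : ℕ) (v : ℝ), (((UU x).filter (fun u => u < v)).card ≤ M) →
    (v ∈ UU x ∨ v = 1) → ∑ u ∈ (UU x).filter (fun u => u < v), (nxt x u - u) = v := by
  have hbase : ∀ v : ℝ, ((UU x).filter (fun u => u < v)) = ∅ → (v ∈ UU x ∨ v = 1) →
      ∑ u ∈ (UU x).filter (fun u => u < v), (nxt x u - u) = v := by
    intro v hemp hv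
    have h0 : ¬ (0:ℝ) < v := by
      intro h
      have : (0:ℝ) ∈ (UU x).filter (fun u => u < v) :=
        Finset.mem_filter.mpr ⟨zero_mem_UU x, h⟩
      rw [hemp] at this; exact absurd this (Finset.notMem_empty _)
    rcases hv with hv | rfl
    · have hv0 := (UU_bounds x v hv).1
      have : v = 0 := le_antisymm (not_lt.mp h0) hv0
      rw [hemp, Finset.sum_empty, this]
    · norm_num at h0
  intro M
  induction M with
  | zero =>
    intro v hc hv
    exact hbase v (Finset.card_eq_zero.mp (Nat.le_zero.mp hc)) hv
  | succ M ih =>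
    intro v hc hv
    by_cases hemp : ((UU x).filter (fun u => u < v)) = ∅
    · exact hbase v hemp hv
    · have hne : ((UU x).filter (fun u => u < v)).Nonempty :=
        Finset.nonempty_iff_ne_empty.mpr hemp
      set u₀ := ((UU x).filter (fun u => u < v)).max' hne with hu₀
      have hu₀mem := Finset.max'_mem _ hne
      rw [Finset.mem_filter] at hu₀mem
      obtain ⟨hu₀U, hu₀v⟩ := hu₀mem
      -- nxt u₀ = v
      have hmax : ∀ w ∈ UU x, w < v → w ≤ u₀ := by
        intro w hw hwv
        rw [hu₀]
        have hmem : w ∈ (UU x).filter (fun u => u < v) := Finset.mem_filter.mpr ⟨hw, hwv⟩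
        exact Finset.le_max' _ _ hmem
      have hnxt : nxt x u₀ = v := nxt_eq x u₀ v hu₀U hu₀v hv hmax
      have hins : (UU x).filter (fun u => u < v) = insert u₀ ((UU x).filter (fun u => u < u₀)) := by
        ext u
        simp only [Finset.mem_filter, Finset.mem_insert]
        constructor
        · rintro ⟨huU, huv⟩
          rcases eq_or_ne u u₀ with rfl | hne'
          · exact Or.inl rfl
          · have hmem : u ∈ (UU x).filter (fun u' => u' < v) := Finset.mem_filter.mpr ⟨huU, huv⟩
            exact Or.inr ⟨huU, lt_of_le_of_ne (Finset.le_max' _ _ hmem) hne'⟩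
        · rintro (rfl | ⟨huU, huu₀⟩)
          · exact ⟨hu₀U, hu₀v⟩
          · exact ⟨huU, lt_trans huu₀ hu₀v⟩
      have hnotmem : u₀ ∉ (UU x).filter (fun u => u < u₀) := by
        simp only [Finset.mem_filter]
        rintro ⟨_, h⟩; exact lt_irrefl _ h
      have hcard : ((UU x).filter (fun u => u < u₀)).card ≤ M := by
        have : ((UU x).filter (fun u => u < v)).card
            = ((UU x).filter (fun u => u < u₀)).card + 1 := by
          rw [hins, Finset.card_insert_of_notMem hnotmem]
        omega
      rw [hins, Finset.sum_insert hnotmem, ih u₀ hcard (Or.inl hu₀U), hnxt]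
      ring

lemma sum_len_lt (v : ℝ) (hv : v ∈ UU x ∨ v = 1) :
    ∑ u ∈ (UU x).filter (fun u => u < v), (nxt x u - u) = v :=
  sum_len_aux x _ v le_rfl hv

lemma sum_len_total : ∑ u ∈ UU x, (nxt x u - u) = 1 := by
  have h := sum_len_lt x 1 (Or.inr rfl)
  rw [Finset.filter_true_of_mem (fun u hu => (UU_bounds x u hu).2)] at h
  exact h

lemma fract_mem_UU (k : ℕ) (hk : k ≤ N) : Int.fract (PP x k) ∈ UU x := by
  rw [UU]
  apply Finset.mem_insert_of_mem
  exact Finset.mem_image.mpr ⟨k, Finset.mem_range.mpr (by omega), rfl⟩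

lemma sum_len_c (k : ℕ) (hk : k ≤ N) :
    ∑ u ∈ UU x, (nxt x u - u) * (cc x u k : ℝ) = PP x k := by
  set f := Int.fract (PP x k) with hf
  have hf0 : 0 ≤ f := Int.fract_nonneg _
  have hf1 : f < 1 := Int.fract_lt_one _
  have hcval : ∀ u ∈ UU x, (cc x u k : ℝ)
      = (⌊PP x k⌋ : ℝ) + (if u < f then (1:ℝ) else 0) := by
    intro u hu
    obtain ⟨hu0, hu1⟩ := UU_bounds x u hu
    have hsplit : PP x k - u = (f - u) + (⌊PP x k⌋ : ℝ) := by
      have := Int.floor_add_fract (PP x k)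
      rw [hf]; push_cast; linarith [this]
    rw [cc, hsplit, Int.ceil_add_intCast]
    by_cases hcase : u < f
    · have : ⌈f - u⌉ = 1 := by
        rw [Int.ceil_eq_iff]
        constructor
        · push_cast; linarith
        · push_cast; linarith
      rw [this, if_pos hcase]; push_cast; ring
    · push_neg at hcase
      have : ⌈f - u⌉ = 0 := by
        rw [Int.ceil_eq_iff]
        constructor
        · push_cast; linarith
        · push_cast; linarith
      rw [this, if_neg (not_lt.mpr hcase)]; push_cast; ring
  calc ∑ u ∈ UU x, (nxt x u - u) * (cc x u k : ℝ)
      = ∑ u ∈ UU x, ((nxt x u - u) * (⌊PP x k⌋ : ℝ)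
          + (if u < f then (nxt x u - u) else 0)) := by
        apply Finset.sum_congr rfl
        intro u hu
        rw [hcval u hu]
        by_cases hcase : u < f
        · rw [if_pos hcase, if_pos hcase]; ring
        · rw [if_neg hcase, if_neg hcase]; ring
    _ = (⌊PP x k⌋ : ℝ) * (∑ u ∈ UU x, (nxt x u - u))
          + ∑ u ∈ (UU x).filter (fun u => u < f), (nxt x u - u) := by
        rw [Finset.sum_add_distrib, ← Finset.sum_filter, ← Finset.sum_mul]
        ring
    _ = (⌊PP x k⌋ : ℝ) + f := by
        rw [sum_len_total, sum_len_lt x f (Or.inl (fract_mem_UU x k hk))]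
        ring
    _ = PP x k := by
        rw [hf]
        push_cast
        linarith [Int.floor_add_fract (PP x k)]

lemma PP_succ (n : Fin N) : PP x (n.1 + 1) = PP x n.1 + x n := by
  rw [PP, PP, Finset.sum_range_succ]
  congr 1
  rw [dif_pos n.2]

lemma cc_step (hx0 : ∀ n, 0 ≤ x n) (hx1 : ∀ n, x n ≤ 1) (u : ℝ) (n : Fin N) :
    cc x u (n.1+1) = cc x u n.1 ∨ cc x u (n.1+1) = cc x u n.1 + 1 := by
  have h1 : cc x u n.1 ≤ cc x u (n.1+1) := by
    apply Int.ceil_le_ceil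
    rw [PP_succ]
    have := hx0 n; linarith
  have h2 : cc x u (n.1+1) ≤ cc x u n.1 + 1 := by
    have : cc x u (n.1+1) ≤ ⌈(PP x n.1 - u) + 1⌉ := by
      apply Int.ceil_le_ceil
      rw [PP_succ]
      have := hx1 n; linarith
    rw [Int.ceil_add_one] at this
    exact this
  omega

lemma SS_indicator (hx0 : ∀ n, 0 ≤ x n) (hx1 : ∀ n, x n ≤ 1) (u : ℝ) (n : Fin N) :
    (if n ∈ SS x u then (1:ℤ) else 0) = cc x u (n.1+1) - cc x u n.1 := by
  have hmem : n ∈ SS x u ↔ cc x u (n.1+1) = cc x u n.1 + 1 := by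
    rw [SS, Finset.mem_filter]
    simp
  rcases cc_step x hx0 hx1 u n with h | h
  · rw [if_neg, h]; · ring
    rw [hmem, h]; omega
  · rw [if_pos (hmem.mpr h), h]; ring

lemma load_eq (hx0 : ∀ n, 0 ≤ x n) (hx1 : ∀ n, x n ≤ 1) (n : Fin N) :
    ∑ u ∈ UU x, (nxt x u - u) * (if n ∈ SS x u then (1:ℝ) else 0) = x n := by
  have hind : ∀ u, (if n ∈ SS x u then (1:ℝ) else 0)
      = ((cc x u (n.1+1) : ℝ) - (cc x u n.1 : ℝ)) := by
    intro u
    have hz := SS_indicator x hx0 hx1 u n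
    by_cases h : n ∈ SS x u
    · rw [if_pos h]; rw [if_pos h] at hz
      have : ((cc x u (n.1+1) : ℝ)) - (cc x u n.1 : ℝ) = ((1:ℤ):ℝ) := by
        exact_mod_cast congrArg (fun z : ℤ => (z:ℝ)) hz.symm
      rw [this]; norm_num
    · rw [if_neg h]; rw [if_neg h] at hz
      have : ((cc x u (n.1+1) : ℝ)) - (cc x u n.1 : ℝ) = ((0:ℤ):ℝ) := by
        exact_mod_cast congrArg (fun z : ℤ => (z:ℝ)) hz.symm
      rw [this]; norm_num
  calc ∑ u ∈ UU x, (nxt x u - u) * (if n ∈ SS x u then (1:ℝ) else 0)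
      = ∑ u ∈ UU x, ((nxt x u - u) * (cc x u (n.1+1) : ℝ)
          - (nxt x u - u) * (cc x u n.1 : ℝ)) := by
        apply Finset.sum_congr rfl
        intro u _
        rw [hind u]; ring
    _ = PP x (n.1+1) - PP x n.1 := by
        rw [Finset.sum_sub_distrib, sum_len_c x (n.1+1) n.2, sum_len_c x n.1 (le_of_lt n.2)]
    _ = x n := by rw [PP_succ]; ring

lemma PP_N : PP x N = ∑ n, x n := by
  rw [PP, Finset.sum_range]
  apply Finset.sum_congr rfl
  intro i _
  rw [dif_pos i.2]

lemma card_SS (hx0 : ∀ n, 0 ≤ x n) (hx1 : ∀ n, x n ≤ 1) (u : ℝ) (hu0 : 0 ≤ u) (hu1 : u < 1) :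
    ((SS x u).card : ℤ) = ⌈(∑ n, x n) - u⌉ := by
  have h1 : ∑ n : Fin N, (if n ∈ SS x u then (1:ℤ) else 0) = ((SS x u).card : ℤ) := by
    rw [Finset.sum_boole, Finset.filter_univ_mem]
  rw [← h1]
  have h2 : ∑ n : Fin N, (if n ∈ SS x u then (1:ℤ) else 0)
      = ∑ n : Fin N, (cc x u (n.1+1) - cc x u n.1) :=
    Finset.sum_congr rfl (fun n _ => SS_indicator x hx0 hx1 u n)
  rw [h2]
  have h3 : ∑ n : Fin N, (cc x u (n.1+1) - cc x u n.1)
      = ∑ i ∈ Finset.range N, (cc x u (i+1) - cc x u i) :=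
    Fin.sum_univ_eq_sum_range (fun i => cc x u (i+1) - cc x u i) N
  rw [h3, Finset.sum_range_sub (fun i => cc x u i)]
  have hc0 : cc x u 0 = 0 := by
    rw [cc, PP]
    rw [Finset.sum_range_zero, Int.ceil_eq_iff]
    constructor <;> push_cast <;> linarith
  rw [hc0, cc, PP_N]
  ring

end Lemmas

section Rest
open Classical
variable {N : ℕ} (x : Fin N → ℝ)

lemma AA_nonneg (T : Finset (Fin N)) : 0 ≤ AA x T := by
  rw [AA]
  apply Finset.sum_nonneg
  intro u hu
  obtain ⟨hu0, hu1⟩ := UU_bounds x u (Finset.mem_filter.mp hu).1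
  linarith [le_nxt x u hu1]

lemma sum_AA (p : Finset (Fin N) → Prop) [DecidablePred p] (f : Finset (Fin N) → ℝ) :
    ∑ T ∈ Finset.univ.filter p, AA x T * f T
      = ∑ u ∈ (UU x).filter (fun u => p (SS x u)), (nxt x u - u) * f (SS x u) := by
  calc ∑ T ∈ Finset.univ.filter p, AA x T * f T
      = ∑ T ∈ Finset.univ.filter p, ∑ u ∈ UU x,
          (if SS x u = T then (nxt x u - u) * f T else 0) := by
        apply Finset.sum_congr rfl
        intro T _
        rw [AA, Finset.sum_mul, Finset.sum_filter]
    _ = ∑ u ∈ UU x, ∑ T ∈ Finset.univ.filter p,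
          (if SS x u = T then (nxt x u - u) * f T else 0) := Finset.sum_comm
    _ = ∑ u ∈ UU x, (if p (SS x u) then (nxt x u - u) * f (SS x u) else 0) := by
        apply Finset.sum_congr rfl
        intro u _
        rw [Finset.sum_ite_eq]
        simp only [Finset.mem_filter, Finset.mem_univ, true_and]
    _ = ∑ u ∈ (UU x).filter (fun u => p (SS x u)), (nxt x u - u) * f (SS x u) :=
        (Finset.sum_filter _ _).symm

lemma card_SS_bounds (hx0 : ∀ n, 0 ≤ x n) (hx1 : ∀ n, x n ≤ 1) (hW : 1 ≤ ∑ n, x n)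
    (u : ℝ) (hu : u ∈ UU x) :
    1 ≤ ((SS x u).card : ℤ) ∧ ⌈(∑ n, x n)⌉ - 1 ≤ ((SS x u).card : ℤ)
      ∧ ((SS x u).card : ℤ) ≤ ⌈(∑ n, x n)⌉ := by
  obtain ⟨hu0, hu1⟩ := UU_bounds x u hu
  rw [card_SS x hx0 hx1 u hu0 hu1]
  refine ⟨?_, ?_, ?_⟩
  · have : (0:ℤ) < ⌈(∑ n, x n) - u⌉ := Int.ceil_pos.mpr (by linarith)
    omega
  · have h1 : (∑ n, x n) - 1 ≤ (∑ n, x n) - u := by linarith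
    have h2 := Int.ceil_le_ceil h1
    rw [Int.ceil_sub_one] at h2
    omega
  · exact Int.ceil_le_ceil (by linarith)

end Rest

noncomputable def PObjX (N K : ℕ) (α : Finset (Fin N) → ℝ) : ℝ :=
  ∑ S ∈ Finset.univ.filter (fun S : Finset (Fin N) => S.Nonempty), α S * Dt K S.card

lemma construct {N : ℕ} (K : ℕ) (x : Fin N → ℝ)
    (hx0 : ∀ n, 0 ≤ x n) (hx1 : ∀ n, x n ≤ 1) (hW : 1 ≤ ∑ n, x n) :
    ∃ (α : Finset (Fin N) → ℝ) (s : ℕ), 1 ≤ s ∧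
      (∀ S : Finset (Fin N), S.Nonempty → 0 ≤ α S) ∧
      (∑ S ∈ Finset.univ.filter (fun S : Finset (Fin N) => S.Nonempty), α S) = 1 ∧
      (∀ n : Fin N, (∑ S ∈ Finset.univ.filter (fun S : Finset (Fin N) => n ∈ S), α S) = x n) ∧
      PObjX N K α = Dt K s + ((∑ n, x n) - s) * (Dt K (s+1) - Dt K s) := by
  classical
  set s : ℕ := max 1 (⌈∑ n, x n⌉.toNat - 1) with hs
  have hceil1 : 1 ≤ ⌈∑ n, x n⌉ := by
    have := Int.ceil_le_ceil hW
    rwa [Int.ceil_one] at this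
  have hsize : ∀ u ∈ UU x, (SS x u).card = s ∨ (SS x u).card = s + 1 := by
    intro u hu
    obtain ⟨h1, h2, h3⟩ := card_SS_bounds x hx0 hx1 hW u hu
    omega
  have hne : ∀ u ∈ UU x, (SS x u).Nonempty := by
    intro u hu
    obtain ⟨h1, _, _⟩ := card_SS_bounds x hx0 hx1 hW u hu
    apply Finset.card_pos.mp
    omega
  have hfiltereq : ∀ (q : ℝ → Prop), (∀ u ∈ UU x, q u) →
      ∀ (p : ℝ → Prop) [DecidablePred p], (∀ u, q u → p u) → (UU x).filter p = UU x := by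
    intro q hq p _ hqp
    apply Finset.filter_true_of_mem
    intro u hu; exact hqp u (hq u hu)
  refine ⟨AA x, s, le_max_left _ _, fun S _ => AA_nonneg x S, ?_, ?_, ?_⟩
  · -- total mass
    have h := sum_AA x (fun S : Finset (Fin N) => S.Nonempty) (fun _ => (1:ℝ))
    simp only [mul_one] at h
    rw [h, Finset.filter_true_of_mem (fun u hu => hne u hu), sum_len_total]
  · -- loads
    intro n
    have h := sum_AA x (fun S : Finset (Fin N) => n ∈ S) (fun _ => (1:ℝ))
    simp only [mul_one] at h
    rw [h, Finset.sum_filter]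
    rw [← load_eq x hx0 hx1 n]
    apply Finset.sum_congr rfl
    intro u _
    by_cases hmem : n ∈ SS x u
    · rw [if_pos hmem, if_pos hmem, mul_one]
    · rw [if_neg hmem, if_neg hmem, mul_zero]
  · -- objective
    have hcardsum : ∑ u ∈ UU x, (nxt x u - u) * ((SS x u).card : ℝ) = ∑ n, x n := by
      have hcard : ∀ u, ((SS x u).card : ℝ) = ∑ n : Fin N, (if n ∈ SS x u then (1:ℝ) else 0) := by
        intro u
        rw [Finset.sum_boole, Finset.filter_univ_mem]
      calc ∑ u ∈ UU x, (nxt x u - u) * ((SS x u).card : ℝ)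
          = ∑ u ∈ UU x, ∑ n : Fin N, (nxt x u - u) * (if n ∈ SS x u then (1:ℝ) else 0) := by
            apply Finset.sum_congr rfl
            intro u _
            rw [hcard u, Finset.mul_sum]
        _ = ∑ n : Fin N, ∑ u ∈ UU x, (nxt x u - u) * (if n ∈ SS x u then (1:ℝ) else 0) :=
            Finset.sum_comm
        _ = ∑ n, x n := Finset.sum_congr rfl (fun n _ => load_eq x hx0 hx1 n)
    have h := sum_AA x (fun S : Finset (Fin N) => S.Nonempty) (fun S => Dt K S.card)
    rw [PObjX, h, Finset.filter_true_of_mem (fun u hu => hne u hu)]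
    have hper : ∀ u ∈ UU x, (nxt x u - u) * Dt K (SS x u).card
        = (nxt x u - u) * (Dt K s - (s:ℝ) * (Dt K (s+1) - Dt K s))
          + ((nxt x u - u) * ((SS x u).card : ℝ)) * (Dt K (s+1) - Dt K s) := by
      intro u hu
      rcases hsize u hu with hc | hc
      · rw [hc]; ring
      · rw [hc]; push_cast; ring
    rw [Finset.sum_congr rfl hper, Finset.sum_add_distrib, ← Finset.sum_mul, ← Finset.sum_mul,
      sum_len_total, hcardsum]
    ring

lemma fiber_sum {N : ℕ} (f : Finset (Fin N) → ℝ) :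
    ∑ n : Fin N, ∑ S ∈ Finset.univ.filter
        (fun S : Finset (Fin N) => S.Nonempty ∧ S.card = (n:ℕ)+1), f S
      = ∑ S ∈ Finset.univ.filter (fun S : Finset (Fin N) => S.Nonempty), f S := by
  classical
  calc ∑ n : Fin N, ∑ S ∈ Finset.univ.filter
        (fun S : Finset (Fin N) => S.Nonempty ∧ S.card = (n:ℕ)+1), f S
      = ∑ n : Fin N, ∑ S : Finset (Fin N),
          (if S.Nonempty ∧ S.card = (n:ℕ)+1 then f S else 0) := by
        apply Finset.sum_congr rfl; intro n _; rw [Finset.sum_filter]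
    _ = ∑ S : Finset (Fin N), ∑ n : Fin N,
          (if S.Nonempty ∧ S.card = (n:ℕ)+1 then f S else 0) := Finset.sum_comm
    _ = ∑ S : Finset (Fin N), (if S.Nonempty then f S else 0) := by
        apply Finset.sum_congr rfl
        intro S _
        by_cases hS : S.Nonempty
        · have h1 : 0 < S.card := Finset.card_pos.mpr hS
          have h2 : S.card ≤ N := by
            have := Finset.card_le_univ S
            simpa using this
          have hlt : S.card - 1 < N := by omega
          have hcond : ∀ n : Fin N, (S.Nonempty ∧ S.card = (n:ℕ)+1) ↔ n = (⟨S.card - 1, hlt⟩ : Fin N) := by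
            intro n
            constructor
            · rintro ⟨-, hc⟩
              have hv : (n:ℕ) = S.card - 1 := by omega
              exact Fin.ext hv
            · rintro rfl
              exact ⟨hS, by simp; omega⟩
          rw [if_pos hS]
          calc ∑ n : Fin N, (if S.Nonempty ∧ S.card = (n:ℕ)+1 then f S else 0)
              = ∑ n : Fin N, (if n = (⟨S.card - 1, hlt⟩ : Fin N) then f S else 0) := by
                apply Finset.sum_congr rfl; intro n _
                by_cases h : n = (⟨S.card - 1, hlt⟩ : Fin N)
                · rw [if_pos ((hcond n).mpr h), if_pos h]
                · rw [if_neg (fun hc => h ((hcond n).mp hc)), if_neg h]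
            _ = f S := by rw [Finset.sum_ite_eq' Finset.univ _ (fun _ => f S)]; simp
        · rw [if_neg hS]
          apply Finset.sum_eq_zero
          intro n _
          rw [if_neg (by tauto)]
    _ = ∑ S ∈ Finset.univ.filter (fun S : Finset (Fin N) => S.Nonempty), f S :=
        (Finset.sum_filter _ _).symm

theorem placement_eq_relaxed (N K : ℕ) (hN : 1 ≤ N) (hK : 1 ≤ K)
    (m : Fin N → ℝ) (hm : ∀ n, 0 ≤ m n ∧ m n ≤ 1) (hge : 1 ≤ ∑ n, m n) :
    sInf {d : ℝ | ∃ α : Finset (Fin N) → ℝ, PFeasible m α ∧ PObj N K α = d}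
      = sInf {d : ℝ | ∃ β : Fin N → ℝ, RFeasible N (∑ n, m n) β ∧ RObj N K β = d} := by
  classical
  have hms0 : (0:ℝ) < ∑ n, m n := lt_of_lt_of_le one_pos hge
  have hPbdd : BddBelow {d : ℝ | ∃ α : Finset (Fin N) → ℝ, PFeasible m α ∧ PObj N K α = d} := by
    refine ⟨0, ?_⟩
    rintro d ⟨α, hfeas, rfl⟩
    apply Finset.sum_nonneg
    intro S hS
    rw [Finset.mem_filter] at hS
    exact mul_nonneg (hfeas.1 S hS.2) (Dt_nonneg K _)
  have hRbdd : BddBelow {d : ℝ | ∃ β : Fin N → ℝ, RFeasible N (∑ n, m n) β ∧ RObj N K β = d} := by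
    refine ⟨0, ?_⟩
    rintro d ⟨β, hfeas, rfl⟩
    exact Finset.sum_nonneg (fun n _ => mul_nonneg (hfeas.1 n) (Dt_nonneg K _))
  have hkey : ∀ β : Fin N → ℝ, RFeasible N (∑ n, m n) β →
      ∃ α : Finset (Fin N) → ℝ, PFeasible m α ∧ PObj N K α ≤ RObj N K β := by
    intro β hβ
    obtain ⟨hβ0, hβ1, hβc⟩ := hβ
    set W := ∑ n : Fin N, ((n:ℕ) + 1 : ℝ) * β n with hWdef
    have hW1 : 1 ≤ W := by
      rw [hWdef, ← hβ1]
      apply Finset.sum_le_sum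
      intro n _
      have h0 : (0:ℝ) ≤ ((n:ℕ):ℝ) := Nat.cast_nonneg _
      nlinarith [hβ0 n]
    set x : Fin N → ℝ := fun n => (W / (∑ n, m n)) * m n with hx
    have hfrac0 : 0 ≤ W / (∑ n, m n) := div_nonneg (by linarith) (le_of_lt hms0)
    have hfrac1 : W / (∑ n, m n) ≤ 1 := (div_le_one hms0).mpr hβc
    have hx0 : ∀ n, 0 ≤ x n := fun n => mul_nonneg hfrac0 (hm n).1
    have hxm : ∀ n, x n ≤ m n := by
      intro n
      calc x n ≤ 1 * m n := mul_le_mul_of_nonneg_right hfrac1 (hm n).1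
        _ = m n := one_mul _
    have hx1 : ∀ n, x n ≤ 1 := fun n => le_trans (hxm n) (hm n).2
    have hxsum : ∑ n, x n = W := by
      rw [hx, ← Finset.mul_sum]
      field_simp
    obtain ⟨α, s, hs1, hα0, hα1, hαload, hPObj⟩ :=
      construct K x hx0 hx1 (by rw [hxsum]; exact hW1)
    rw [hxsum] at hPObj
    refine ⟨α, ⟨hα0, hα1, fun n => (le_of_eq (hαload n)).trans (hxm n)⟩, ?_⟩
    have step1 : ∑ n : Fin N, β n * (Dt K s + (((n:ℕ)+1:ℝ) - s) * (Dt K (s+1) - Dt K s))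
        ≤ ∑ n : Fin N, β n * Dt K ((n:ℕ)+1) := by
      apply Finset.sum_le_sum
      intro n _
      apply mul_le_mul_of_nonneg_left _ (hβ0 n)
      have h := Dt_line K s hs1 ((n:ℕ)+1) (by omega)
      push_cast at h ⊢
      linarith
    have expand : ∑ n : Fin N, β n * (Dt K s + (((n:ℕ)+1:ℝ) - s) * (Dt K (s+1) - Dt K s))
        = (Dt K s - (s:ℝ) * (Dt K (s+1) - Dt K s)) * (∑ n, β n)
          + (Dt K (s+1) - Dt K s) * ∑ n : Fin N, ((n:ℕ)+1:ℝ) * β n := by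
      rw [Finset.mul_sum, Finset.mul_sum, ← Finset.sum_add_distrib]
      apply Finset.sum_congr rfl
      intro n _
      ring
    have hRlb : Dt K s + (W - s) * (Dt K (s+1) - Dt K s) ≤ RObj N K β := by
      rw [RObj]
      refine le_trans (le_of_eq ?_) step1
      rw [expand, hβ1, ← hWdef]
      ring
    have hPP : PObj N K α = PObjX N K α := rfl
    rw [hPP, hPObj]
    exact hRlb
  have hβ₀feas : RFeasible N (∑ n, m n) (fun n => if n = (⟨0, hN⟩ : Fin N) then 1 else 0) := by
    refine ⟨?_, ?_, ?_⟩
    · intro n; dsimp only; split <;> norm_num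
    · rw [Finset.sum_ite_eq' Finset.univ (⟨0, hN⟩ : Fin N) (fun _ => (1:ℝ))]
      simp
    · have : ∀ n : Fin N, ((n:ℕ)+1:ℝ) * (if n = (⟨0, hN⟩ : Fin N) then 1 else 0)
          = (if n = (⟨0, hN⟩ : Fin N) then ((n:ℕ)+1:ℝ) else 0) := by
        intro n; split <;> ring
      rw [Finset.sum_congr rfl (fun n _ => this n),
        Finset.sum_ite_eq' Finset.univ (⟨0, hN⟩ : Fin N) (fun n => ((n:ℕ)+1:ℝ))]
      simpa using hge
  have hRne : Set.Nonempty {d : ℝ | ∃ β : Fin N → ℝ, RFeasible N (∑ n, m n) β ∧ RObj N K β = d} :=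
    ⟨_, _, hβ₀feas, rfl⟩
  have hPne : Set.Nonempty {d : ℝ | ∃ α : Finset (Fin N) → ℝ, PFeasible m α ∧ PObj N K α = d} := by
    obtain ⟨α, hαfeas, -⟩ := hkey _ hβ₀feas
    exact ⟨_, α, hαfeas, rfl⟩
  apply le_antisymm
  · apply le_csInf hRne
    rintro d ⟨β, hβ, rfl⟩
    obtain ⟨α, hαfeas, hle⟩ := hkey β hβ
    exact le_trans (csInf_le hPbdd ⟨α, hαfeas, rfl⟩) hle
  · apply le_csInf hPne
    rintro d ⟨α, hα, rfl⟩
    obtain ⟨hα0, hα1, hαc⟩ := hα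
    set β : Fin N → ℝ := fun n => ∑ S ∈ Finset.univ.filter
        (fun S : Finset (Fin N) => S.Nonempty ∧ S.card = (n:ℕ)+1), α S with hβ
    have hβ0 : ∀ n, 0 ≤ β n := by
      intro n
      rw [hβ]
      apply Finset.sum_nonneg
      intro S hS
      rw [Finset.mem_filter] at hS
      exact hα0 S hS.2.1
    have hβ1 : ∑ n, β n = 1 := by
      rw [hβ]
      rw [fiber_sum]
      exact hα1
    have hβobj : RObj N K β = PObj N K α := by
      rw [RObj, PObj, ← fiber_sum (fun S => α S * Dt K S.card)]
      apply Finset.sum_congr rfl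
      intro n _
      rw [hβ, Finset.sum_mul]
      apply Finset.sum_congr rfl
      intro S hS
      rw [Finset.mem_filter] at hS
      rw [hS.2.2]
    have hcardsum : ∑ S ∈ Finset.univ.filter (fun S : Finset (Fin N) => S.Nonempty),
        α S * (S.card : ℝ) = ∑ n : Fin N, ∑ S ∈ Finset.univ.filter
          (fun S : Finset (Fin N) => n ∈ S), α S := by
      calc ∑ S ∈ Finset.univ.filter (fun S : Finset (Fin N) => S.Nonempty), α S * (S.card:ℝ)
          = ∑ S ∈ Finset.univ.filter (fun S : Finset (Fin N) => S.Nonempty),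
              ∑ n : Fin N, (if n ∈ S then α S else 0) := by
            apply Finset.sum_congr rfl
            intro S _
            have hc : ((S.card:ℝ)) = ∑ n : Fin N, (if n ∈ S then (1:ℝ) else 0) := by
              rw [Finset.sum_boole, Finset.filter_univ_mem]
            rw [hc, Finset.mul_sum]
            apply Finset.sum_congr rfl
            intro n _
            by_cases h : n ∈ S
            · rw [if_pos h, if_pos h, mul_one]
            · rw [if_neg h, if_neg h, mul_zero]
        _ = ∑ n : Fin N, ∑ S ∈ Finset.univ.filter (fun S : Finset (Fin N) => S.Nonempty),
              (if n ∈ S then α S else 0) := Finset.sum_comm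
        _ = ∑ n : Fin N, ∑ S ∈ Finset.univ.filter (fun S : Finset (Fin N) => n ∈ S), α S := by
            apply Finset.sum_congr rfl
            intro n _
            rw [Finset.sum_filter, Finset.sum_filter]
            apply Finset.sum_congr rfl
            intro S _
            by_cases h : n ∈ S
            · simp [h, show S.Nonempty from ⟨n, h⟩]
            · simp [h]
    have hβc : ∑ n : Fin N, ((n:ℕ)+1:ℝ) * β n ≤ ∑ n, m n := by
      have h1 : ∑ n : Fin N, ((n:ℕ)+1:ℝ) * β n
          = ∑ S ∈ Finset.univ.filter (fun S : Finset (Fin N) => S.Nonempty),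
              α S * (S.card : ℝ) := by
        rw [← fiber_sum (fun S => α S * (S.card : ℝ))]
        apply Finset.sum_congr rfl
        intro n _
        rw [hβ, Finset.mul_sum]
        apply Finset.sum_congr rfl
        intro S hS
        rw [Finset.mem_filter] at hS
        rw [hS.2.2]
        push_cast
        ring
      rw [h1, hcardsum]
      exact Finset.sum_le_sum (fun n _ => hαc n)
    exact csInf_le hRbdd ⟨β, ⟨hβ0, hβ1, hβc⟩, hβobj⟩
end

section
/- Let 0 ≤ m_3 ≤ m_2 ≤ m_1 ≤ 1 with m_s = m_1 + m_2 + m_3 satisfying 1 ≤ m_s ≤ 2 and m_1 + m_3 ≥ 1. Then the assignment α_1 = 2 − m_s, α_2 = α_3 = 0, α_{12} = m_1 + m_2 − 1, α_{13} = m_1 + m_3 − 1, α_{23} = 1 − m_1, α_{123} = 0 is feasible for the N = 3, K = 3 placement linear program with storage vector (m_1, m_2, m_3); its objective value equals 17/4 − (5/4)·m_s; and every feasible point has objective value at least 17/4 − (5/4)·m_s. -/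
/-- Feasibility for the `N = 3`, `K = 3` placement linear program with storage
vector `(m₁, m₂, m₃)`. -/
def Feas3 (m1 m2 m3 a1 a2 a3 a12 a13 a23 a123 : ℝ) : Prop :=
  0 ≤ a1 ∧ 0 ≤ a2 ∧ 0 ≤ a3 ∧ 0 ≤ a12 ∧ 0 ≤ a13 ∧ 0 ≤ a23 ∧ 0 ≤ a123 ∧
  a1 + a2 + a3 + a12 + a13 + a23 + a123 = 1 ∧
  a1 + a12 + a13 + a123 ≤ m1 ∧
  a2 + a12 + a23 + a123 ≤ m2 ∧
  a3 + a13 + a23 + a123 ≤ m3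

/-- Objective of the `N = 3`, `K = 3` placement linear program. -/
noncomputable def Obj3 (a1 a2 a3 a12 a13 a23 a123 : ℝ) : ℝ :=
  3 * (a1 + a2 + a3) + 7 / 4 * (a12 + a13 + a23) + 13 / 9 * a123

theorem regime2_case1 (m1 m2 m3 : ℝ)
    (h3 : 0 ≤ m3) (h32 : m3 ≤ m2) (h21 : m2 ≤ m1) (h1 : m1 ≤ 1)
    (hlo : 1 ≤ m1 + m2 + m3) (hhi : m1 + m2 + m3 ≤ 2)
    (h13 : 1 ≤ m1 + m3) :
    Feas3 m1 m2 m3 (2 - (m1 + m2 + m3)) 0 0 (m1 + m2 - 1) (m1 + m3 - 1) (1 - m1) 0 ∧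
    Obj3 (2 - (m1 + m2 + m3)) 0 0 (m1 + m2 - 1) (m1 + m3 - 1) (1 - m1) 0
      = 17 / 4 - 5 / 4 * (m1 + m2 + m3) ∧
    ∀ a1 a2 a3 a12 a13 a23 a123 : ℝ, Feas3 m1 m2 m3 a1 a2 a3 a12 a13 a23 a123 →
      17 / 4 - 5 / 4 * (m1 + m2 + m3) ≤ Obj3 a1 a2 a3 a12 a13 a23 a123 := by
  refine ⟨⟨by linarith, le_refl 0, le_refl 0, by linarith, by linarith, by linarith,
    le_refl 0, by ring, by linarith, by linarith, by linarith⟩, by unfold Obj3; ring, ?_⟩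
  intro a1 a2 a3 a12 a13 a23 a123 ⟨h1', h2', h3', h12, h13', h23, h123, hs, c1, c2, c3⟩
  unfold Obj3
  linarith
end

section
/- Let 0 ≤ m_3 ≤ m_2 ≤ m_1 ≤ 1 with m_s = m_1 + m_2 + m_3 satisfying 1 ≤ m_s ≤ 2 and m_1 + m_3 ≤ 1. Then the assignment α_1 = 1 − (m_2 + m_3), α_2 = 1 − (m_1 + m_3), α_3 = m_3, α_{12} = m_s − 1, α_{13} = α_{23} = α_{123} = 0 is feasible for the N = 3, K = 3 placement linear program with storage vector (m_1, m_2, m_3); its objective value equals 17/4 − (5/4)·m_s; and every feasible point has objective value at least 17/4 − (5/4)·m_s. -/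
theorem regime2_case2 (m1 m2 m3 : ℝ)
    (h3 : 0 ≤ m3) (h32 : m3 ≤ m2) (h21 : m2 ≤ m1) (h1 : m1 ≤ 1)
    (hlo : 1 ≤ m1 + m2 + m3) (hhi : m1 + m2 + m3 ≤ 2)
    (h13 : m1 + m3 ≤ 1) :
    Feas3 m1 m2 m3 (1 - (m2 + m3)) (1 - (m1 + m3)) m3 (m1 + m2 + m3 - 1) 0 0 0 ∧
    Obj3 (1 - (m2 + m3)) (1 - (m1 + m3)) m3 (m1 + m2 + m3 - 1) 0 0 0
      = 17 / 4 - 5 / 4 * (m1 + m2 + m3) ∧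
    ∀ a1 a2 a3 a12 a13 a23 a123 : ℝ, Feas3 m1 m2 m3 a1 a2 a3 a12 a13 a23 a123 →
      17 / 4 - 5 / 4 * (m1 + m2 + m3) ≤ Obj3 a1 a2 a3 a12 a13 a23 a123 := by
  refine ⟨⟨by linarith, by linarith, h3, by linarith, le_refl 0, le_refl 0, le_refl 0,
    by ring, by linarith, by linarith, by linarith⟩, by simp [Obj3]; ring, ?_⟩
  rintro a1 a2 a3 a12 a13 a23 a123
    ⟨p1, p2, p3, p12, p13, p23, p123, hsum, c1, c2, c3⟩
  simp only [Obj3]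
  linarith
end

section
/- Let 0 ≤ m_n ≤ 1 for n = 1, 2, 3 with m_s = m_1 + m_2 + m_3 satisfying 2 ≤ m_s ≤ 3. Then the assignment α_1 = α_2 = α_3 = 0, α_{12} = 1 − m_3, α_{13} = 1 − m_2, α_{23} = 1 − m_1, α_{123} = m_s − 2 is feasible for the N = 3, K = 3 placement linear program with storage vector (m_1, m_2, m_3); its objective value equals 85/36 − (11/36)·m_s; and every feasible point has objective value at least 85/36 − (11/36)·m_s. -/
theorem regime3 (m1 m2 m3 : ℝ)
    (h1lo : 0 ≤ m1) (h1hi : m1 ≤ 1) (h2lo : 0 ≤ m2) (h2hi : m2 ≤ 1)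
    (h3lo : 0 ≤ m3) (h3hi : m3 ≤ 1)
    (hlo : 2 ≤ m1 + m2 + m3) (hhi : m1 + m2 + m3 ≤ 3) :
    Feas3 m1 m2 m3 0 0 0 (1 - m3) (1 - m2) (1 - m1) (m1 + m2 + m3 - 2) ∧
    Obj3 0 0 0 (1 - m3) (1 - m2) (1 - m1) (m1 + m2 + m3 - 2)
      = 85 / 36 - 11 / 36 * (m1 + m2 + m3) ∧
    ∀ a1 a2 a3 a12 a13 a23 a123 : ℝ, Feas3 m1 m2 m3 a1 a2 a3 a12 a13 a23 a123 →
      85 / 36 - 11 / 36 * (m1 + m2 + m3) ≤ Obj3 a1 a2 a3 a12 a13 a23 a123 := by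
  refine ⟨⟨le_refl 0, le_refl 0, le_refl 0, by linarith, by linarith, by linarith,
    by linarith, by ring, by linarith, by linarith, by linarith⟩, by unfold Obj3; ring, ?_⟩
  rintro a1 a2 a3 a12 a13 a23 a123 ⟨h1, h2, h3, h12, h13, h23, h123, hsum, c1, c2, c3⟩
  unfold Obj3
  nlinarith [add_le_add (add_le_add c1 c2) c3]
end
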